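/- arXiv:2208.06477 — 9 statements merged into one kernel-verified Lean document; each statement's English description precedes it below -/
import Mathlib

section
/- Consider a solution of the internal wave problem such that the velocity fields 𝐮₁ and 𝐮₂ are bounded on their layers and the vorticities ω₁ = ∇×𝐮₁ and ω₂ = ∇×𝐮₂ are constant nonzero vectors, say ωᵢ = (αᵢ, βᵢ, γᵢ). Then the third (vertical) components of both vorticity vectors vanish: γ₁ = 0 and γ₂ = 0. -/
noncomputable section

open Set

/-- Partial derivative in the `x`-direction of a function on `ℝ × ℝ × ℝ`. -/
def pdx (f : ℝ × ℝ × ℝ → ℝ) (p : ℝ × ℝ × ℝ) : ℝ := fderiv ℝ f p (1, 0, 0)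

/-- Partial derivative in the `y`-direction of a function on `ℝ × ℝ × ℝ`. -/
def pdy (f : ℝ × ℝ × ℝ → ℝ) (p : ℝ × ℝ × ℝ) : ℝ := fderiv ℝ f p (0, 1, 0)

/-- Partial derivative in the `z`-direction of a function on `ℝ × ℝ × ℝ`. -/
def pdz (f : ℝ × ℝ × ℝ → ℝ) (p : ℝ × ℝ × ℝ) : ℝ := fderiv ℝ f p (0, 0, 1)

/-- The curl `∇ × (u,v,w)` of a vector field on `ℝ³`. -/
def curl3 (u v w : ℝ × ℝ × ℝ → ℝ) (p : ℝ × ℝ × ℝ) : ℝ × ℝ × ℝ :=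
  (pdy w p - pdz v p, pdz u p - pdx w p, pdx v p - pdy u p)

/-- The lower fluid layer `Ω₁ = {(x,y,z) : -h₁ < z < η(x,y)}`. -/
def layer1 (h₁ : ℝ) (η : ℝ × ℝ → ℝ) : Set (ℝ × ℝ × ℝ) :=
  {p | -h₁ < p.2.2 ∧ p.2.2 < η (p.1, p.2.1)}

/-- The upper fluid layer `Ω₂ = {(x,y,z) : η(x,y) < z < h₂}`. -/
def layer2 (h₂ : ℝ) (η : ℝ × ℝ → ℝ) : Set (ℝ × ℝ × ℝ) :=
  {p | η (p.1, p.2.1) < p.2.2 ∧ p.2.2 < h₂}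

/-- A (classical) solution of the steady internal gravity wave problem for two
superposed constant-density fluids in a channel `-h₁ < z < h₂`, with interface
`z = η(x,y)`, velocities `𝐮ᵢ = (uᵢ, vᵢ, wᵢ)` and pressures `Pᵢ`. -/
structure InternalWaveSolution (h₁ h₂ g ρ₁ ρ₂ : ℝ) (η : ℝ × ℝ → ℝ)
    (u₁ v₁ w₁ P₁ u₂ v₂ w₂ P₂ : ℝ × ℝ × ℝ → ℝ) : Prop where
  h₁_pos : 0 < h₁
  h₂_pos : 0 < h₂
  g_pos : 0 < g
  ρ₁_pos : 0 < ρ₁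
  ρ₂_pos : 0 < ρ₂
  η_C1 : ContDiff ℝ 1 η
  η_inf : ∃ a : ℝ, -h₁ < a ∧ ∀ q : ℝ × ℝ, a ≤ η q
  η_sup : ∃ b : ℝ, b < h₂ ∧ ∀ q : ℝ × ℝ, η q ≤ b
  u₁_cont : ContinuousOn u₁ (closure (layer1 h₁ η))
  v₁_cont : ContinuousOn v₁ (closure (layer1 h₁ η))
  w₁_cont : ContinuousOn w₁ (closure (layer1 h₁ η))
  P₁_cont : ContinuousOn P₁ (closure (layer1 h₁ η))
  u₁_C2 : ContDiffOn ℝ 2 u₁ (layer1 h₁ η)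
  v₁_C2 : ContDiffOn ℝ 2 v₁ (layer1 h₁ η)
  w₁_C2 : ContDiffOn ℝ 2 w₁ (layer1 h₁ η)
  P₁_C2 : ContDiffOn ℝ 2 P₁ (layer1 h₁ η)
  u₂_cont : ContinuousOn u₂ (closure (layer2 h₂ η))
  v₂_cont : ContinuousOn v₂ (closure (layer2 h₂ η))
  w₂_cont : ContinuousOn w₂ (closure (layer2 h₂ η))
  P₂_cont : ContinuousOn P₂ (closure (layer2 h₂ η))
  u₂_C2 : ContDiffOn ℝ 2 u₂ (layer2 h₂ η)
  v₂_C2 : ContDiffOn ℝ 2 v₂ (layer2 h₂ η)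
  w₂_C2 : ContDiffOn ℝ 2 w₂ (layer2 h₂ η)
  P₂_C2 : ContDiffOn ℝ 2 P₂ (layer2 h₂ η)
  momentum₁_x : ∀ p ∈ layer1 h₁ η,
    ρ₁ * (u₁ p * pdx u₁ p + v₁ p * pdy u₁ p + w₁ p * pdz u₁ p) = -(pdx P₁ p)
  momentum₁_y : ∀ p ∈ layer1 h₁ η,
    ρ₁ * (u₁ p * pdx v₁ p + v₁ p * pdy v₁ p + w₁ p * pdz v₁ p) = -(pdy P₁ p)
  momentum₁_z : ∀ p ∈ layer1 h₁ η,
    ρ₁ * (u₁ p * pdx w₁ p + v₁ p * pdy w₁ p + w₁ p * pdz w₁ p) = -(pdz P₁ p) - ρ₁ * g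
  momentum₂_x : ∀ p ∈ layer2 h₂ η,
    ρ₂ * (u₂ p * pdx u₂ p + v₂ p * pdy u₂ p + w₂ p * pdz u₂ p) = -(pdx P₂ p)
  momentum₂_y : ∀ p ∈ layer2 h₂ η,
    ρ₂ * (u₂ p * pdx v₂ p + v₂ p * pdy v₂ p + w₂ p * pdz v₂ p) = -(pdy P₂ p)
  momentum₂_z : ∀ p ∈ layer2 h₂ η,
    ρ₂ * (u₂ p * pdx w₂ p + v₂ p * pdy w₂ p + w₂ p * pdz w₂ p) = -(pdz P₂ p) - ρ₂ * g
  incompressible₁ : ∀ p ∈ layer1 h₁ η, pdx u₁ p + pdy v₁ p + pdz w₁ p = 0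
  incompressible₂ : ∀ p ∈ layer2 h₂ η, pdx u₂ p + pdy v₂ p + pdz w₂ p = 0
  kinematic₁ : ∀ x y : ℝ,
    u₁ (x, y, η (x, y)) * fderiv ℝ η (x, y) (1, 0)
      + v₁ (x, y, η (x, y)) * fderiv ℝ η (x, y) (0, 1) = w₁ (x, y, η (x, y))
  kinematic₂ : ∀ x y : ℝ,
    u₂ (x, y, η (x, y)) * fderiv ℝ η (x, y) (1, 0)
      + v₂ (x, y, η (x, y)) * fderiv ℝ η (x, y) (0, 1) = w₂ (x, y, η (x, y))
  dynamic : ∀ x y : ℝ, P₁ (x, y, η (x, y)) = P₂ (x, y, η (x, y))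
  bed : ∀ x y : ℝ, w₁ (x, y, -h₁) = 0
  lid : ∀ x y : ℝ, w₂ (x, y, h₂) = 0

/-- The velocity field `(u,v,w)` is (uniformly) bounded on the set `s`. -/
def BoundedVel (s : Set (ℝ × ℝ × ℝ)) (u v w : ℝ × ℝ × ℝ → ℝ) : Prop :=
  ∃ C : ℝ, ∀ p ∈ s, |u p| ≤ C ∧ |v p| ≤ C ∧ |w p| ≤ C

open MeasureTheory intervalIntegral in

/-- A bounded `C¹` planar vector field with constant scalar curl has zero curl. -/
lemma green_box (f g : ℝ × ℝ → ℝ) (hf : ContDiff ℝ 1 f) (hg : ContDiff ℝ 1 g)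
    (C : ℝ) (hfb : ∀ p, |f p| ≤ C) (hgb : ∀ p, |g p| ≤ C) (γ : ℝ)
    (hγ : ∀ p : ℝ × ℝ, fderiv ℝ g p (1, 0) - fderiv ℝ f p (0, 1) = γ) : γ = 0 := by
  have hC : 0 ≤ C := le_trans (abs_nonneg _) (hfb 0)
  have hGx : Continuous fun p : ℝ × ℝ => fderiv ℝ g p (1, 0) :=
    (hg.continuous_fderiv one_ne_zero).clm_apply continuous_const
  have hFy : Continuous fun p : ℝ × ℝ => fderiv ℝ f p (0, 1) :=
    (hf.continuous_fderiv one_ne_zero).clm_apply continuous_const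
  have hderx : ∀ y x : ℝ, HasDerivAt (fun x => g (x, y)) (fderiv ℝ g (x, y) (1, 0)) x := by
    intro y x
    have hl : HasDerivAt (fun x : ℝ => ((x, y) : ℝ × ℝ)) ((1 : ℝ), (0 : ℝ)) x :=
      HasDerivAt.prodMk (hasDerivAt_id x) (hasDerivAt_const x y)
    exact ((hg.differentiable one_ne_zero (x, y)).hasFDerivAt).comp_hasDerivAt x hl
  have hdery : ∀ x y : ℝ, HasDerivAt (fun y => f (x, y)) (fderiv ℝ f (x, y) (0, 1)) y := by
    intro x y
    have hl : HasDerivAt (fun y : ℝ => ((x, y) : ℝ × ℝ)) ((0 : ℝ), (1 : ℝ)) y :=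
      HasDerivAt.prodMk (hasDerivAt_const y x) (hasDerivAt_id y)
    exact ((hf.differentiable one_ne_zero (x, y)).hasFDerivAt).comp_hasDerivAt y hl
  have key : ∀ R : ℝ, 0 < R → |γ| * (R * R) ≤ 4 * C * R := by
    intro R hR
    set A : Set ℝ := Ioc 0 R with hA
    have hvolA : (volume A) = ENNReal.ofReal R := by
      rw [hA, Real.volume_Ioc, sub_zero]
    have hvolAR : (volume A).toReal = R := by rw [hvolA, ENNReal.toReal_ofReal hR.le]
    have hGxy : ∀ y : ℝ, Continuous fun x : ℝ => fderiv ℝ g (x, y) (1, 0) :=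
      fun y => hGx.comp (continuous_id.prodMk continuous_const)
    have hFxy : ∀ y : ℝ, Continuous fun x : ℝ => fderiv ℝ f (x, y) (0, 1) :=
      fun y => hFy.comp (continuous_id.prodMk continuous_const)
    have hFyx : ∀ x : ℝ, Continuous fun y : ℝ => fderiv ℝ f (x, y) (0, 1) :=
      fun x => hFy.comp (continuous_const.prodMk continuous_id)
    have ftcx : ∀ y : ℝ, ∫ x in A, fderiv ℝ g (x, y) (1, 0) = g (R, y) - g (0, y) := by
      intro y
      have h1 : ∫ x in (0:ℝ)..R, fderiv ℝ g (x, y) (1, 0) = g (R, y) - g (0, y) := by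
        apply intervalIntegral.integral_eq_sub_of_hasDerivAt (fun x _ => hderx y x)
        exact (hGxy y).intervalIntegrable 0 R
      rw [← h1, intervalIntegral.integral_of_le hR.le]
    have ftcy : ∀ x : ℝ, ∫ y in A, fderiv ℝ f (x, y) (0, 1) = f (x, R) - f (x, 0) := by
      intro x
      have h1 : ∫ y in (0:ℝ)..R, fderiv ℝ f (x, y) (0, 1) = f (x, R) - f (x, 0) := by
        apply intervalIntegral.integral_eq_sub_of_hasDerivAt (fun y _ => hdery x y)
        exact (hFyx x).intervalIntegrable 0 R
      rw [← h1, intervalIntegral.integral_of_le hR.le]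
    have hintFy : Integrable (Function.uncurry fun x y : ℝ => fderiv ℝ f (x, y) (0, 1))
        ((volume.restrict A).prod (volume.restrict A)) := by
      rw [Measure.prod_restrict, ← Measure.volume_eq_prod]
      have h1 : IntegrableOn (fun p : ℝ × ℝ => fderiv ℝ f p (0, 1))
          (Icc (0:ℝ) R ×ˢ Icc (0:ℝ) R) :=
        hFy.continuousOn.integrableOn_compact (isCompact_Icc.prod isCompact_Icc)
      exact h1.mono_set (Set.prod_mono Ioc_subset_Icc_self Ioc_subset_Icc_self)
    have main : γ * (R * R) =
        (∫ y in A, (g (R, y) - g (0, y))) - ∫ x in A, (f (x, R) - f (x, 0)) := by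
      have swap : (∫ y in A, ∫ x in A, fderiv ℝ f (x, y) (0, 1)) =
          ∫ x in A, ∫ y in A, fderiv ℝ f (x, y) (0, 1) :=
        (integral_integral_swap hintFy).symm
      have inner : ∀ y : ℝ, (∫ x in A, (γ : ℝ)) =
          (∫ x in A, fderiv ℝ g (x, y) (1, 0)) - ∫ x in A, fderiv ℝ f (x, y) (0, 1) := by
        intro y
        rw [← MeasureTheory.integral_sub ((hGxy y).integrableOn_Ioc) ((hFxy y).integrableOn_Ioc)]
        refine integral_congr_ae (Filter.Eventually.of_forall fun x => ?_)
        exact (hγ (x, y)).symm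
      have hconst : (∫ x in A, (γ : ℝ)) = R * γ := by
        rw [setIntegral_const, measureReal_def, hvolAR, smul_eq_mul]
      calc γ * (R * R) = ∫ y in A, (R * γ) := by
            rw [setIntegral_const, measureReal_def, hvolAR, smul_eq_mul]; ring
        _ = ∫ y in A, ((∫ x in A, fderiv ℝ g (x, y) (1, 0))
              - ∫ x in A, fderiv ℝ f (x, y) (0, 1)) := by
            refine integral_congr_ae (Filter.Eventually.of_forall fun y => ?_)
            show R * γ = _
            rw [← hconst]
            exact inner y
        _ = (∫ y in A, ∫ x in A, fderiv ℝ g (x, y) (1, 0))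
              - ∫ y in A, ∫ x in A, fderiv ℝ f (x, y) (0, 1) := by
            apply MeasureTheory.integral_sub
            · refine (integrable_congr (Filter.Eventually.of_forall fun y => (ftcx y))).mpr ?_
              apply Integrable.sub
              · exact ((hg.continuous.comp
                  (continuous_const.prodMk continuous_id)).integrableOn_Ioc)
              · exact ((hg.continuous.comp
                  (continuous_const.prodMk continuous_id)).integrableOn_Ioc)
            · exact hintFy.swap.integral_prod_left
        _ = (∫ y in A, (g (R, y) - g (0, y))) - ∫ x in A, (f (x, R) - f (x, 0)) := by
            rw [swap]
            congr 1
            · exact integral_congr_ae (Filter.Eventually.of_forall fun y => ftcx y)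
            · exact integral_congr_ae (Filter.Eventually.of_forall fun x => ftcy x)
    have hmg : Continuous fun y : ℝ => g (R, y) - g (0, y) :=
      (hg.continuous.comp (continuous_const.prodMk continuous_id)).sub
        (hg.continuous.comp (continuous_const.prodMk continuous_id))
    have hmf : Continuous fun x : ℝ => f (x, R) - f (x, 0) :=
      (hf.continuous.comp (continuous_id.prodMk continuous_const)).sub
        (hf.continuous.comp (continuous_id.prodMk continuous_const))
    have bnd1 : ‖∫ y in A, (g (R, y) - g (0, y))‖ ≤ 2 * C * R := by
      have := norm_setIntegral_le_of_norm_le_const (μ := volume) (s := A)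
        (by rw [hvolA]; exact ENNReal.ofReal_lt_top)
        (f := fun y => g (R, y) - g (0, y)) (C := 2 * C) (fun y _ => by
          simp only [Real.norm_eq_abs]
          calc |g (R, y) - g (0, y)| ≤ |g (R, y)| + |g (0, y)| := abs_sub _ _
            _ ≤ C + C := add_le_add (hgb _) (hgb _)
            _ = 2 * C := by ring)
      rwa [measureReal_def, hvolAR] at this
    have bnd2 : ‖∫ x in A, (f (x, R) - f (x, 0))‖ ≤ 2 * C * R := by
      have := norm_setIntegral_le_of_norm_le_const (μ := volume) (s := A)
        (by rw [hvolA]; exact ENNReal.ofReal_lt_top)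
        (f := fun x => f (x, R) - f (x, 0)) (C := 2 * C) (fun x _ => by
          simp only [Real.norm_eq_abs]
          calc |f (x, R) - f (x, 0)| ≤ |f (x, R)| + |f (x, 0)| := abs_sub _ _
            _ ≤ C + C := add_le_add (hfb _) (hfb _)
            _ = 2 * C := by ring)
      rwa [measureReal_def, hvolAR] at this
    calc |γ| * (R * R) = |γ * (R * R)| := by
          rw [abs_mul, abs_of_pos (by positivity : (0:ℝ) < R * R)]
      _ = ‖(∫ y in A, (g (R, y) - g (0, y))) - ∫ x in A, (f (x, R) - f (x, 0))‖ := by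
          rw [main]; simp [Real.norm_eq_abs]
      _ ≤ ‖∫ y in A, (g (R, y) - g (0, y))‖ + ‖∫ x in A, (f (x, R) - f (x, 0))‖ :=
          norm_sub_le _ _
      _ ≤ 2 * C * R + 2 * C * R := add_le_add bnd1 bnd2
      _ = 4 * C * R := by ring
  by_contra hγ0
  have hγpos : 0 < |γ| := abs_pos.mpr hγ0
  set R : ℝ := (4 * C + 1) / |γ| with hRdef
  have hRpos : 0 < R := by positivity
  have hkey := key R hRpos
  have h2 : |γ| * R ≤ 4 * C := by
    have := mul_le_mul_of_nonneg_right hkey (le_of_lt (inv_pos.mpr hRpos))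
    calc |γ| * R = |γ| * (R * R) * R⁻¹ := by field_simp
      _ ≤ 4 * C * R * R⁻¹ := this
      _ = 4 * C := by field_simp
  have h3 : |γ| * R = 4 * C + 1 := by rw [hRdef]; field_simp
  linarith

/-- On an open set containing a full horizontal plane, a bounded velocity field with
constant vertical vorticity has zero vertical vorticity. -/
lemma slab_vorticity (U : Set (ℝ × ℝ × ℝ)) (hU : IsOpen U) (c : ℝ)
    (hc : ∀ x y : ℝ, ((x, y, c) : ℝ × ℝ × ℝ) ∈ U) (u v : ℝ × ℝ × ℝ → ℝ)
    (hu : ContDiffOn ℝ 1 u U) (hv : ContDiffOn ℝ 1 v U)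
    (C : ℝ) (hub : ∀ p ∈ U, |u p| ≤ C) (hvb : ∀ p ∈ U, |v p| ≤ C)
    (γ : ℝ) (hγ : ∀ p ∈ U, pdx v p - pdy u p = γ) : γ = 0 := by
  set ι : ℝ × ℝ → ℝ × ℝ × ℝ := fun q => (q.1, q.2, c) with hι
  have hmem : ∀ q : ℝ × ℝ, ι q ∈ U := fun q => hc q.1 q.2
  set L : (ℝ × ℝ) →L[ℝ] ℝ × ℝ × ℝ :=
    (ContinuousLinearMap.fst ℝ ℝ ℝ).prod
      ((ContinuousLinearMap.snd ℝ ℝ ℝ).prod 0) with hL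
  have hιfd : ∀ q : ℝ × ℝ, HasFDerivAt ι L q := fun q =>
    HasFDerivAt.prodMk hasFDerivAt_fst (HasFDerivAt.prodMk hasFDerivAt_snd (hasFDerivAt_const c q))
  have hιc : ContDiff ℝ 1 ι := contDiff_fst.prodMk (contDiff_snd.prodMk contDiff_const)
  -- C¹ smoothness of the restrictions
  have hcd : ∀ w : ℝ × ℝ × ℝ → ℝ, ContDiffOn ℝ 1 w U → ContDiff ℝ 1 (w ∘ ι) := by
    intro w hw
    rw [contDiff_iff_contDiffAt]
    intro q
    exact (hw.contDiffAt (hU.mem_nhds (hmem q))).comp q hιc.contDiffAt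
  have hfu : ContDiff ℝ 1 (u ∘ ι) := hcd u hu
  have hfv : ContDiff ℝ 1 (v ∘ ι) := hcd v hv
  -- chain rule
  have hfd : ∀ (w : ℝ × ℝ × ℝ → ℝ), ContDiffOn ℝ 1 w U → ∀ q : ℝ × ℝ,
      fderiv ℝ (w ∘ ι) q = (fderiv ℝ w (ι q)).comp L := by
    intro w hw q
    have hdw : HasFDerivAt w (fderiv ℝ w (ι q)) (ι q) :=
      (((hw.contDiffAt (hU.mem_nhds (hmem q))).differentiableAt one_ne_zero)).hasFDerivAt
    exact (hdw.comp q (hιfd q)).fderiv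
  have hL10 : L ((1 : ℝ), (0 : ℝ)) = ((1 : ℝ), (0 : ℝ), (0 : ℝ)) := by
    simp [hL]
  have hL01 : L ((0 : ℝ), (1 : ℝ)) = ((0 : ℝ), (1 : ℝ), (0 : ℝ)) := by
    simp [hL]
  have key : ∀ q : ℝ × ℝ,
      fderiv ℝ (v ∘ ι) q (1, 0) - fderiv ℝ (u ∘ ι) q (0, 1) = γ := by
    intro q
    rw [hfd v hv q, hfd u hu q]
    rw [ContinuousLinearMap.comp_apply, ContinuousLinearMap.comp_apply, hL10, hL01]
    exact hγ (ι q) (hmem q)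
  exact green_box (u ∘ ι) (v ∘ ι) hfu hfv C (fun q => hub (ι q) (hmem q))
    (fun q => hvb (ι q) (hmem q)) γ key

/-- **Theorem 1 (dimension reduction for the vorticity).** For a bounded-velocity
solution of the internal wave problem whose vorticities `ωᵢ = ∇ × 𝐮ᵢ = (αᵢ, βᵢ, γᵢ)`
are constant and nonzero, the vertical components `γ₁`, `γ₂` both vanish. -/
theorem vertical_vorticity_vanishes
    (h₁ h₂ g ρ₁ ρ₂ : ℝ) (η : ℝ × ℝ → ℝ)
    (u₁ v₁ w₁ P₁ u₂ v₂ w₂ P₂ : ℝ × ℝ × ℝ → ℝ)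
    (sol : InternalWaveSolution h₁ h₂ g ρ₁ ρ₂ η u₁ v₁ w₁ P₁ u₂ v₂ w₂ P₂)
    (hb₁ : BoundedVel (layer1 h₁ η) u₁ v₁ w₁)
    (hb₂ : BoundedVel (layer2 h₂ η) u₂ v₂ w₂)
    (α₁ β₁ γ₁ α₂ β₂ γ₂ : ℝ)
    (hω₁ : ∀ p ∈ layer1 h₁ η, curl3 u₁ v₁ w₁ p = (α₁, β₁, γ₁))
    (hω₂ : ∀ p ∈ layer2 h₂ η, curl3 u₂ v₂ w₂ p = (α₂, β₂, γ₂))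
    (hω₁ne : (α₁, β₁, γ₁) ≠ ((0 : ℝ), (0 : ℝ), (0 : ℝ)))
    (hω₂ne : (α₂, β₂, γ₂) ≠ ((0 : ℝ), (0 : ℝ), (0 : ℝ))) :
    γ₁ = 0 ∧ γ₂ = 0 := by
  obtain ⟨C₁, hC₁⟩ := hb₁
  obtain ⟨C₂, hC₂⟩ := hb₂
  have hηc : Continuous η := sol.η_C1.continuous
  have hz : Continuous fun p : ℝ × ℝ × ℝ => p.2.2 := continuous_snd.comp continuous_snd
  have hηp : Continuous fun p : ℝ × ℝ × ℝ => η (p.1, p.2.1) :=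
    hηc.comp (continuous_fst.prodMk ((continuous_fst.comp continuous_snd)))
  constructor
  · -- lower layer
    obtain ⟨a, ha1, ha2⟩ := sol.η_inf
    have hopen : IsOpen (layer1 h₁ η) := by
      have heq : layer1 h₁ η
          = {p : ℝ × ℝ × ℝ | -h₁ < p.2.2} ∩ {p : ℝ × ℝ × ℝ | p.2.2 < η (p.1, p.2.1)} := rfl
      rw [heq]
      exact (isOpen_lt continuous_const hz).inter (isOpen_lt hz hηp)
    set c : ℝ := (-h₁ + a) / 2 with hcdef
    have hc : ∀ x y : ℝ, ((x, y, c) : ℝ × ℝ × ℝ) ∈ layer1 h₁ η := by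
      intro x y
      constructor
      · show -h₁ < c
        rw [hcdef]; linarith
      · show c < η (x, y)
        have : c < a := by rw [hcdef]; linarith
        exact lt_of_lt_of_le this (ha2 (x, y))
    have hvort : ∀ p ∈ layer1 h₁ η, pdx v₁ p - pdy u₁ p = γ₁ := by
      intro p hp
      have h3 := congrArg (fun t : ℝ × ℝ × ℝ => t.2.2) (hω₁ p hp)
      simpa [curl3] using h3
    exact slab_vorticity (layer1 h₁ η) hopen c hc u₁ v₁
      (sol.u₁_C2.of_le (by norm_num)) (sol.v₁_C2.of_le (by norm_num))
      C₁ (fun p hp => (hC₁ p hp).1) (fun p hp => (hC₁ p hp).2.1) γ₁ hvort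
  · -- upper layer
    obtain ⟨b, hb1, hb2⟩ := sol.η_sup
    have hopen : IsOpen (layer2 h₂ η) := by
      have heq : layer2 h₂ η
          = {p : ℝ × ℝ × ℝ | η (p.1, p.2.1) < p.2.2} ∩ {p : ℝ × ℝ × ℝ | p.2.2 < h₂} := rfl
      rw [heq]
      exact (isOpen_lt hηp hz).inter (isOpen_lt hz continuous_const)
    set c : ℝ := (b + h₂) / 2 with hcdef
    have hc : ∀ x y : ℝ, ((x, y, c) : ℝ × ℝ × ℝ) ∈ layer2 h₂ η := by
      intro x y
      constructor
      · show η (x, y) < c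
        have : b < c := by rw [hcdef]; linarith
        exact lt_of_le_of_lt (hb2 (x, y)) this
      · show c < h₂
        rw [hcdef]; linarith
    have hvort : ∀ p ∈ layer2 h₂ η, pdx v₂ p - pdy u₂ p = γ₂ := by
      intro p hp
      have h3 := congrArg (fun t : ℝ × ℝ × ℝ => t.2.2) (hω₂ p hp)
      simpa [curl3] using h3
    exact slab_vorticity (layer2 h₂ η) hopen c hc u₂ v₂
      (sol.u₂_C2.of_le (by norm_num)) (sol.v₂_C2.of_le (by norm_num))
      C₂ (fun p hp => (hC₂ p hp).1) (fun p hp => (hC₂ p hp).2.1) γ₂ hvort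
end
end

section
/- Consider a solution of the internal wave problem such that the velocity fields 𝐮₁ and 𝐮₂ are bounded on their layers and the vorticity of the upper layer is the constant nonzero horizontal vector ω₂ = ∇×𝐮₂ = (0, β₂, 0) with β₂ ≠ 0. Then in Ω₂: the velocity 𝐮₂ and the pressure P₂ are independent of y (that is, 𝐮₂(x,y₁,z) = 𝐮₂(x,y₂,z) and P₂(x,y₁,z) = P₂(x,y₂,z) whenever both points lie in Ω₂), and the second velocity component v₂ is constant throughout Ω₂. -/
noncomputable section

open Set

namespace IWaux

lemma clm_expand (L : ℝ × ℝ × ℝ →L[ℝ] ℝ) (a b c : ℝ) :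
    L (a, b, c) = a * L (1,0,0) + b * L (0,1,0) + c * L (0,0,1) := by
  have h : ((a, b, c) : ℝ × ℝ × ℝ)
      = a • ((1,0,0) : ℝ × ℝ × ℝ) + b • ((0,1,0) : ℝ × ℝ × ℝ) + c • ((0,0,1) : ℝ × ℝ × ℝ) := by
    simp [Prod.ext_iff]
  rw [h, map_add, map_add, map_smul, map_smul, map_smul]
  simp [smul_eq_mul]

lemma const_of_hasDerivAt_zero {g : ℝ → ℝ} {A B : ℝ} (hAB : A ≤ B)
    (h : ∀ t ∈ Icc A B, HasDerivAt g 0 t) : g A = g B := by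
  rcases eq_or_lt_of_le hAB with rfl | hlt
  · rfl
  · have hdiff : DifferentiableOn ℝ g (Icc A B) := fun t ht =>
      ((h t ht).differentiableAt).differentiableWithinAt
    have hderiv : ∀ t ∈ Ico A B, derivWithin g (Icc A B) t = 0 := by
      intro t ht
      exact ((h t ⟨ht.1, ht.2.le⟩).hasDerivWithinAt).derivWithin
        (uniqueDiffOn_Icc hlt t ⟨ht.1, ht.2.le⟩)
    exact (constant_of_derivWithin_zero hdiff hderiv B ⟨hAB, le_rfl⟩).symm

lemma hasDerivAt_line (a d : ℝ × ℝ × ℝ) (t : ℝ) :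
    HasDerivAt (fun t : ℝ => a + t • d) d t := by
  simpa using ((hasDerivAt_id t).smul_const d).const_add a

lemma const_on_segment {f : ℝ × ℝ × ℝ → ℝ} {a d : ℝ × ℝ × ℝ}
    (h : ∀ τ ∈ Icc (0:ℝ) 1, DifferentiableAt ℝ f (a + τ • d) ∧
      fderiv ℝ f (a + τ • d) d = 0) :
    f (a + d) = f a := by
  have key : (fun τ : ℝ => f (a + τ • d)) 0 = (fun τ : ℝ => f (a + τ • d)) 1 := by
    apply const_of_hasDerivAt_zero (g := fun τ : ℝ => f (a + τ • d)) zero_le_one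
    intro τ hτ
    have h1 := (h τ hτ).1.hasFDerivAt.comp_hasDerivAt τ (hasDerivAt_line a d τ)
    rw [(h τ hτ).2] at h1
    exact h1
  simpa using key.symm

lemma fderiv_eq_of_eqOn {E F : Type*} [NormedAddCommGroup E] [NormedSpace ℝ E]
    [NormedAddCommGroup F] [NormedSpace ℝ F] {s : Set E} (hs : IsOpen s) {p : E}
    (hp : p ∈ s) {f g : E → F} (h : ∀ q ∈ s, f q = g q) :
    fderiv ℝ f p = fderiv ℝ g p := by
  apply Filter.EventuallyEq.fderiv_eq
  filter_upwards [hs.mem_nhds hp] using h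

section smooth
variable {s : Set (ℝ × ℝ × ℝ)} {p : ℝ × ℝ × ℝ} {f : ℝ × ℝ × ℝ → ℝ}

lemma diffAt (hs : IsOpen s) (hp : p ∈ s) (hf : ContDiffOn ℝ 2 f s) :
    DifferentiableAt ℝ f p :=
  (hf.contDiffAt (hs.mem_nhds hp)).differentiableAt two_ne_zero

lemma diffAt_fderiv (hs : IsOpen s) (hp : p ∈ s) (hf : ContDiffOn ℝ 2 f s) :
    DifferentiableAt ℝ (fderiv ℝ f) p :=
  (((hf.contDiffAt (hs.mem_nhds hp)).fderiv_right (m := 1) (by norm_num))).differentiableAt one_ne_zero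

lemma diffAt_pd (hs : IsOpen s) (hp : p ∈ s) (hf : ContDiffOn ℝ 2 f s) (e : ℝ × ℝ × ℝ) :
    DifferentiableAt ℝ (fun q => fderiv ℝ f q e) p :=
  (diffAt_fderiv hs hp hf).clm_apply (differentiableAt_const e)

lemma pd_symm (hs : IsOpen s) (hp : p ∈ s) (hf : ContDiffOn ℝ 2 f s) (d e : ℝ × ℝ × ℝ) :
    fderiv ℝ (fun q => fderiv ℝ f q e) p d = fderiv ℝ (fun q => fderiv ℝ f q d) p e := by
  have h2 : ContDiffAt ℝ 2 f p := hf.contDiffAt (hs.mem_nhds hp)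
  have hd : DifferentiableAt ℝ (fderiv ℝ f) p := diffAt_fderiv hs hp hf
  have key : ∀ e' d' : ℝ × ℝ × ℝ, fderiv ℝ (fun q => fderiv ℝ f q e') p d'
      = fderiv ℝ (fderiv ℝ f) p d' e' := by
    intro e' d'
    rw [fderiv_clm_apply hd (differentiableAt_const e')]
    simp
  rw [key, key, h2.isSymmSndFDerivAt (by simp)]

end smooth

end IWaux

namespace IWaux

/-- Second directional derivative helper. -/
def dd (f : ℝ × ℝ × ℝ → ℝ) (p d e : ℝ × ℝ × ℝ) : ℝ :=
  fderiv ℝ (fun q => fderiv ℝ f q e) p d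

section smooth2
variable {s : Set (ℝ × ℝ × ℝ)} {p : ℝ × ℝ × ℝ} {f u v w P : ℝ × ℝ × ℝ → ℝ}

lemma dd_symm (hs : IsOpen s) (hp : p ∈ s) (hf : ContDiffOn ℝ 2 f s) (d e : ℝ × ℝ × ℝ) :
    dd f p d e = dd f p e d := pd_symm hs hp hf d e

lemma expand_mom (hs : IsOpen s) (hp : p ∈ s)
    (hu : ContDiffOn ℝ 2 u s) (hv : ContDiffOn ℝ 2 v s) (hw : ContDiffOn ℝ 2 w s)
    (hf : ContDiffOn ℝ 2 f s) (ρ : ℝ) (d : ℝ × ℝ × ℝ) :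
    fderiv ℝ (fun q => ρ * (u q * fderiv ℝ f q (1,0,0) + v q * fderiv ℝ f q (0,1,0)
        + w q * fderiv ℝ f q (0,0,1))) p d
    = ρ * (fderiv ℝ u p d * fderiv ℝ f p (1,0,0) + u p * dd f p d (1,0,0)
        + fderiv ℝ v p d * fderiv ℝ f p (0,1,0) + v p * dd f p d (0,1,0)
        + fderiv ℝ w p d * fderiv ℝ f p (0,0,1) + w p * dd f p d (0,0,1)) := by
  have Hu := (diffAt hs hp hu).hasFDerivAt
  have Hv := (diffAt hs hp hv).hasFDerivAt
  have Hw := (diffAt hs hp hw).hasFDerivAt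
  have H1 := (diffAt_pd hs hp hf (1,0,0)).hasFDerivAt
  have H2 := (diffAt_pd hs hp hf (0,1,0)).hasFDerivAt
  have H3 := (diffAt_pd hs hp hf (0,0,1)).hasFDerivAt
  have H := (((Hu.mul H1).add (Hv.mul H2)).add (Hw.mul H3)).const_mul ρ
  replace H : HasFDerivAt (fun q => ρ * (u q * fderiv ℝ f q (1,0,0) + v q * fderiv ℝ f q (0,1,0)
      + w q * fderiv ℝ f q (0,0,1))) _ p := H
  rw [H.fderiv]
  simp only [ContinuousLinearMap.smul_apply, ContinuousLinearMap.add_apply, smul_eq_mul, dd]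
  ring

lemma expand_rhs (hs : IsOpen s) (hp : p ∈ s) (hP : ContDiffOn ℝ 2 P s) (e d : ℝ × ℝ × ℝ) :
    fderiv ℝ (fun q => -(fderiv ℝ P q e)) p d = -(dd P p d e) := by
  rw [fderiv_fun_neg]
  · simp [dd]

lemma expand_rhs' (hs : IsOpen s) (hp : p ∈ s) (hP : ContDiffOn ℝ 2 P s) (c : ℝ)
    (e d : ℝ × ℝ × ℝ) :
    fderiv ℝ (fun q => -(fderiv ℝ P q e) - c) p d = -(dd P p d e) := by
  rw [fderiv_sub_const, fderiv_fun_neg]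
  · simp [dd]

/-- The vorticity-transport computation: with constant vorticity `(0,β,0)`,
all `y`-derivatives of the velocity vanish. -/
lemma key_ypd (hs : IsOpen s) {ρ g β : ℝ} (hρ : ρ ≠ 0) (hβ : β ≠ 0)
    (hu : ContDiffOn ℝ 2 u s) (hv : ContDiffOn ℝ 2 v s) (hw : ContDiffOn ℝ 2 w s)
    (hP : ContDiffOn ℝ 2 P s)
    (hA : ∀ q ∈ s, fderiv ℝ w q (0,1,0) = fderiv ℝ v q (0,0,1))
    (hB : ∀ q ∈ s, fderiv ℝ u q (0,0,1) = fderiv ℝ w q (1,0,0) + β)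
    (hC : ∀ q ∈ s, fderiv ℝ v q (1,0,0) = fderiv ℝ u q (0,1,0))
    (hinc : ∀ q ∈ s, fderiv ℝ u q (1,0,0) + fderiv ℝ v q (0,1,0) + fderiv ℝ w q (0,0,1) = 0)
    (hmx : ∀ q ∈ s, ρ * (u q * fderiv ℝ u q (1,0,0) + v q * fderiv ℝ u q (0,1,0)
        + w q * fderiv ℝ u q (0,0,1)) = -(fderiv ℝ P q (1,0,0)))
    (hmy : ∀ q ∈ s, ρ * (u q * fderiv ℝ v q (1,0,0) + v q * fderiv ℝ v q (0,1,0)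
        + w q * fderiv ℝ v q (0,0,1)) = -(fderiv ℝ P q (0,1,0)))
    (hmz : ∀ q ∈ s, ρ * (u q * fderiv ℝ w q (1,0,0) + v q * fderiv ℝ w q (0,1,0)
        + w q * fderiv ℝ w q (0,0,1)) = -(fderiv ℝ P q (0,0,1)) - ρ * g) :
    ∀ p ∈ s, fderiv ℝ u p (0,1,0) = 0 ∧ fderiv ℝ v p (0,1,0) = 0 ∧
      fderiv ℝ w p (0,1,0) = 0 := by
  intro p hp
  -- CLM-level equalities of derivatives of the curl relations
  have hA' : ∀ d : ℝ × ℝ × ℝ, dd w p d (0,1,0) = dd v p d (0,0,1) := by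
    intro d
    exact congrArg (fun L => L d) (fderiv_eq_of_eqOn hs hp hA)
  have hB' : ∀ d : ℝ × ℝ × ℝ, dd u p d (0,0,1) = dd w p d (1,0,0) := by
    intro d
    have h := fderiv_eq_of_eqOn hs hp hB
    rw [fderiv_add_const] at h
    exact congrArg (fun L => L d) h
  have hC' : ∀ d : ℝ × ℝ × ℝ, dd v p d (1,0,0) = dd u p d (0,1,0) := by
    intro d
    exact congrArg (fun L => L d) (fderiv_eq_of_eqOn hs hp hC)
  -- pointwise curl relations
  have pA : fderiv ℝ v p (0,0,1) = fderiv ℝ w p (0,1,0) := (hA p hp).symm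
  have pB : fderiv ℝ u p (0,0,1) = fderiv ℝ w p (1,0,0) + β := hB p hp
  have pC : fderiv ℝ v p (1,0,0) = fderiv ℝ u p (0,1,0) := hC p hp
  -- differentiated momentum equations
  have EZ := congrArg (fun L => L ((0:ℝ),(1:ℝ),(0:ℝ))) (fderiv_eq_of_eqOn hs hp hmz)
  rw [expand_mom hs hp hu hv hw hw ρ, expand_rhs' hs hp hP] at EZ
  have EY3 := congrArg (fun L => L ((0:ℝ),(0:ℝ),(1:ℝ))) (fderiv_eq_of_eqOn hs hp hmy)
  rw [expand_mom hs hp hu hv hw hv ρ, expand_rhs hs hp hP] at EY3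
  have EY1 := congrArg (fun L => L ((1:ℝ),(0:ℝ),(0:ℝ))) (fderiv_eq_of_eqOn hs hp hmy)
  rw [expand_mom hs hp hu hv hw hv ρ, expand_rhs hs hp hP] at EY1
  have EX2 := congrArg (fun L => L ((0:ℝ),(1:ℝ),(0:ℝ))) (fderiv_eq_of_eqOn hs hp hmx)
  rw [expand_mom hs hp hu hv hw hu ρ, expand_rhs hs hp hP] at EX2
  have EX3 := congrArg (fun L => L ((0:ℝ),(0:ℝ),(1:ℝ))) (fderiv_eq_of_eqOn hs hp hmx)
  rw [expand_mom hs hp hu hv hw hu ρ, expand_rhs hs hp hP] at EX3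
  have EZ1 := congrArg (fun L => L ((1:ℝ),(0:ℝ),(0:ℝ))) (fderiv_eq_of_eqOn hs hp hmz)
  rw [expand_mom hs hp hu hv hw hw ρ, expand_rhs' hs hp hP] at EZ1
  -- symmetry abbreviations
  have sU := dd_symm hs hp hu
  have sV := dd_symm hs hp hv
  have sW := dd_symm hs hp hw
  have sP := dd_symm hs hp hP
  -- (1) u_y = 0 : from ∂_y(Z-mom) − ∂_z(Y-mom)
  have t1 : dd v p (0,0,1) (1,0,0) = dd w p (0,1,0) (1,0,0) := by
    rw [sV, ← hA' (1,0,0), sW]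
  have t2 : dd v p (0,0,1) (0,1,0) = dd w p (0,1,0) (0,1,0) := by
    rw [sV, ← hA' (0,1,0)]
  have t3 : dd v p (0,0,1) (0,0,1) = dd w p (0,1,0) (0,0,1) := by
    rw [← hA' (0,0,1), sW]
  have sP1 : dd P p (0,0,1) (0,1,0) = dd P p (0,1,0) (0,0,1) := sP _ _
  rw [t1, t2, t3, pA, pB, pC, sP1] at EY3
  have huy : fderiv ℝ u p (0,1,0) = 0 := by
    have h0 : ρ * (β * fderiv ℝ u p (0,1,0)) = 0 := by linear_combination EY3 - EZ
    simpa [hρ, hβ] using h0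
  -- (2) w_y = 0 : from ∂_x(Y-mom) − ∂_y(X-mom)
  have r1 : dd u p (0,1,0) (1,0,0) = dd v p (1,0,0) (1,0,0) := by
    rw [sU, ← hC' (1,0,0)]
  have r2 : dd u p (0,1,0) (0,1,0) = dd v p (1,0,0) (0,1,0) := by
    rw [← hC' (0,1,0), sV]
  have r3 : dd u p (0,1,0) (0,0,1) = dd v p (1,0,0) (0,0,1) := by
    rw [sU, ← hC' (0,0,1), sV]
  have sP2 : dd P p (0,1,0) (1,0,0) = dd P p (1,0,0) (0,1,0) := sP _ _
  rw [r1, r2, r3, pB, sP2] at EX2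
  rw [pA, pC] at EY1
  have hwy : fderiv ℝ w p (0,1,0) = 0 := by
    have h0 : ρ * (β * fderiv ℝ w p (0,1,0)) = 0 := by linear_combination EX2 - EY1
    simpa [hρ, hβ] using h0
  -- (3) v_y = 0 : from ∂_z(X-mom) − ∂_x(Z-mom) and incompressibility
  have q1 : dd u p (0,0,1) (1,0,0) = dd w p (1,0,0) (1,0,0) := by
    rw [sU, ← hB' (1,0,0)]
  have q2 : dd u p (0,0,1) (0,1,0) = dd w p (1,0,0) (0,1,0) := by
    rw [sU, hB' (0,1,0), sW]
  have q3 : dd u p (0,0,1) (0,0,1) = dd w p (1,0,0) (0,0,1) := by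
    rw [hB' (0,0,1), sW]
  have sP3 : dd P p (0,0,1) (1,0,0) = dd P p (1,0,0) (0,0,1) := sP _ _
  rw [q1, q2, q3, pB, pA, sP3] at EX3
  rw [pC] at EZ1
  have hinc' := hinc p hp
  have hvy : fderiv ℝ v p (0,1,0) = 0 := by
    have h0 : ρ * (β * (fderiv ℝ u p (1,0,0) + fderiv ℝ w p (0,0,1))) = 0 := by
      linear_combination EX3 - EZ1
    have h1 : fderiv ℝ u p (1,0,0) + fderiv ℝ w p (0,0,1) = 0 := by
      rcases mul_eq_zero.1 h0 with h | h
      · exact absurd h hρ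
      · rcases mul_eq_zero.1 h with h | h
        · exact absurd h hβ
        · exact h
    linarith
  exact ⟨huy, hvy, hwy⟩

end smooth2
end IWaux
namespace IWaux
open Complex

/-- The complex field `(w₁−w₂) + i(u₁−u₂)` built from the difference of a velocity
field at two `y`-values. -/
def Fc (u w : ℝ × ℝ × ℝ → ℝ) (y₁ y₂ : ℝ) : ℂ → ℂ := fun ζ =>
  ((w (ζ.re, y₁, ζ.im) - w (ζ.re, y₂, ζ.im) : ℝ) : ℂ)
  + ((u (ζ.re, y₁, ζ.im) - u (ζ.re, y₂, ζ.im) : ℝ)) * Complex.I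

section holo
variable {s : Set (ℝ × ℝ × ℝ)} {u w : ℝ × ℝ × ℝ → ℝ} {β : ℝ}

lemma holo_vanish (hs : IsOpen s)
    (hu : ContDiffOn ℝ 2 u s) (hw : ContDiffOn ℝ 2 w s)
    (hdiv : ∀ q ∈ s, fderiv ℝ u q (1,0,0) + fderiv ℝ w q (0,0,1) = 0)
    (hcurl : ∀ q ∈ s, fderiv ℝ u q (0,0,1) = fderiv ℝ w q (1,0,0) + β)
    (y₁ y₂ : ℝ) {S : Set ℂ} (hSopen : IsOpen S) (hSconn : IsPreconnected S)
    (hmem : ∀ ζ ∈ S, ((ζ.re, y₁, ζ.im) : ℝ × ℝ × ℝ) ∈ s ∧ ((ζ.re, y₂, ζ.im) : ℝ × ℝ × ℝ) ∈ s)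
    {z₀ : ℂ} (hz₀ : z₀ ∈ S) (hnear : Fc u w y₁ y₂ =ᶠ[nhds z₀] 0) :
    Set.EqOn (Fc u w y₁ y₂) 0 S := by
  set J : ℂ →L[ℝ] ℝ × ℝ × ℝ :=
    Complex.reCLM.prod ((0 : ℂ →L[ℝ] ℝ).prod Complex.imCLM) with hJ
  have hJ1 : J 1 = ((1:ℝ),(0:ℝ),(0:ℝ)) := by simp [hJ]
  have hJI : J Complex.I = ((0:ℝ),(0:ℝ),(1:ℝ)) := by simp [hJ]
  have hdiff : DifferentiableOn ℂ (Fc u w y₁ y₂) S := by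
    intro ζ hζ
    obtain ⟨hq₁, hq₂⟩ := hmem ζ hζ
    have hι : ∀ y : ℝ, HasFDerivAt (fun ζ : ℂ => ((ζ.re, y, ζ.im) : ℝ × ℝ × ℝ)) J ζ := by
      intro y
      exact Complex.reCLM.hasFDerivAt.prodMk ((hasFDerivAt_const y ζ).prodMk
        Complex.imCLM.hasFDerivAt)
    have hw₁ := ((diffAt hs hq₁ hw).hasFDerivAt.comp ζ (hι y₁))
    have hw₂ := ((diffAt hs hq₂ hw).hasFDerivAt.comp ζ (hι y₂))
    have hu₁ := ((diffAt hs hq₁ hu).hasFDerivAt.comp ζ (hι y₁))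
    have hu₂ := ((diffAt hs hq₂ hu).hasFDerivAt.comp ζ (hι y₂))
    have hK := hw₁.sub hw₂
    have hG := hu₁.sub hu₂
    have hKC := Complex.ofRealCLM.hasFDerivAt.comp ζ hK
    have hGC := Complex.ofRealCLM.hasFDerivAt.comp ζ hG
    have hGI := hGC.mul_const Complex.I
    have hF := hKC.add hGI
    set L := (Complex.ofRealCLM.comp
        (((fderiv ℝ w ((ζ.re, y₁, ζ.im) : ℝ × ℝ × ℝ)).comp J)
          - ((fderiv ℝ w ((ζ.re, y₂, ζ.im) : ℝ × ℝ × ℝ)).comp J))) +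
        Complex.I • (Complex.ofRealCLM.comp
        (((fderiv ℝ u ((ζ.re, y₁, ζ.im) : ℝ × ℝ × ℝ)).comp J)
          - ((fderiv ℝ u ((ζ.re, y₂, ζ.im) : ℝ × ℝ × ℝ)).comp J)))
      with hL
    have hF' : HasFDerivAt (Fc u w y₁ y₂) L ζ := by
      have : HasFDerivAt (Fc u w y₁ y₂) _ ζ := hF
      convert this using 1
    -- values of L on the real basis 1, I of ℂ
    have hL1 : L 1 = ((fderiv ℝ w (ζ.re, y₁, ζ.im) (1,0,0)
        - fderiv ℝ w (ζ.re, y₂, ζ.im) (1,0,0) : ℝ) : ℂ)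
        + ((fderiv ℝ u (ζ.re, y₁, ζ.im) (1,0,0)
        - fderiv ℝ u (ζ.re, y₂, ζ.im) (1,0,0) : ℝ)) * Complex.I := by
      simp [hL, hJ1]
      ring
    have hLI : L Complex.I = ((fderiv ℝ w (ζ.re, y₁, ζ.im) (0,0,1)
        - fderiv ℝ w (ζ.re, y₂, ζ.im) (0,0,1) : ℝ) : ℂ)
        + ((fderiv ℝ u (ζ.re, y₁, ζ.im) (0,0,1)
        - fderiv ℝ u (ζ.re, y₂, ζ.im) (0,0,1) : ℝ)) * Complex.I := by
      simp [hL, hJI]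
      ring
    -- Cauchy–Riemann
    have hCR : L Complex.I = Complex.I * L 1 := by
      rw [hL1, hLI]
      have e₁ := hdiv _ hq₁
      have e₂ := hdiv _ hq₂
      have e₃ := hcurl _ hq₁
      have e₄ := hcurl _ hq₂
      have hre : fderiv ℝ w (ζ.re, y₁, ζ.im) (0,0,1)
          - fderiv ℝ w (ζ.re, y₂, ζ.im) (0,0,1)
          = -(fderiv ℝ u (ζ.re, y₁, ζ.im) (1,0,0)
          - fderiv ℝ u (ζ.re, y₂, ζ.im) (1,0,0)) := by linarith
      have him : fderiv ℝ u (ζ.re, y₁, ζ.im) (0,0,1)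
          - fderiv ℝ u (ζ.re, y₂, ζ.im) (0,0,1)
          = fderiv ℝ w (ζ.re, y₁, ζ.im) (1,0,0)
          - fderiv ℝ w (ζ.re, y₂, ζ.im) (1,0,0) := by linarith
      rw [hre, him]
      apply Complex.ext <;> simp
    -- upgrade to complex differentiability
    have hdecomp : ∀ z : ℂ, L z = z.re • L 1 + z.im • L Complex.I := by
      intro z
      have hz : z = z.re • (1 : ℂ) + z.im • Complex.I := by
        simp [Complex.real_smul]
      conv_lhs => rw [hz]
      rw [map_add, map_smul, map_smul]
    have hrs : (ContinuousLinearMap.smulRight (1 : ℂ →L[ℂ] ℂ) (L 1)).restrictScalars ℝ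
        = L := by
      apply ContinuousLinearMap.ext
      intro z
      rw [hdecomp z, hCR]
      simp [Complex.real_smul]
      conv_lhs => rw [← Complex.re_add_im z]
      ring
    exact (hasFDerivAt_of_restrictScalars ℝ hF' hrs).differentiableAt.differentiableWithinAt
  have hanal := hdiff.analyticOnNhd hSopen
  exact hanal.eqOn_zero_of_preconnected_of_eventuallyEq_zero hSconn hz₀ hnear

end holo
end IWaux
namespace IWaux

/-- A set of the form `{ζ | γ(re ζ) < im ζ < h}` with `γ ≤ b < h` is preconnected. -/
lemma strip_preconnected (γ : ℝ → ℝ) (b h : ℝ) (hγ : ∀ x, γ x ≤ b) (hbh : b < h) :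
    IsPreconnected {ζ : ℂ | γ ζ.re < ζ.im ∧ ζ.im < h} := by
  set c : ℝ := (b + h) / 2 with hc
  have hbc : b < c := by simp [hc]; linarith
  have hch : c < h := by simp [hc]; linarith
  set T : Set ℂ := {ζ : ℂ | b < ζ.im ∧ ζ.im < h} with hT
  have hTconv : Convex ℝ T := by
    have : T = Complex.imLm ⁻¹' (Set.Ioo b h) := rfl
    rw [this]
    exact (convex_Ioo b h).linear_preimage Complex.imLm
  set V : ℝ → Set ℂ := fun x => {ζ : ℂ | ζ.re = x ∧ γ x < ζ.im ∧ ζ.im < h} with hV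
  have hVconv : ∀ x, Convex ℝ (V x) := by
    intro x
    have : V x = Complex.reLm ⁻¹' {x} ∩ Complex.imLm ⁻¹' (Set.Ioo (γ x) h) := by
      ext ζ
      simp only [hV, Set.mem_setOf_eq, Set.mem_inter_iff, Set.mem_preimage,
        Set.mem_singleton_iff, Set.mem_Ioo]
      tauto
    rw [this]
    exact ((convex_singleton x).linear_preimage Complex.reLm).inter
      ((convex_Ioo (γ x) h).linear_preimage Complex.imLm)
  have hTx : ∀ x : ℝ, IsPreconnected (V x ∪ T) := by
    intro x
    refine IsPreconnected.union (⟨x, c⟩ : ℂ) ?_ ?_ (hVconv x).isPreconnected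
      hTconv.isPreconnected
    · exact ⟨rfl, lt_of_le_of_lt (hγ x) hbc, hch⟩
    · exact ⟨hbc, hch⟩
  have hUnion : ⋃₀ (Set.range (fun x => V x ∪ T)) = {ζ : ℂ | γ ζ.re < ζ.im ∧ ζ.im < h} := by
    apply Set.Subset.antisymm
    · rintro ζ ⟨A, ⟨x, rfl⟩, hζ⟩
      rcases hζ with h' | h'
      · rcases h' with ⟨hre, h1, h2⟩
        exact ⟨by rw [hre]; exact h1, h2⟩
      · exact ⟨lt_of_le_of_lt (hγ ζ.re) h'.1, h'.2⟩
    · intro ζ hζ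
      exact ⟨V ζ.re ∪ T, ⟨ζ.re, rfl⟩, Or.inl ⟨rfl, hζ.1, hζ.2⟩⟩
  rw [← hUnion]
  apply isPreconnected_sUnion (⟨0, c⟩ : ℂ)
  · rintro A ⟨x, rfl⟩
    exact Or.inr ⟨hbc, hch⟩
  · rintro A ⟨x, rfl⟩
    exact hTx x

/-- Directional slice derivative: differentiating `ζ ↦ f (ζ.re, y, ζ.im)`. -/
lemma fderiv_slice {s : Set (ℝ × ℝ × ℝ)} (hs : IsOpen s) {f : ℝ × ℝ × ℝ → ℝ}
    (hf : ContDiffOn ℝ 2 f s) (y : ℝ) {ζ : ℂ}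
    (hq : ((ζ.re, y, ζ.im) : ℝ × ℝ × ℝ) ∈ s) (d : ℂ) :
    fderiv ℝ (fun ζ : ℂ => f (ζ.re, y, ζ.im)) ζ d
      = fderiv ℝ f (ζ.re, y, ζ.im) (d.re, 0, d.im) := by
  have hι : HasFDerivAt (fun ζ : ℂ => ((ζ.re, y, ζ.im) : ℝ × ℝ × ℝ))
      (Complex.reCLM.prod ((0 : ℂ →L[ℝ] ℝ).prod Complex.imCLM)) ζ :=
    Complex.reCLM.hasFDerivAt.prodMk ((hasFDerivAt_const y ζ).prodMk Complex.imCLM.hasFDerivAt)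
  have h : HasFDerivAt (fun ζ : ℂ => f (ζ.re, y, ζ.im))
      ((fderiv ℝ f ((ζ.re, y, ζ.im) : ℝ × ℝ × ℝ)).comp
        (Complex.reCLM.prod ((0 : ℂ →L[ℝ] ℝ).prod Complex.imCLM))) ζ :=
    (diffAt hs hq hf).hasFDerivAt.comp ζ hι
  rw [h.fderiv]
  simp

end IWaux

/-- **Lemma (upper layer).** If the vorticity of the upper layer is the constant nonzero
horizontal vector `ω₂ = (0, β₂, 0)`, then `𝐮₂` and `P₂` are independent of `y` in `Ω₂`,
and `v₂` is constant throughout `Ω₂`. -/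
theorem upper_layer_y_independent
    (h₁ h₂ g ρ₁ ρ₂ : ℝ) (η : ℝ × ℝ → ℝ)
    (u₁ v₁ w₁ P₁ u₂ v₂ w₂ P₂ : ℝ × ℝ × ℝ → ℝ)
    (sol : InternalWaveSolution h₁ h₂ g ρ₁ ρ₂ η u₁ v₁ w₁ P₁ u₂ v₂ w₂ P₂)
    (hb₁ : BoundedVel (layer1 h₁ η) u₁ v₁ w₁)
    (hb₂ : BoundedVel (layer2 h₂ η) u₂ v₂ w₂)
    (β₂ : ℝ) (hβ₂ : β₂ ≠ 0)
    (hω₂ : ∀ p ∈ layer2 h₂ η, curl3 u₂ v₂ w₂ p = ((0 : ℝ), β₂, (0 : ℝ))) :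
    (∀ x y₁ y₂ z : ℝ, (x, y₁, z) ∈ layer2 h₂ η → (x, y₂, z) ∈ layer2 h₂ η →
      u₂ (x, y₁, z) = u₂ (x, y₂, z) ∧ v₂ (x, y₁, z) = v₂ (x, y₂, z) ∧
      w₂ (x, y₁, z) = w₂ (x, y₂, z) ∧ P₂ (x, y₁, z) = P₂ (x, y₂, z)) ∧
    (∃ V : ℝ, ∀ p ∈ layer2 h₂ η, v₂ p = V) := by
  classical
  obtain ⟨b, hbh₂, hb⟩ := sol.η_sup
  set s := layer2 h₂ η with hsdef
  set c : ℝ := (b + h₂) / 2 with hc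
  have hbc : b < c := by rw [hc]; linarith
  have hch : c < h₂ := by rw [hc]; linarith
  have hs_open : IsOpen s := by
    have hcont : Continuous (fun p : ℝ × ℝ × ℝ => η (p.1, p.2.1)) :=
      sol.η_C1.continuous.comp (continuous_fst.prodMk continuous_snd.fst)
    have : s = {p : ℝ × ℝ × ℝ | η (p.1, p.2.1) < p.2.2} ∩ {p : ℝ × ℝ × ℝ | p.2.2 < h₂} := rfl
    rw [this]
    exact (isOpen_lt hcont continuous_snd.snd).inter
      (isOpen_lt continuous_snd.snd continuous_const)
  have hmem_s : ∀ x y z : ℝ, ((x, y, z) : ℝ × ℝ × ℝ) ∈ s ↔ η (x, y) < z ∧ z < h₂ :=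
    fun _ _ _ => Iff.rfl
  -- components of the curl hypothesis
  have hA : ∀ q ∈ s, fderiv ℝ w₂ q ((0:ℝ),(1:ℝ),(0:ℝ)) = fderiv ℝ v₂ q ((0:ℝ),(0:ℝ),(1:ℝ)) := by
    intro q hq
    have h := hω₂ q hq
    simp only [curl3, pdx, pdy, pdz, Prod.mk.injEq] at h
    linarith [h.1]
  have hB : ∀ q ∈ s, fderiv ℝ u₂ q ((0:ℝ),(0:ℝ),(1:ℝ))
      = fderiv ℝ w₂ q ((1:ℝ),(0:ℝ),(0:ℝ)) + β₂ := by
    intro q hq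
    have h := hω₂ q hq
    simp only [curl3, pdx, pdy, pdz, Prod.mk.injEq] at h
    linarith [h.2.1]
  have hC : ∀ q ∈ s, fderiv ℝ v₂ q ((1:ℝ),(0:ℝ),(0:ℝ)) = fderiv ℝ u₂ q ((0:ℝ),(1:ℝ),(0:ℝ)) := by
    intro q hq
    have h := hω₂ q hq
    simp only [curl3, pdx, pdy, pdz, Prod.mk.injEq] at h
    linarith [h.2.2]
  have hinc : ∀ q ∈ s, fderiv ℝ u₂ q ((1:ℝ),(0:ℝ),(0:ℝ)) + fderiv ℝ v₂ q ((0:ℝ),(1:ℝ),(0:ℝ))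
      + fderiv ℝ w₂ q ((0:ℝ),(0:ℝ),(1:ℝ)) = 0 := by
    intro q hq
    have h := sol.incompressible₂ q hq
    simpa only [pdx, pdy, pdz] using h
  have hmx := fun q hq => sol.momentum₂_x q hq
  have hmy := fun q hq => sol.momentum₂_y q hq
  have hmz := fun q hq => sol.momentum₂_z q hq
  simp only [pdx, pdy, pdz] at hmx hmy hmz
  -- Step 1: all y-derivatives of the velocity vanish
  have key := IWaux.key_ypd hs_open (ne_of_gt sol.ρ₂_pos) hβ₂
    sol.u₂_C2 sol.v₂_C2 sol.w₂_C2 sol.P₂_C2 hA hB hC hinc hmx hmy hmz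
  have huy : ∀ q ∈ s, fderiv ℝ u₂ q ((0:ℝ),(1:ℝ),(0:ℝ)) = 0 := fun q hq => (key q hq).1
  have hvy : ∀ q ∈ s, fderiv ℝ v₂ q ((0:ℝ),(1:ℝ),(0:ℝ)) = 0 := fun q hq => (key q hq).2.1
  have hwy : ∀ q ∈ s, fderiv ℝ w₂ q ((0:ℝ),(1:ℝ),(0:ℝ)) = 0 := fun q hq => (key q hq).2.2
  have hvx : ∀ q ∈ s, fderiv ℝ v₂ q ((1:ℝ),(0:ℝ),(0:ℝ)) = 0 :=
    fun q hq => (hC q hq).trans (huy q hq)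
  have hvz : ∀ q ∈ s, fderiv ℝ v₂ q ((0:ℝ),(0:ℝ),(1:ℝ)) = 0 :=
    fun q hq => (hA q hq).symm.trans (hwy q hq)
  have hvd : ∀ q ∈ s, ∀ d : ℝ × ℝ × ℝ, fderiv ℝ v₂ q d = 0 := by
    intro q hq d
    obtain ⟨d1, d2, d3⟩ := d
    rw [IWaux.clm_expand, hvx q hq, hvy q hq, hvz q hq]
    ring
  -- y-derivative of the pressure vanishes
  have hPy : ∀ q ∈ s, fderiv ℝ P₂ q ((0:ℝ),(1:ℝ),(0:ℝ)) = 0 := by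
    intro q hq
    have h := hmy q hq
    rw [hvx q hq, hvy q hq, hvz q hq] at h
    have : ρ₂ * (u₂ q * 0 + v₂ q * 0 + w₂ q * 0) = 0 := by ring
    rw [this] at h
    linarith
  -- constancy along segments inside s
  have segconst : ∀ f : ℝ × ℝ × ℝ → ℝ, ContDiffOn ℝ 2 f s → ∀ a d : ℝ × ℝ × ℝ,
      (∀ τ ∈ Icc (0:ℝ) 1, a + τ • d ∈ s ∧ fderiv ℝ f (a + τ • d) d = 0) →
      f (a + d) = f a := by
    intro f hf a d h
    exact IWaux.const_on_segment (fun τ hτ => ⟨IWaux.diffAt hs_open (h τ hτ).1 hf, (h τ hτ).2⟩)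
  -- constancy in the y-direction at heights above b
  have yconst : ∀ f : ℝ × ℝ × ℝ → ℝ, ContDiffOn ℝ 2 f s →
      (∀ q ∈ s, fderiv ℝ f q ((0:ℝ),(1:ℝ),(0:ℝ)) = 0) →
      ∀ x ya yb t : ℝ, b < t → t < h₂ → f (x, ya, t) = f (x, yb, t) := by
    intro f hf hf0 x ya yb t hbt hth
    have hpt : ∀ τ : ℝ, ((x, ya, t) : ℝ × ℝ × ℝ) + τ • ((0, yb - ya, 0) : ℝ × ℝ × ℝ)
        = (x, ya + τ * (yb - ya), t) := by
      intro τ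
      simp [Prod.ext_iff]
    have hend : ((x, ya, t) : ℝ × ℝ × ℝ) + ((0, yb - ya, 0) : ℝ × ℝ × ℝ) = (x, yb, t) := by
      simp [Prod.ext_iff]
    have h := segconst f hf (x, ya, t) (0, yb - ya, 0) ?_
    · rw [hend] at h; exact h.symm
    · intro τ hτ
      rw [hpt τ]
      have hqmem : ((x, ya + τ * (yb - ya), t) : ℝ × ℝ × ℝ) ∈ s :=
        (hmem_s _ _ _).2 ⟨lt_of_le_of_lt (hb (x, ya + τ * (yb - ya))) hbt, hth⟩
      refine ⟨hqmem, ?_⟩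
      have hd : ((0, yb - ya, 0) : ℝ × ℝ × ℝ) = (yb - ya) • ((0,1,0) : ℝ × ℝ × ℝ) := by
        simp [Prod.ext_iff]
      rw [hd, map_smul, hf0 _ hqmem, smul_zero]
  -- Step 2: v₂ is constant on s
  have hVval : ∀ p ∈ s, v₂ p = v₂ ((0:ℝ), (0:ℝ), c) := by
    rintro ⟨x, y, z⟩ hp
    obtain ⟨hz1, hz2⟩ := (hmem_s x y z).1 hp
    have e1 : ((x, y, z) : ℝ × ℝ × ℝ) + ((0, 0, c - z) : ℝ × ℝ × ℝ) = (x, y, c) := by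
      simp [Prod.ext_iff]
    have e2 : ((x, y, c) : ℝ × ℝ × ℝ) + ((-x, -y, 0) : ℝ × ℝ × ℝ) = (0, 0, c) := by
      simp [Prod.ext_iff]
    have h1 : v₂ (x, y, c) = v₂ (x, y, z) := by
      rw [← e1]
      apply segconst v₂ sol.v₂_C2
      intro τ hτ
      have hpt : ((x, y, z) : ℝ × ℝ × ℝ) + τ • ((0, 0, c - z) : ℝ × ℝ × ℝ)
          = (x, y, z + τ * (c - z)) := by simp [Prod.ext_iff]
      rw [hpt]
      have hbη : η (x, y) ≤ b := hb (x, y)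
      have hqmem : ((x, y, z + τ * (c - z)) : ℝ × ℝ × ℝ) ∈ s := by
        refine (hmem_s _ _ _).2 ⟨?_, ?_⟩
        · rcases le_total z c with h | h
          · nlinarith [hτ.1, hτ.2]
          · nlinarith [hτ.1, hτ.2]
        · rcases le_total z c with h | h
          · nlinarith [hτ.1, hτ.2]
          · nlinarith [hτ.1, hτ.2]
      exact ⟨hqmem, hvd _ hqmem _⟩
    have h2 : v₂ ((0:ℝ), (0:ℝ), c) = v₂ (x, y, c) := by
      rw [← e2]
      apply segconst v₂ sol.v₂_C2
      intro τ hτ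
      have hpt : ((x, y, c) : ℝ × ℝ × ℝ) + τ • ((-x, -y, 0) : ℝ × ℝ × ℝ)
          = (x + τ * (-x), y + τ * (-y), c) := by simp [Prod.ext_iff]
      rw [hpt]
      have hqmem : ((x + τ * (-x), y + τ * (-y), c) : ℝ × ℝ × ℝ) ∈ s :=
        (hmem_s _ _ _).2 ⟨lt_of_le_of_lt (hb _) hbc, hch⟩
      exact ⟨hqmem, hvd _ hqmem _⟩
    rw [h2, h1]
  -- divergence-type relation for the holomorphic argument
  have hdiv : ∀ q ∈ s, fderiv ℝ u₂ q ((1:ℝ),(0:ℝ),(0:ℝ))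
      + fderiv ℝ w₂ q ((0:ℝ),(0:ℝ),(1:ℝ)) = 0 := by
    intro q hq
    have h1 := hinc q hq
    have h2 := hvy q hq
    linarith
  -- Step 3 + 4, for a fixed pair of y-values
  have main : ∀ y₁ y₂ x z : ℝ, ((x, y₁, z) : ℝ × ℝ × ℝ) ∈ s → ((x, y₂, z) : ℝ × ℝ × ℝ) ∈ s →
      u₂ (x, y₁, z) = u₂ (x, y₂, z) ∧ w₂ (x, y₁, z) = w₂ (x, y₂, z) ∧
      P₂ (x, y₁, z) = P₂ (x, y₂, z) := by
    intro y₁ y₂ x z hz₁ hz₂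
    set γ : ℝ → ℝ := fun x' => max (η (x', y₁)) (η (x', y₂)) with hγ
    set S : Set ℂ := {ζ : ℂ | γ ζ.re < ζ.im ∧ ζ.im < h₂} with hSdef
    have hγb : ∀ x', γ x' ≤ b := fun x' => max_le (hb _) (hb _)
    have hγcont : Continuous γ := by
      apply Continuous.max
      · exact sol.η_C1.continuous.comp (continuous_id.prodMk continuous_const)
      · exact sol.η_C1.continuous.comp (continuous_id.prodMk continuous_const)
    have hSopen : IsOpen S := by
      have : S = {ζ : ℂ | γ ζ.re < ζ.im} ∩ {ζ : ℂ | ζ.im < h₂} := rfl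
      rw [this]
      exact (isOpen_lt (hγcont.comp Complex.continuous_re) Complex.continuous_im).inter
        (isOpen_lt Complex.continuous_im continuous_const)
    have hSconn : IsPreconnected S := IWaux.strip_preconnected γ b h₂ hγb hbh₂
    have hmemS : ∀ ζ ∈ S, ((ζ.re, y₁, ζ.im) : ℝ × ℝ × ℝ) ∈ s
        ∧ ((ζ.re, y₂, ζ.im) : ℝ × ℝ × ℝ) ∈ s := by
      intro ζ hζ
      obtain ⟨h1, h2⟩ := hζ
      exact ⟨(hmem_s _ _ _).2 ⟨lt_of_le_of_lt (le_max_left _ _) h1, h2⟩,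
        (hmem_s _ _ _).2 ⟨lt_of_le_of_lt (le_max_right _ _) h1, h2⟩⟩
    have hz₀S : (⟨0, c⟩ : ℂ) ∈ S := ⟨lt_of_le_of_lt (hγb 0) hbc, hch⟩
    have hnear : IWaux.Fc u₂ w₂ y₁ y₂ =ᶠ[nhds (⟨0, c⟩ : ℂ)] 0 := by
      have hTopen : IsOpen {ζ : ℂ | b < ζ.im ∧ ζ.im < h₂} := by
        have : {ζ : ℂ | b < ζ.im ∧ ζ.im < h₂}
            = {ζ : ℂ | b < ζ.im} ∩ {ζ : ℂ | ζ.im < h₂} := rfl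
        rw [this]
        exact (isOpen_lt continuous_const Complex.continuous_im).inter
          (isOpen_lt Complex.continuous_im continuous_const)
      filter_upwards [hTopen.mem_nhds ⟨hbc, hch⟩] with ζ hζ
      have h1 := yconst w₂ sol.w₂_C2 hwy ζ.re y₁ y₂ ζ.im hζ.1 hζ.2
      have h2 := yconst u₂ sol.u₂_C2 huy ζ.re y₁ y₂ ζ.im hζ.1 hζ.2
      simp [IWaux.Fc, h1, h2]
    have hF0 := IWaux.holo_vanish hs_open sol.u₂_C2 sol.w₂_C2 hdiv hB y₁ y₂
      hSopen hSconn hmemS hz₀S hnear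
    have hvals : ∀ ζ ∈ S, w₂ (ζ.re, y₁, ζ.im) = w₂ (ζ.re, y₂, ζ.im)
        ∧ u₂ (ζ.re, y₁, ζ.im) = u₂ (ζ.re, y₂, ζ.im) := by
      intro ζ hζ
      have h := hF0 hζ
      simp only [IWaux.Fc, Pi.zero_apply, Complex.ext_iff, Complex.add_re, Complex.add_im,
        Complex.ofReal_re, Complex.ofReal_im, Complex.mul_re, Complex.mul_im,
        Complex.I_re, Complex.I_im, Complex.zero_re, Complex.zero_im] at h
      constructor
      · have := h.1; linarith [this]
      · have := h.2; linarith [this]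
    have hueq : ∀ ζ ∈ S, u₂ (ζ.re, y₁, ζ.im) = u₂ (ζ.re, y₂, ζ.im) :=
      fun ζ hζ => (hvals ζ hζ).2
    have hweq : ∀ ζ ∈ S, w₂ (ζ.re, y₁, ζ.im) = w₂ (ζ.re, y₂, ζ.im) :=
      fun ζ hζ => (hvals ζ hζ).1
    -- derivative equalities on S
    have hdequ : ∀ f : ℝ × ℝ × ℝ → ℝ, ContDiffOn ℝ 2 f s →
        (∀ ζ ∈ S, f (ζ.re, y₁, ζ.im) = f (ζ.re, y₂, ζ.im)) →
        ∀ ζ ∈ S, ∀ d : ℂ, fderiv ℝ f (ζ.re, y₁, ζ.im) (d.re, 0, d.im)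
          = fderiv ℝ f (ζ.re, y₂, ζ.im) (d.re, 0, d.im) := by
      intro f hf heq ζ hζ d
      have h := IWaux.fderiv_eq_of_eqOn hSopen hζ
        (f := fun ζ : ℂ => f (ζ.re, y₁, ζ.im)) (g := fun ζ : ℂ => f (ζ.re, y₂, ζ.im)) heq
      have h1 := IWaux.fderiv_slice hs_open hf y₁ (hmemS ζ hζ).1 d
      have h2 := IWaux.fderiv_slice hs_open hf y₂ (hmemS ζ hζ).2 d
      rw [← h1, ← h2, h]
    -- the two points as elements of S
    have hγx : γ x < z := by
      obtain ⟨ha1, _⟩ := (hmem_s x y₁ z).1 hz₁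
      obtain ⟨ha2, hzh⟩ := (hmem_s x y₂ z).1 hz₂
      exact max_lt ha1 ha2
    have hzS : (⟨x, z⟩ : ℂ) ∈ S := ⟨hγx, ((hmem_s x y₂ z).1 hz₂).2⟩
    refine ⟨hueq _ hzS, hweq _ hzS, ?_⟩
    -- Step 4: pressure equality along a vertical path
    have hQder : ∀ t ∈ Icc (min z c) (max z c),
        HasDerivAt (fun t : ℝ => P₂ (x, y₁, t) - P₂ (x, y₂, t)) 0 t := by
      intro t ht
      have htS : (⟨x, t⟩ : ℂ) ∈ S := by
        constructor
        · have : min z c ≤ t := ht.1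
          have hγc : γ x < min z c := lt_min hγx (lt_of_le_of_lt (hγb x) hbc)
          exact lt_of_lt_of_le hγc ht.1
        · have hmax : max z c < h₂ := max_lt ((hmem_s x y₂ z).1 hz₂).2 hch
          exact lt_of_le_of_lt ht.2 hmax
      have hq₁ : ((x, y₁, t) : ℝ × ℝ × ℝ) ∈ s := (hmemS _ htS).1
      have hq₂ : ((x, y₂, t) : ℝ × ℝ × ℝ) ∈ s := (hmemS _ htS).2
      have hline : ∀ y' : ℝ, HasDerivAt (fun t : ℝ => ((x, y', t) : ℝ × ℝ × ℝ))
          (((0:ℝ),(0:ℝ),(1:ℝ)) : ℝ × ℝ × ℝ) t :=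
        fun y' => (hasDerivAt_const t x).prodMk ((hasDerivAt_const t y').prodMk (hasDerivAt_id t))
      have hP1 : HasDerivAt (fun t : ℝ => P₂ (x, y₁, t))
          (fderiv ℝ P₂ (x, y₁, t) ((0:ℝ),(0:ℝ),(1:ℝ))) t :=
        (IWaux.diffAt hs_open hq₁ sol.P₂_C2).hasFDerivAt.comp_hasDerivAt t (hline y₁)
      have hP2 : HasDerivAt (fun t : ℝ => P₂ (x, y₂, t))
          (fderiv ℝ P₂ (x, y₂, t) ((0:ℝ),(0:ℝ),(1:ℝ))) t :=
        (IWaux.diffAt hs_open hq₂ sol.P₂_C2).hasFDerivAt.comp_hasDerivAt t (hline y₂)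
      have hsub := hP1.sub hP2
      have hzero : fderiv ℝ P₂ (x, y₁, t) ((0:ℝ),(0:ℝ),(1:ℝ))
          - fderiv ℝ P₂ (x, y₂, t) ((0:ℝ),(0:ℝ),(1:ℝ)) = 0 := by
        have m1 := hmz _ hq₁
        have m2 := hmz _ hq₂
        have hu_eq : u₂ (x, y₁, t) = u₂ (x, y₂, t) := hueq _ htS
        have hw_eq : w₂ (x, y₁, t) = w₂ (x, y₂, t) := hweq _ htS
        have hv_eq : v₂ (x, y₁, t) = v₂ (x, y₂, t) :=
          (hVval _ hq₁).trans (hVval _ hq₂).symm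
        have hwx : fderiv ℝ w₂ (x, y₁, t) ((1:ℝ),(0:ℝ),(0:ℝ))
            = fderiv ℝ w₂ (x, y₂, t) ((1:ℝ),(0:ℝ),(0:ℝ)) := by
          have := hdequ w₂ sol.w₂_C2 hweq _ htS 1
          simpa using this
        have hwz : fderiv ℝ w₂ (x, y₁, t) ((0:ℝ),(0:ℝ),(1:ℝ))
            = fderiv ℝ w₂ (x, y₂, t) ((0:ℝ),(0:ℝ),(1:ℝ)) := by
          have := hdequ w₂ sol.w₂_C2 hweq _ htS Complex.I
          simpa using this
        have hwy1 := hwy _ hq₁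
        have hwy2 := hwy _ hq₂
        rw [hu_eq, hw_eq, hv_eq, hwx, hwz, hwy1] at m1
        rw [hwy2] at m2
        linarith
      rw [← hzero]
      exact hsub
    have hQ : P₂ (x, y₁, z) - P₂ (x, y₂, z) = P₂ (x, y₁, c) - P₂ (x, y₂, c) := by
      have h := IWaux.const_of_hasDerivAt_zero min_le_max hQder
      rcases le_total z c with hzc | hzc
      · rw [min_eq_left hzc, max_eq_right hzc] at h
        exact h
      · rw [min_eq_right hzc, max_eq_left hzc] at h
        exact h.symm
    have hQc : P₂ (x, y₁, c) = P₂ (x, y₂, c) :=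
      yconst P₂ sol.P₂_C2 hPy x y₁ y₂ c hbc hch
    have := hQ
    rw [hQc] at this
    linarith
  constructor
  · intro x y₁ y₂ z h1 h2
    obtain ⟨hu_eq, hw_eq, hP_eq⟩ := main y₁ y₂ x z h1 h2
    exact ⟨hu_eq, (hVval _ h1).trans (hVval _ h2).symm, hw_eq, hP_eq⟩
  · exact ⟨v₂ ((0:ℝ), (0:ℝ), c), fun p hp => hVval p hp⟩
end
end

section
/- Let Ω ⊆ ℝ³ be open, ρ > 0, g ∈ ℝ, and let 𝐮 : Ω → ℝ³ and P : Ω → ℝ be twice continuously differentiable and satisfy ρ(𝐮·∇)𝐮 = −∇P + ρ(0,0,−g) and ∇·𝐮 = 0 in Ω. If moreover the vorticity is constant, ∇×𝐮 ≡ ω for a fixed vector ω ∈ ℝ³, then (ω·∇)𝐮 = 0 in Ω; i.e., the velocity field 𝐮 is constant along every direction parallel to ω. -/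
noncomputable section

variable {p : ℝ × ℝ × ℝ} {Ω : Set (ℝ × ℝ × ℝ)}

lemma fderiv_zero_of_eqOn_const {f : ℝ × ℝ × ℝ → ℝ} {c : ℝ} (hΩ : IsOpen Ω)
    (hp : p ∈ Ω) (hf : ∀ q ∈ Ω, f q = c) : fderiv ℝ f p = 0 := by
  have h : f =ᶠ[nhds p] fun _ => c :=
    Filter.eventuallyEq_of_mem (hΩ.mem_nhds hp) hf
  rw [h.fderiv_eq, fderiv_fun_const]
  rfl

lemma pd_diff {f : ℝ × ℝ × ℝ → ℝ} (hf : ContDiffAt ℝ 2 f p) (e : ℝ × ℝ × ℝ) :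
    DifferentiableAt ℝ (fun q => fderiv ℝ f q e) p := by
  have h1 : ContDiffAt ℝ 1 (fderiv ℝ f) p := hf.fderiv_right (by norm_num)
  exact (h1.differentiableAt one_ne_zero).clm_apply (differentiableAt_const e)

lemma pd_fderiv {f : ℝ × ℝ × ℝ → ℝ} (hf : ContDiffAt ℝ 2 f p) (e d : ℝ × ℝ × ℝ) :
    fderiv ℝ (fun q => fderiv ℝ f q e) p d = fderiv ℝ (fderiv ℝ f) p d e := by
  have h1 : ContDiffAt ℝ 1 (fderiv ℝ f) p := hf.fderiv_right (by norm_num)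
  rw [fderiv_clm_apply (h1.differentiableAt one_ne_zero) (differentiableAt_const e)]
  simp

lemma pd_exp {u f : ℝ × ℝ × ℝ → ℝ} (hu : DifferentiableAt ℝ u p)
    (hf : ContDiffAt ℝ 2 f p) (e s : ℝ × ℝ × ℝ) :
    fderiv ℝ (fun q => u q * fderiv ℝ f q e) p s
      = fderiv ℝ u p s * fderiv ℝ f p e + u p * fderiv ℝ (fderiv ℝ f) p s e := by
  rw [fderiv_fun_mul hu (pd_diff hf e)]
  simp [pd_fderiv hf e s]
  ring

lemma expandG {u v w P F : ℝ × ℝ × ℝ → ℝ} {ρ : ℝ}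
    (hu : ContDiffAt ℝ 2 u p) (hv : ContDiffAt ℝ 2 v p) (hw : ContDiffAt ℝ 2 w p)
    (hP : ContDiffAt ℝ 2 P p) (hF : ContDiffAt ℝ 2 F p) (t s : ℝ × ℝ × ℝ) :
    fderiv ℝ (fun q => ρ * (u q * fderiv ℝ F q (1,0,0) + v q * fderiv ℝ F q (0,1,0)
        + w q * fderiv ℝ F q (0,0,1)) + fderiv ℝ P q t) p s
    = ρ * (fderiv ℝ u p s * fderiv ℝ F p (1,0,0) + u p * fderiv ℝ (fderiv ℝ F) p s (1,0,0)
        + fderiv ℝ v p s * fderiv ℝ F p (0,1,0) + v p * fderiv ℝ (fderiv ℝ F) p s (0,1,0)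
        + fderiv ℝ w p s * fderiv ℝ F p (0,0,1) + w p * fderiv ℝ (fderiv ℝ F) p s (0,0,1))
      + fderiv ℝ (fderiv ℝ P) p s t := by
  have hud := hu.differentiableAt two_ne_zero
  have hvd := hv.differentiableAt two_ne_zero
  have hwd := hw.differentiableAt two_ne_zero
  have d1 : DifferentiableAt ℝ (fun q => u q * fderiv ℝ F q (1,0,0)) p :=
    hud.mul (pd_diff hF _)
  have d2 : DifferentiableAt ℝ (fun q => v q * fderiv ℝ F q (0,1,0)) p :=
    hvd.mul (pd_diff hF _)
  have d3 : DifferentiableAt ℝ (fun q => w q * fderiv ℝ F q (0,0,1)) p :=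
    hwd.mul (pd_diff hF _)
  rw [fderiv_fun_add ((((d1.fun_add d2).fun_add d3)).const_mul ρ) (pd_diff hP t)]
  simp only [ContinuousLinearMap.add_apply]
  rw [fderiv_const_mul ((d1.fun_add d2).fun_add d3)]
  simp only [ContinuousLinearMap.smul_apply, smul_eq_mul]
  rw [fderiv_fun_add (d1.fun_add d2) d3, fderiv_fun_add d1 d2]
  simp only [ContinuousLinearMap.add_apply]
  rw [pd_exp hud hF, pd_exp hvd hF, pd_exp hwd hF, pd_fderiv hP]
  ring

/-- Key: one component of the curl of the momentum equation, assuming the corresponding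
vorticity component is constant, yields a first-order identity. -/
lemma keyLemma {u v w P f g : ℝ × ℝ × ℝ → ℝ} {ρ : ℝ}
    (hΩ : IsOpen Ω) (hp : p ∈ Ω)
    (hu : ContDiffAt ℝ 2 u p) (hv : ContDiffAt ℝ 2 v p) (hw : ContDiffAt ℝ 2 w p)
    (hP : ContDiffAt ℝ 2 P p) (hf : ContDiffAt ℝ 2 f p) (hg : ContDiffAt ℝ 2 g p)
    (s t : ℝ × ℝ × ℝ) (c C C' : ℝ)
    (hG : ∀ q ∈ Ω, ρ * (u q * fderiv ℝ g q (1,0,0) + v q * fderiv ℝ g q (0,1,0)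
        + w q * fderiv ℝ g q (0,0,1)) + fderiv ℝ P q t = C)
    (hG' : ∀ q ∈ Ω, ρ * (u q * fderiv ℝ f q (1,0,0) + v q * fderiv ℝ f q (0,1,0)
        + w q * fderiv ℝ f q (0,0,1)) + fderiv ℝ P q s = C')
    (hc : ∀ q ∈ Ω, fderiv ℝ g q s - fderiv ℝ f q t = c) :
    ρ * (fderiv ℝ u p s * fderiv ℝ g p (1,0,0) + fderiv ℝ v p s * fderiv ℝ g p (0,1,0)
        + fderiv ℝ w p s * fderiv ℝ g p (0,0,1)
        - fderiv ℝ u p t * fderiv ℝ f p (1,0,0) - fderiv ℝ v p t * fderiv ℝ f p (0,1,0)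
        - fderiv ℝ w p t * fderiv ℝ f p (0,0,1)) = 0 := by
  have hz : fderiv ℝ (fun q => ρ * (u q * fderiv ℝ g q (1,0,0) + v q * fderiv ℝ g q (0,1,0)
      + w q * fderiv ℝ g q (0,0,1)) + fderiv ℝ P q t) p s = 0 := by
    rw [fderiv_zero_of_eqOn_const hΩ hp hG]; rfl
  have hz' : fderiv ℝ (fun q => ρ * (u q * fderiv ℝ f q (1,0,0) + v q * fderiv ℝ f q (0,1,0)
      + w q * fderiv ℝ f q (0,0,1)) + fderiv ℝ P q s) p t = 0 := by
    rw [fderiv_zero_of_eqOn_const hΩ hp hG']; rfl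
  rw [expandG hu hv hw hP hg t s] at hz
  rw [expandG hu hv hw hP hf s t] at hz'
  have hcurl0 : ∀ e : ℝ × ℝ × ℝ,
      fderiv ℝ (fderiv ℝ g) p e s - fderiv ℝ (fderiv ℝ f) p e t = 0 := by
    intro e
    have h0 : fderiv ℝ (fun q => fderiv ℝ g q s - fderiv ℝ f q t) p = 0 :=
      fderiv_zero_of_eqOn_const hΩ hp hc
    have h1 : fderiv ℝ (fun q => fderiv ℝ g q s - fderiv ℝ f q t) p e = 0 := by
      rw [h0]; rfl
    rwa [fderiv_fun_sub (pd_diff hg s) (pd_diff hf t), ContinuousLinearMap.sub_apply,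
      pd_fderiv hg, pd_fderiv hf] at h1
  have c1 := hcurl0 (1,0,0)
  have c2 := hcurl0 (0,1,0)
  have c3 := hcurl0 (0,0,1)
  have sg := hg.isSymmSndFDerivAt (by norm_num)
  have sf := hf.isSymmSndFDerivAt (by norm_num)
  have sP := hP.isSymmSndFDerivAt (by norm_num)
  have sg1 := sg s (1,0,0); have sg2 := sg s (0,1,0); have sg3 := sg s (0,0,1)
  have sf1 := sf t (1,0,0); have sf2 := sf t (0,1,0); have sf3 := sf t (0,0,1)
  have sP1 := sP s t
  linear_combination hz - hz' - ρ * u p * sg1 + ρ * u p * sf1 - ρ * u p * c1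
    - ρ * v p * sg2 + ρ * v p * sf2 - ρ * v p * c2
    - ρ * w p * sg3 + ρ * w p * sf3 - ρ * w p * c3 - sP1


/-- **Constant vorticity forces directional constancy.** If `(𝐮, P)` is a `C²` solution
of the steady incompressible Euler equations in an open set `Ω ⊆ ℝ³` and the vorticity
`∇ × 𝐮 ≡ ω = (α, β, γ)` is constant, then `(ω·∇)𝐮 = 0` in `Ω`. -/
theorem constant_vorticity_directional_derivative
    (Ω : Set (ℝ × ℝ × ℝ)) (hΩ : IsOpen Ω) (ρ g : ℝ) (hρ : 0 < ρ)
    (u v w P : ℝ × ℝ × ℝ → ℝ)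
    (hu : ContDiffOn ℝ 2 u Ω) (hv : ContDiffOn ℝ 2 v Ω) (hw : ContDiffOn ℝ 2 w Ω)
    (hP : ContDiffOn ℝ 2 P Ω)
    (momx : ∀ p ∈ Ω, ρ * (u p * pdx u p + v p * pdy u p + w p * pdz u p) = -(pdx P p))
    (momy : ∀ p ∈ Ω, ρ * (u p * pdx v p + v p * pdy v p + w p * pdz v p) = -(pdy P p))
    (momz : ∀ p ∈ Ω,
      ρ * (u p * pdx w p + v p * pdy w p + w p * pdz w p) = -(pdz P p) - ρ * g)
    (hdiv : ∀ p ∈ Ω, pdx u p + pdy v p + pdz w p = 0)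
    (α β γ : ℝ)
    (hcurl : ∀ p ∈ Ω,
      (pdy w p - pdz v p, pdz u p - pdx w p, pdx v p - pdy u p) = (α, β, γ)) :
    ∀ p ∈ Ω,
      α * pdx u p + β * pdy u p + γ * pdz u p = 0 ∧
      α * pdx v p + β * pdy v p + γ * pdz v p = 0 ∧
      α * pdx w p + β * pdy w p + γ * pdz w p = 0 := by
  simp only [pdx, pdy, pdz] at momx momy momz hdiv hcurl ⊢
  intro p hp
  have hup := hu.contDiffAt (hΩ.mem_nhds hp)
  have hvp := hv.contDiffAt (hΩ.mem_nhds hp)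
  have hwp := hw.contDiffAt (hΩ.mem_nhds hp)
  have hPp := hP.contDiffAt (hΩ.mem_nhds hp)
  -- momentum equations in "= constant" form
  have hGx : ∀ q ∈ Ω, ρ * (u q * fderiv ℝ u q (1,0,0) + v q * fderiv ℝ u q (0,1,0)
      + w q * fderiv ℝ u q (0,0,1)) + fderiv ℝ P q (1,0,0) = 0 := fun q hq => by
    linarith [momx q hq]
  have hGy : ∀ q ∈ Ω, ρ * (u q * fderiv ℝ v q (1,0,0) + v q * fderiv ℝ v q (0,1,0)
      + w q * fderiv ℝ v q (0,0,1)) + fderiv ℝ P q (0,1,0) = 0 := fun q hq => by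
    linarith [momy q hq]
  have hGz : ∀ q ∈ Ω, ρ * (u q * fderiv ℝ w q (1,0,0) + v q * fderiv ℝ w q (0,1,0)
      + w q * fderiv ℝ w q (0,0,1)) + fderiv ℝ P q (0,0,1) = -(ρ * g) := fun q hq => by
    linarith [momz q hq]
  -- constant vorticity components
  have curlα : ∀ q ∈ Ω, fderiv ℝ w q (0,1,0) - fderiv ℝ v q (0,0,1) = α :=
    fun q hq => congrArg (fun x => x.1) (hcurl q hq)
  have curlβ : ∀ q ∈ Ω, fderiv ℝ u q (0,0,1) - fderiv ℝ w q (1,0,0) = β :=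
    fun q hq => congrArg (fun x => x.2.1) (hcurl q hq)
  have curlγ : ∀ q ∈ Ω, fderiv ℝ v q (1,0,0) - fderiv ℝ u q (0,1,0) = γ :=
    fun q hq => congrArg (fun x => x.2.2) (hcurl q hq)
  have H1 := keyLemma hΩ hp hup hvp hwp hPp hvp hwp (0,1,0) (0,0,1) α (-(ρ*g)) 0
    hGz hGy curlα
  have H2 := keyLemma hΩ hp hup hvp hwp hPp hwp hup (0,0,1) (1,0,0) β 0 (-(ρ*g))
    hGx hGz curlβ
  have H3 := keyLemma hΩ hp hup hvp hwp hPp hup hvp (1,0,0) (0,1,0) γ 0 0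
    hGy hGx curlγ
  have H1' := (mul_eq_zero.mp H1).resolve_left hρ.ne'
  have H2' := (mul_eq_zero.mp H2).resolve_left hρ.ne'
  have H3' := (mul_eq_zero.mp H3).resolve_left hρ.ne'
  have divp := hdiv p hp
  have eα := curlα p hp
  have eβ := curlβ p hp
  have eγ := curlγ p hp
  subst eα eβ eγ
  refine ⟨?_, ?_, ?_⟩
  · linear_combination -H1' + (fderiv ℝ w p (0,1,0) - fderiv ℝ v p (0,0,1)) * divp
  · linear_combination -H2' + (fderiv ℝ u p (0,0,1) - fderiv ℝ w p (1,0,0)) * divp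
  · linear_combination -H3' + (fderiv ℝ v p (1,0,0) - fderiv ℝ u p (0,1,0)) * divp
end
end

section
/- Let α, β, γ ∈ ℝ with (α,β) ≠ (0,0), and let ψ ∈ C²(ℝ²;ℝ) satisfy on all of ℝ² the system: β ∂ₓ∂ᵧψ − α ∂ᵧ²ψ = 0, −β ∂ₓ²ψ + α ∂ₓ∂ᵧψ = 0, and ∂ₓ²ψ + ∂ᵧ²ψ = −γ. Then the second derivatives of ψ are everywhere equal to the constants ∂ₓ²ψ = −α²γ/(α²+β²), ∂ₓ∂ᵧψ = −αβγ/(α²+β²), ∂ᵧ²ψ = −β²γ/(α²+β²). If in addition the gradient ∇ψ is bounded on ℝ², then γ = 0 and all second derivatives of ψ vanish identically. -/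
noncomputable section

/-- A bounded real function with constant derivative has zero derivative. -/
lemma aux_bounded_const_deriv {f : ℝ → ℝ} {a C : ℝ}
    (hf : ∀ t, HasDerivAt f a t) (hb : ∀ t, |f t| ≤ C) : a = 0 := by
  by_contra ha
  have hconst : ∀ t : ℝ, f t = f 0 + a * t := by
    intro t
    have hg : ∀ s : ℝ, HasDerivAt (fun s => f s - a * s) 0 s := by
      intro s
      have := (hf s).sub ((hasDerivAt_id s).const_mul a)
      simp only [id, mul_one, sub_self] at this
      exact this
    have hd : Differentiable ℝ (fun s => f s - a * s) := fun s => (hg s).differentiableAt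
    have h0 : ∀ s, deriv (fun s => f s - a * s) s = 0 := fun s => (hg s).deriv
    have := is_const_of_deriv_eq_zero hd h0 t 0
    simp at this
    linarith
  have hC0 : 0 ≤ C := le_trans (abs_nonneg _) (hb 0)
  set t := (2 * C + 1) / |a| with ht
  have hat : |a| * t = 2 * C + 1 := by
    rw [ht]
    field_simp [abs_ne_zero.mpr ha]
  have h1 : |a * t| ≤ 2 * C := by
    have : a * t = f t - f 0 := by rw [hconst t]; ring
    rw [this]
    calc |f t - f 0| ≤ |f t| + |f 0| := abs_sub _ _
      _ ≤ C + C := add_le_add (hb t) (hb 0)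
      _ = 2 * C := by ring
  rw [abs_mul] at h1
  have htpos : 0 < t := by positivity
  rw [abs_of_pos htpos] at h1
  linarith [hat ▸ h1]

/-- Partial derivative in the first-coordinate direction of a function on `ℝ × ℝ`. -/
def pdx2 (f : ℝ × ℝ → ℝ) (q : ℝ × ℝ) : ℝ := fderiv ℝ f q (1, 0)

/-- Partial derivative in the second-coordinate direction of a function on `ℝ × ℝ`. -/
def pdy2 (f : ℝ × ℝ → ℝ) (q : ℝ × ℝ) : ℝ := fderiv ℝ f q (0, 1)

/-- **The reduced stream function system.** If `ψ ∈ C²(ℝ²)` satisfies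
`β ψ_{xy} - α ψ_{yy} = 0`, `-β ψ_{xx} + α ψ_{xy} = 0`, and `Δψ = -γ` with
`(α, β) ≠ (0,0)`, then all second derivatives of `ψ` are the indicated constants;
moreover, if `∇ψ` is bounded on `ℝ²`, then `γ = 0` and all second derivatives of `ψ`
vanish identically. -/
theorem reduced_stream_function
    (α β γ : ℝ) (hαβ : (α, β) ≠ ((0 : ℝ), (0 : ℝ)))
    (ψ : ℝ × ℝ → ℝ) (hψ : ContDiff ℝ 2 ψ)
    (h1 : ∀ q : ℝ × ℝ, β * pdy2 (pdx2 ψ) q - α * pdy2 (pdy2 ψ) q = 0)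
    (h2 : ∀ q : ℝ × ℝ, -β * pdx2 (pdx2 ψ) q + α * pdy2 (pdx2 ψ) q = 0)
    (h3 : ∀ q : ℝ × ℝ, pdx2 (pdx2 ψ) q + pdy2 (pdy2 ψ) q = -γ) :
    (∀ q : ℝ × ℝ,
      pdx2 (pdx2 ψ) q = -(α ^ 2 * γ) / (α ^ 2 + β ^ 2) ∧
      pdy2 (pdx2 ψ) q = -(α * β * γ) / (α ^ 2 + β ^ 2) ∧
      pdy2 (pdy2 ψ) q = -(β ^ 2 * γ) / (α ^ 2 + β ^ 2)) ∧
    ((∃ C : ℝ, ∀ q : ℝ × ℝ, ‖fderiv ℝ ψ q‖ ≤ C) →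
      γ = 0 ∧ ∀ q : ℝ × ℝ,
        pdx2 (pdx2 ψ) q = 0 ∧ pdy2 (pdx2 ψ) q = 0 ∧ pdy2 (pdy2 ψ) q = 0) := by
  have hs : (0:ℝ) < α ^ 2 + β ^ 2 := by
    have hor : α ≠ 0 ∨ β ≠ 0 := by
      by_contra h
      push_neg at h
      exact hαβ (by simp [h.1, h.2])
    rcases hor with h | h
    · positivity
    · positivity
  have hs' : (α ^ 2 + β ^ 2) ≠ 0 := ne_of_gt hs
  -- the algebraic part
  have key : ∀ q : ℝ × ℝ,
      pdx2 (pdx2 ψ) q = -(α ^ 2 * γ) / (α ^ 2 + β ^ 2) ∧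
      pdy2 (pdx2 ψ) q = -(α * β * γ) / (α ^ 2 + β ^ 2) ∧
      pdy2 (pdy2 ψ) q = -(β ^ 2 * γ) / (α ^ 2 + β ^ 2) := by
    intro q
    have e1 := h1 q
    have e2 := h2 q
    have e3 := h3 q
    refine ⟨?_, ?_, ?_⟩
    · rw [eq_div_iff hs']
      linear_combination (α ^ 2) * e3 + α * e1 - β * e2
    · rw [eq_div_iff hs']
      linear_combination (α * β) * e3 + β * e1 + α * e2
    · rw [eq_div_iff hs']
      linear_combination (β ^ 2) * e3 - α * e1 + β * e2
  refine ⟨key, ?_⟩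
  rintro ⟨C, hC⟩
  -- differentiability of the first partials
  have hf1 : ContDiff ℝ 1 (fderiv ℝ ψ) := hψ.fderiv_right (by norm_num)
  have hdf : Differentiable ℝ (fderiv ℝ ψ) := hf1.differentiable (by norm_num)
  have hdx : Differentiable ℝ (pdx2 ψ) := by
    unfold pdx2
    exact hdf.clm_apply (differentiable_const _)
  have hdy : Differentiable ℝ (pdy2 ψ) := by
    unfold pdy2
    exact hdf.clm_apply (differentiable_const _)
  have hnx : ‖((1:ℝ), (0:ℝ))‖ = 1 := by simp [Prod.norm_def]
  have hny : ‖((0:ℝ), (1:ℝ))‖ = 1 := by simp [Prod.norm_def]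
  -- ψ_xx = 0 via bounded gradient along horizontal lines
  have ha : -(α ^ 2 * γ) / (α ^ 2 + β ^ 2) = 0 := by
    apply aux_bounded_const_deriv (f := fun t : ℝ => pdx2 ψ (t, 0)) (C := C)
    · intro t
      have hline : HasDerivAt (fun t : ℝ => ((t, (0:ℝ)) : ℝ × ℝ)) (1, 0) t :=
        (hasDerivAt_id t).prodMk (hasDerivAt_const t 0)
      have := ((hdx (t, 0)).hasFDerivAt).comp_hasDerivAt t hline
      have heq : fderiv ℝ (pdx2 ψ) (t, 0) (1, 0) = -(α ^ 2 * γ) / (α ^ 2 + β ^ 2) :=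
        (key (t, 0)).1
      rw [heq] at this
      exact this
    · intro t
      calc |pdx2 ψ (t, 0)| = ‖fderiv ℝ ψ (t, 0) (1, 0)‖ := rfl
        _ ≤ ‖fderiv ℝ ψ (t, 0)‖ * ‖((1:ℝ), (0:ℝ))‖ := (fderiv ℝ ψ (t, 0)).le_opNorm _
        _ ≤ C * 1 := by rw [hnx]; exact mul_le_mul_of_nonneg_right (hC _) zero_le_one
        _ = C := mul_one C
  -- ψ_yy = 0 via bounded gradient along vertical lines
  have hc : -(β ^ 2 * γ) / (α ^ 2 + β ^ 2) = 0 := by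
    apply aux_bounded_const_deriv (f := fun t : ℝ => pdy2 ψ (0, t)) (C := C)
    · intro t
      have hline : HasDerivAt (fun t : ℝ => (((0:ℝ), t) : ℝ × ℝ)) (0, 1) t :=
        (hasDerivAt_const t (0:ℝ)).prodMk (hasDerivAt_id t)
      have := ((hdy (0, t)).hasFDerivAt).comp_hasDerivAt t hline
      have heq : fderiv ℝ (pdy2 ψ) (0, t) (0, 1) = -(β ^ 2 * γ) / (α ^ 2 + β ^ 2) :=
        (key (0, t)).2.2
      rw [heq] at this
      exact this
    · intro t
      calc |pdy2 ψ (0, t)| = ‖fderiv ℝ ψ (0, t) (0, 1)‖ := rfl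
        _ ≤ ‖fderiv ℝ ψ (0, t)‖ * ‖((0:ℝ), (1:ℝ))‖ := (fderiv ℝ ψ (0, t)).le_opNorm _
        _ ≤ C * 1 := by rw [hny]; exact mul_le_mul_of_nonneg_right (hC _) zero_le_one
        _ = C := mul_one C
  have hγ : γ = 0 := by
    have := h3 (0, 0)
    rw [(key (0, 0)).1, (key (0, 0)).2.2, ha, hc] at this
    linarith
  refine ⟨hγ, fun q => ?_⟩
  obtain ⟨k1, k2, k3⟩ := key q
  subst hγ
  simp at k1 k2 k3
  exact ⟨k1, k2, k3⟩
end
end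

section
/- Let h > 0 and c > −h, and let w : ℝ × [−h, c) → ℝ be continuously differentiable on ℝ × [−h, c) and harmonic in the open strip ℝ × (−h, c) (coordinates (x,z)). If w(x, −h) = 0 and ∂_z w(x, −h) = 0 for every x ∈ ℝ, then w ≡ 0 on ℝ × [−h, c). -/
noncomputable section

open Complex Set intervalIntegral

namespace CDB

variable {c h : ℝ} {F : ℂ → ℂ}

lemma intV (hF : ContinuousOn F {z : ℂ | z.im < c}) {x y₁ y₂ : ℝ} (h₁ : y₁ < c) (h₂ : y₂ < c) :
    IntervalIntegrable (fun t : ℝ => F (x + t * I)) MeasureTheory.volume y₁ y₂ := by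
  apply ContinuousOn.intervalIntegrable
  apply hF.comp (by fun_prop : Continuous fun t : ℝ => (x : ℂ) + t * I).continuousOn
  intro t ht
  simp only [mem_setOf_eq, add_im, ofReal_im, mul_im, I_im, ofReal_re, one_mul, I_re, mul_zero,
    add_zero, zero_add, mul_one]
  exact lt_of_le_of_lt ht.2 (max_lt h₁ h₂)

lemma intH (hF : ContinuousOn F {z : ℂ | z.im < c}) {y x₁ x₂ : ℝ} (h : y < c) :
    IntervalIntegrable (fun t : ℝ => F (t + y * I)) MeasureTheory.volume x₁ x₂ := by
  apply ContinuousOn.intervalIntegrable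
  apply hF.comp (by fun_prop : Continuous fun t : ℝ => (t : ℂ) + y * I).continuousOn
  intro t _
  simp only [mem_setOf_eq, add_im, ofReal_im, mul_im, I_im, ofReal_re, one_mul, I_re, mul_zero,
    add_zero, zero_add, mul_one, h]

lemma abs_sub_le_of_mem_uIoc {a b t : ℝ} (ht : t ∈ Set.uIoc a b) : |t - a| ≤ |b - a| := by
  obtain ⟨h1, h2⟩ := ht
  rcases le_total a b with hab | hab
  · rw [min_eq_left hab] at h1; rw [max_eq_right hab] at h2
    rw [_root_.abs_of_nonneg (by linarith : (0:ℝ) ≤ t - a),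
      _root_.abs_of_nonneg (by linarith : (0:ℝ) ≤ b - a)]
    linarith
  · rw [min_eq_right hab] at h1; rw [max_eq_left hab] at h2
    rw [_root_.abs_of_nonpos (by linarith : t - a ≤ 0),
      _root_.abs_of_nonpos (by linarith : b - a ≤ 0)]
    linarith

lemma differentiableOn_of_rect (hF : ContinuousOn F {z : ℂ | z.im < c})
    (hrect : ∀ x₁ x₂ y₁ y₂ : ℝ, y₁ < c → y₂ < c →
      (∫ t : ℝ in x₁..x₂, F (t + y₁ * I)) - (∫ t : ℝ in x₁..x₂, F (t + y₂ * I)) +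
        I • (∫ t : ℝ in y₁..y₂, F (x₂ + t * I)) - I • ∫ t : ℝ in y₁..y₂, F (x₁ + t * I) = 0) :
    DifferentiableOn ℂ F {z : ℂ | z.im < c} := by
  have hVo : IsOpen {z : ℂ | z.im < c} := isOpen_lt Complex.continuous_im continuous_const
  set y₀ : ℝ := c - 1 with hy₀
  have hy₀c : y₀ < c := by simp [hy₀]
  set G : ℂ → ℂ := fun z =>
    (∫ t : ℝ in (0:ℝ)..z.re, F (t + y₀ * I)) + I • ∫ t : ℝ in y₀..z.im, F (z.re + t * I) with hG
  have key : ∀ z ∈ {z : ℂ | z.im < c}, HasDerivAt G (F z) z := by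
    intro z hz
    have hzc : z.im < c := hz
    rw [hasDerivAt_iff_isLittleO, Asymptotics.isLittleO_iff]
    intro ε hε
    obtain ⟨δ, hδpos, hδ⟩ := Metric.continuousAt_iff.mp (hF.continuousAt (hVo.mem_nhds hz))
      (ε/2) (half_pos hε)
    filter_upwards [Metric.ball_mem_nhds z (half_pos hδpos), hVo.mem_nhds hz] with u hu huV
    have huc : u.im < c := huV
    have hdist : ‖u - z‖ < δ/2 := by rwa [Metric.mem_ball, dist_eq_norm] at hu
    -- increment identity
    have hinc : G u - G z = (∫ t : ℝ in z.re..u.re, F (t + z.im * I)) +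
        I • ∫ t : ℝ in z.im..u.im, F (u.re + t * I) := by
      have hr := hrect z.re u.re y₀ z.im hy₀c hzc
      have add1 : (∫ t : ℝ in y₀..z.im, F (u.re + t * I)) +
          ∫ t : ℝ in z.im..u.im, F (u.re + t * I) = ∫ t : ℝ in y₀..u.im, F (u.re + t * I) :=
        integral_add_adjacent_intervals (intV hF hy₀c hzc) (intV hF hzc huc)
      have add2 : (∫ t : ℝ in (0:ℝ)..z.re, F (t + y₀ * I)) +
          ∫ t : ℝ in z.re..u.re, F (t + y₀ * I) = ∫ t : ℝ in (0:ℝ)..u.re, F (t + y₀ * I) :=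
        integral_add_adjacent_intervals (intH hF hy₀c) (intH hF hy₀c)
      simp only [hG, smul_eq_mul] at hr ⊢
      linear_combination hr - I * add1 - add2
    -- the difference quotient estimate
    have hsub : G u - G z - (u - z) • F z =
        (∫ t : ℝ in z.re..u.re, (F (t + z.im * I) - F z)) +
          I • ∫ t : ℝ in z.im..u.im, (F (u.re + t * I) - F z) := by
      rw [intervalIntegral.integral_sub (intH hF hzc) intervalIntegrable_const,
        intervalIntegral.integral_sub (intV hF hzc huc) intervalIntegrable_const,
        intervalIntegral.integral_const, intervalIntegral.integral_const, hinc]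
      have huz : u - z = ((u.re - z.re : ℝ) : ℂ) + ((u.im - z.im : ℝ) : ℂ) * I := by
        simp [Complex.ext_iff]
      rw [huz]
      simp only [smul_eq_mul, real_smul, ofReal_sub]
      ring
    rw [hsub]
    have hb1 : ‖∫ t : ℝ in z.re..u.re, (F (t + z.im * I) - F z)‖ ≤ (ε/2) * ‖u - z‖ := by
      have : ∀ t ∈ Set.uIoc z.re u.re, ‖F (t + z.im * I) - F z‖ ≤ ε/2 := by
        intro t ht
        have h1 : |t - z.re| ≤ |u.re - z.re| := abs_sub_le_of_mem_uIoc ht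
        have hd : dist ((t : ℂ) + z.im * I) z < δ := by
          rw [dist_eq_norm]
          have : (t : ℂ) + z.im * I - z = ((t - z.re : ℝ) : ℂ) := by simp [Complex.ext_iff]
          rw [this, Complex.norm_real]
          calc |t - z.re| ≤ |u.re - z.re| := h1
            _ = |(u - z).re| := by simp
            _ ≤ ‖u - z‖ := Complex.abs_re_le_norm _
            _ < δ := by linarith [hdist, hδpos]
        exact le_of_lt (by simpa [dist_eq_norm] using hδ hd)
      calc ‖∫ t : ℝ in z.re..u.re, (F (t + z.im * I) - F z)‖ ≤ (ε/2) * |u.re - z.re| :=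
            intervalIntegral.norm_integral_le_of_norm_le_const this
        _ ≤ (ε/2) * ‖u - z‖ := by
            apply mul_le_mul_of_nonneg_left _ (le_of_lt (half_pos hε))
            calc |u.re - z.re| = |(u - z).re| := by simp
              _ ≤ ‖u - z‖ := Complex.abs_re_le_norm _
    have hb2 : ‖I • ∫ t : ℝ in z.im..u.im, (F (u.re + t * I) - F z)‖ ≤ (ε/2) * ‖u - z‖ := by
      rw [norm_smul, Complex.norm_I, one_mul]
      have : ∀ t ∈ Set.uIoc z.im u.im, ‖F (u.re + t * I) - F z‖ ≤ ε/2 := by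
        intro t ht
        have h1 : |t - z.im| ≤ |u.im - z.im| := abs_sub_le_of_mem_uIoc ht
        have hd : dist ((u.re : ℂ) + t * I) z < δ := by
          rw [dist_eq_norm]
          have he : (u.re : ℂ) + t * I - z = ((u.re - z.re : ℝ) : ℂ) + ((t - z.im : ℝ) : ℂ) * I := by
            simp [Complex.ext_iff]
          rw [he]
          calc ‖((u.re - z.re : ℝ) : ℂ) + ((t - z.im : ℝ) : ℂ) * I‖
              ≤ ‖((u.re - z.re : ℝ) : ℂ)‖ + ‖((t - z.im : ℝ) : ℂ) * I‖ := norm_add_le _ _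
            _ = |u.re - z.re| + |t - z.im| := by
                simp [← Complex.ofReal_sub, map_mul, Complex.norm_I, Complex.norm_real]
            _ ≤ ‖u - z‖ + ‖u - z‖ := by
                gcongr
                · calc |u.re - z.re| = |(u - z).re| := by simp
                    _ ≤ ‖u - z‖ := Complex.abs_re_le_norm _
                · calc |t - z.im| ≤ |u.im - z.im| := h1
                    _ = |(u - z).im| := by simp
                    _ ≤ ‖u - z‖ := Complex.abs_im_le_norm _
            _ < δ := by linarith [hdist]
        exact le_of_lt (by simpa [dist_eq_norm] using hδ hd)
      calc ‖∫ t : ℝ in z.im..u.im, (F (u.re + t * I) - F z)‖ ≤ (ε/2) * |u.im - z.im| :=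
            intervalIntegral.norm_integral_le_of_norm_le_const this
        _ ≤ (ε/2) * ‖u - z‖ := by
            apply mul_le_mul_of_nonneg_left _ (le_of_lt (half_pos hε))
            calc |u.im - z.im| = |(u - z).im| := by simp
              _ ≤ ‖u - z‖ := Complex.abs_im_le_norm _
    calc ‖(∫ t : ℝ in z.re..u.re, (F (t + z.im * I) - F z)) +
            I • ∫ t : ℝ in z.im..u.im, (F (u.re + t * I) - F z)‖
        ≤ ‖∫ t : ℝ in z.re..u.re, (F (t + z.im * I) - F z)‖ +
            ‖I • ∫ t : ℝ in z.im..u.im, (F (u.re + t * I) - F z)‖ := norm_add_le _ _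
      _ ≤ (ε/2) * ‖u - z‖ + (ε/2) * ‖u - z‖ := add_le_add hb1 hb2
      _ = ε * ‖u - z‖ := by ring
  -- conclude
  have hGd : DifferentiableOn ℂ G {z : ℂ | z.im < c} :=
    fun z hz => (key z hz).differentiableAt.differentiableWithinAt
  have hGa := hGd.analyticOnNhd hVo
  intro z hz
  have heq : F =ᶠ[nhds z] deriv G := by
    filter_upwards [hVo.mem_nhds hz] with u hu
    exact ((key u hu).deriv).symm
  exact (heq.differentiableAt_iff.mpr ((hGa.deriv z hz).differentiableAt)).differentiableWithinAt

/-- rectangle boundary integral vanishing, one piece -/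
lemma rect_zero (hhc : -h < c) (hF : ContinuousOn F {z : ℂ | z.im < c})
    (hFd : ∀ z : ℂ, -h < z.im → z.im < c → DifferentiableAt ℂ F z)
    (hF0 : ∀ z : ℂ, z.im ≤ -h → F z = 0) :
    ∀ x₁ x₂ y₁ y₂ : ℝ, y₁ < c → y₂ < c →
      (∫ t : ℝ in x₁..x₂, F (t + y₁ * I)) - (∫ t : ℝ in x₁..x₂, F (t + y₂ * I)) +
        I • (∫ t : ℝ in y₁..y₂, F (x₂ + t * I)) - I • ∫ t : ℝ in y₁..y₂, F (x₁ + t * I) = 0 := by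
  -- Case A : both levels ≥ -h
  have caseA : ∀ x₁ x₂ y₁ y₂ : ℝ, y₁ < c → y₂ < c → -h ≤ y₁ → -h ≤ y₂ →
      (∫ t : ℝ in x₁..x₂, F (t + y₁ * I)) - (∫ t : ℝ in x₁..x₂, F (t + y₂ * I)) +
        I • (∫ t : ℝ in y₁..y₂, F (x₂ + t * I)) - I • ∫ t : ℝ in y₁..y₂, F (x₁ + t * I) = 0 := by
    intro x₁ x₂ y₁ y₂ hy₁ hy₂ hb₁ hb₂
    have key := Complex.integral_boundary_rect_eq_zero_of_continuousOn_of_differentiableOn F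
      (x₁ + y₁ * I) (x₂ + y₂ * I) ?_ ?_
    · simpa using key
    · apply hF.mono
      intro z hz
      rw [Complex.mem_reProdIm] at hz
      have := hz.2
      simp only [add_im, ofReal_im, mul_im, I_im, ofReal_re, one_mul, I_re, mul_zero, add_zero,
        zero_add, mul_one] at this
      exact lt_of_le_of_lt this.2 (by simpa using max_lt hy₁ hy₂)
    · intro z hz
      rw [Complex.mem_reProdIm] at hz
      have h2 := hz.2
      simp only [add_im, ofReal_im, mul_im, I_im, ofReal_re, one_mul, I_re, mul_zero, add_zero,
        zero_add, mul_one, mem_Ioo] at h2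
      exact (hFd z (lt_of_le_of_lt (le_min hb₁ hb₂) h2.1)
        (lt_of_lt_of_le h2.2 (max_le hy₁.le hy₂.le))).differentiableWithinAt
  -- Case B : both levels ≤ -h : everything vanishes
  have caseB : ∀ x₁ x₂ y₁ y₂ : ℝ, y₁ ≤ -h → y₂ ≤ -h →
      (∫ t : ℝ in x₁..x₂, F (t + y₁ * I)) - (∫ t : ℝ in x₁..x₂, F (t + y₂ * I)) +
        I • (∫ t : ℝ in y₁..y₂, F (x₂ + t * I)) - I • ∫ t : ℝ in y₁..y₂, F (x₁ + t * I) = 0 := by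
    intro x₁ x₂ y₁ y₂ hb₁ hb₂
    have e1 : ∀ y : ℝ, y ≤ -h → ∀ x₁ x₂ : ℝ, (∫ t : ℝ in x₁..x₂, F (t + y * I)) = 0 := by
      intro y hy x₁ x₂
      have : ∀ t : ℝ, F (t + y * I) = 0 := fun t => hF0 _ (by
        simp only [add_im, ofReal_im, mul_im, I_im, ofReal_re, one_mul, I_re, mul_zero, add_zero,
          zero_add, mul_one]
        exact hy)
      simp [this]
    have e2 : ∀ x : ℝ, (∫ t : ℝ in y₁..y₂, F (x + t * I)) = 0 := by
      intro x
      rw [intervalIntegral.integral_congr (g := fun _ => (0:ℂ)) ?_, intervalIntegral.integral_zero]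
      intro t ht
      refine hF0 _ ?_
      simp only [add_im, ofReal_im, mul_im, I_im, ofReal_re, one_mul, I_re, mul_zero, add_zero,
        zero_add, mul_one]
      exact le_trans ht.2 (max_le hb₁ hb₂)
    rw [e1 y₁ hb₁, e1 y₂ hb₂, e2, e2]
    simp
  intro x₁ x₂ y₁ y₂ hy₁ hy₂
  have hhc' : -h < c := hhc
  rcases le_total y₁ (-h) with hb₁ | hb₁ <;> rcases le_total y₂ (-h) with hb₂ | hb₂
  · exact caseB x₁ x₂ y₁ y₂ hb₁ hb₂
  · -- y₁ ≤ -h ≤ y₂ : split at -h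
    have eq1 := caseB x₁ x₂ y₁ (-h) hb₁ le_rfl
    have eq2 := caseA x₁ x₂ (-h) y₂ hhc' hy₂ le_rfl hb₂
    have aX2 : (∫ t : ℝ in y₁..(-h), F (x₂ + t * I)) + ∫ t : ℝ in (-h)..y₂, F (x₂ + t * I)
        = ∫ t : ℝ in y₁..y₂, F (x₂ + t * I) :=
      integral_add_adjacent_intervals (intV hF hy₁ hhc') (intV hF hhc' hy₂)
    have aX1 : (∫ t : ℝ in y₁..(-h), F (x₁ + t * I)) + ∫ t : ℝ in (-h)..y₂, F (x₁ + t * I)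
        = ∫ t : ℝ in y₁..y₂, F (x₁ + t * I) :=
      integral_add_adjacent_intervals (intV hF hy₁ hhc') (intV hF hhc' hy₂)
    simp only [smul_eq_mul] at eq1 eq2 ⊢
    linear_combination eq1 + eq2 - I * aX2 + I * aX1
  · -- y₂ ≤ -h ≤ y₁
    have eq1 := caseA x₁ x₂ y₁ (-h) hy₁ hhc' hb₁ le_rfl
    have eq2 := caseB x₁ x₂ (-h) y₂ le_rfl hb₂
    have aX2 : (∫ t : ℝ in y₁..(-h), F (x₂ + t * I)) + ∫ t : ℝ in (-h)..y₂, F (x₂ + t * I)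
        = ∫ t : ℝ in y₁..y₂, F (x₂ + t * I) :=
      integral_add_adjacent_intervals (intV hF hy₁ hhc') (intV hF hhc' hy₂)
    have aX1 : (∫ t : ℝ in y₁..(-h), F (x₁ + t * I)) + ∫ t : ℝ in (-h)..y₂, F (x₁ + t * I)
        = ∫ t : ℝ in y₁..y₂, F (x₁ + t * I) :=
      integral_add_adjacent_intervals (intV hF hy₁ hhc') (intV hF hhc' hy₂)
    simp only [smul_eq_mul] at eq1 eq2 ⊢
    linear_combination eq1 + eq2 - I * aX2 + I * aX1
  · exact caseA x₁ x₂ y₁ y₂ hy₁ hy₂ hb₁ hb₂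


end CDB

/-- **Cauchy data on the bed.** Let `w` be `C¹` on the half-open strip
`ℝ × [-h, c)` and harmonic in its interior. If `w` and its normal derivative `∂_z w`
both vanish on the bottom line `{z = -h}`, then `w ≡ 0` on `ℝ × [-h, c)`. -/
theorem harmonic_cauchy_data_on_bed
    (h c : ℝ) (hh : 0 < h) (hc : -h < c)
    (w : ℝ × ℝ → ℝ)
    (hw_C1 : ContDiffOn ℝ 1 w {q : ℝ × ℝ | -h ≤ q.2 ∧ q.2 < c})
    (hw_C2 : ContDiffOn ℝ 2 w {q : ℝ × ℝ | -h < q.2 ∧ q.2 < c})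
    (hw_harm : ∀ q ∈ {q : ℝ × ℝ | -h < q.2 ∧ q.2 < c},
      pdx2 (pdx2 w) q + pdy2 (pdy2 w) q = 0)
    (hw_bed : ∀ x : ℝ, w (x, -h) = 0)
    (hw_bed' : ∀ x : ℝ,
      fderivWithin ℝ w {q : ℝ × ℝ | -h ≤ q.2 ∧ q.2 < c} (x, -h) (0, 1) = 0) :
    ∀ q ∈ {q : ℝ × ℝ | -h ≤ q.2 ∧ q.2 < c}, w q = 0 := by
  set S : Set (ℝ × ℝ) := {q : ℝ × ℝ | -h ≤ q.2 ∧ q.2 < c} with hSdef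
  set O : Set (ℝ × ℝ) := {q : ℝ × ℝ | -h < q.2 ∧ q.2 < c} with hOdef
  have hO : IsOpen O := by
    have : O = Prod.snd ⁻¹' (Set.Ioo (-h) c) := by ext r; simp [hOdef, Set.mem_Ioo]
    rw [this]; exact isOpen_Ioo.preimage continuous_snd
  have hOS : O ⊆ S := fun r hr => ⟨hr.1.le, hr.2⟩
  have hSnhds : ∀ r ∈ O, S ∈ nhds r := fun r hr =>
    Filter.mem_of_superset (hO.mem_nhds hr) hOS
  have hSconv : Convex ℝ S := by
    have : S = (LinearMap.snd ℝ ℝ ℝ) ⁻¹' (Set.Ico (-h) c) := by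
      ext r; simp [hSdef, Set.mem_Ico]
    rw [this]; exact (convex_Ico _ _).linear_preimage _
  have hmid : ((0 : ℝ), (-h + c)/2) ∈ O := by
    constructor <;> simp only [hOdef, Set.mem_setOf_eq] <;> linarith
  have hSuniq : UniqueDiffOn ℝ S := uniqueDiffOn_convex hSconv
    ⟨_, (hO.subset_interior_iff.mpr hOS) hmid⟩
  set gW : ℝ × ℝ → (ℝ × ℝ) →L[ℝ] ℝ := fderivWithin ℝ w S with hgWdef
  -- the tangential derivative vanishes on the bed
  have hbed1 : ∀ x : ℝ, gW (x, -h) ((1:ℝ), (0:ℝ)) = 0 := by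
    intro x
    have hmem : ((x, -h) : ℝ × ℝ) ∈ S := ⟨le_rfl, hc⟩
    have hfd : HasFDerivWithinAt w (gW (x, -h)) S (x, -h) :=
      ((hw_C1.differentiableOn one_ne_zero) _ hmem).hasFDerivWithinAt
    have hγ : HasDerivAt (fun t : ℝ => ((t, -h) : ℝ × ℝ)) (1, 0) x :=
      (hasDerivAt_id x).prodMk (hasDerivAt_const x (-h))
    have hcomp : HasDerivWithinAt (fun t : ℝ => w (t, -h)) (gW (x, -h) (1, 0)) Set.univ x :=
      hfd.comp_hasDerivWithinAt x hγ.hasDerivWithinAt (fun t _ => (⟨le_rfl, hc⟩ : ((t, -h) : ℝ × ℝ) ∈ S))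
    rw [hasDerivWithinAt_univ] at hcomp
    have hzero : (fun t : ℝ => w (t, -h)) = fun _ : ℝ => (0:ℝ) := funext fun t => hw_bed t
    rw [hzero] at hcomp
    exact hcomp.unique (hasDerivAt_const x 0)
  have hbed2 : ∀ x : ℝ, gW (x, -h) ((0:ℝ), (1:ℝ)) = 0 := hw_bed'
  -- the extended function F
  set F : ℂ → ℂ := fun ζ =>
    if -h ≤ ζ.im then ((gW (ζ.re, ζ.im)) (1, 0) : ℂ) - I * ((gW (ζ.re, ζ.im)) (0, 1)) else 0
    with hFdef
  have hFzero : ∀ ζ : ℂ, ζ.im ≤ -h → F ζ = 0 := by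
    intro ζ hζ
    rcases eq_or_lt_of_le hζ with heq | hlt
    · have : ((ζ.re, ζ.im) : ℝ × ℝ) = (ζ.re, -h) := by rw [heq]
      simp only [hFdef, if_pos (le_of_eq heq.symm), this, hbed1, hbed2]
      simp
    · simp only [hFdef, if_neg (not_le.mpr hlt)]
  set SC : Set ℂ := {ζ : ℂ | -h ≤ ζ.im ∧ ζ.im < c} with hSCdef
  set Φ : ℂ → ℂ := fun ζ =>
    ((gW (ζ.re, ζ.im)) (1, 0) : ℂ) - I * ((gW (ζ.re, ζ.im)) (0, 1)) with hΦdef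
  have hπc : Continuous fun ζ : ℂ => ((ζ.re, ζ.im) : ℝ × ℝ) :=
    Complex.continuous_re.prodMk Complex.continuous_im
  have hgWc : ContinuousOn gW S := hw_C1.continuousOn_fderivWithin hSuniq le_rfl
  have hΦcont : ContinuousOn Φ SC := by
    have h1 : ContinuousOn (fun ζ : ℂ => gW (ζ.re, ζ.im)) SC :=
      hgWc.comp hπc.continuousOn (fun ζ hζ => ⟨hζ.1, hζ.2⟩)
    have h2 : ContinuousOn (fun ζ : ℂ => gW (ζ.re, ζ.im) ((1:ℝ), (0:ℝ))) SC :=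
      h1.clm_apply continuousOn_const
    have h3 : ContinuousOn (fun ζ : ℂ => gW (ζ.re, ζ.im) ((0:ℝ), (1:ℝ))) SC :=
      h1.clm_apply continuousOn_const
    exact (Complex.continuous_ofReal.comp_continuousOn h2).sub
      (continuousOn_const.mul (Complex.continuous_ofReal.comp_continuousOn h3))
  have hO' : IsOpen {ξ : ℂ | -h < ξ.im ∧ ξ.im < c} :=
    (isOpen_lt continuous_const Complex.continuous_im).inter
      (isOpen_lt Complex.continuous_im continuous_const)
  have hFcont : ContinuousOn F {ζ : ℂ | ζ.im < c} := by
    intro ζ hζ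
    rcases lt_trichotomy ζ.im (-h) with hlt | heq | hgt
    · apply ContinuousAt.continuousWithinAt
      have hmem : {ξ : ℂ | ξ.im < -h} ∈ nhds ζ :=
        (isOpen_lt Complex.continuous_im continuous_const).mem_nhds hlt
      have hev : F =ᶠ[nhds ζ] fun _ => (0:ℂ) :=
        Filter.eventuallyEq_of_mem hmem (fun ξ hξ => hFzero ξ (le_of_lt hξ))
      exact ContinuousAt.congr continuousAt_const hev.symm
    · have hsub : {ζ : ℂ | ζ.im < c} ⊆ SC ∪ {ξ : ℂ | ξ.im ≤ -h} := by
        intro ξ hξ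
        rcases le_total (-h) ξ.im with h1 | h1
        · exact Or.inl ⟨h1, hξ⟩
        · exact Or.inr h1
      apply ContinuousWithinAt.mono _ hsub
      apply ContinuousWithinAt.union
      · have h0 : ContinuousWithinAt Φ SC ζ := hΦcont ζ ⟨le_of_eq heq.symm, hζ⟩
        exact h0.congr (fun ξ hξ => if_pos hξ.1) (if_pos (le_of_eq heq.symm))
      · exact continuousWithinAt_const.congr (fun ξ hξ => hFzero ξ hξ)
          (hFzero ζ (le_of_eq heq))
    · apply ContinuousAt.continuousWithinAt
      have hmem : {ξ : ℂ | -h < ξ.im ∧ ξ.im < c} ∈ nhds ζ := hO'.mem_nhds ⟨hgt, hζ⟩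
      have hev : F =ᶠ[nhds ζ] Φ :=
        Filter.eventuallyEq_of_mem hmem (fun ξ hξ => if_pos hξ.1.le)
      apply ContinuousAt.congr _ hev.symm
      apply (hΦcont.continuousAt (Filter.mem_of_superset hmem _))
      exact fun ξ hξ => ⟨hξ.1.le, hξ.2⟩
  -- F is complex differentiable in the open strip
  have hFdiff : ∀ ζ : ℂ, -h < ζ.im → ζ.im < c → DifferentiableAt ℂ F ζ := by
    intro p hp1 hp2
    have hqO : ((p.re, p.im) : ℝ × ℝ) ∈ O := ⟨hp1, hp2⟩
    have hC2 : ContDiffAt ℝ 2 w (p.re, p.im) := hw_C2.contDiffAt (hO.mem_nhds hqO)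
    have hD2' : ContDiffAt ℝ 1 (fderiv ℝ w) (p.re, p.im) := hC2.fderiv_right (le_refl 2)
    have hD2 : DifferentiableAt ℝ (fderiv ℝ w) (p.re, p.im) := hD2'.differentiableAt one_ne_zero
    set D2 := fderiv ℝ (fderiv ℝ w) (p.re, p.im) with hD2def
    have hsym : ∀ a b : ℝ × ℝ, D2 a b = D2 b a := by
      intro a b
      apply second_derivative_symmetric_of_eventually (f := w) ?_ hD2.hasFDerivAt a b
      filter_upwards [hO.mem_nhds hqO] with y hy
      exact ((hw_C2.differentiableOn (by norm_num)).differentiableAt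
        (hO.mem_nhds hy)).hasFDerivAt
    set u : ℝ × ℝ → ℝ := fun r => fderiv ℝ w r (1, 0) with hudef
    set v : ℝ × ℝ → ℝ := fun r => fderiv ℝ w r (0, 1) with hvdef
    set ap1 : ((ℝ × ℝ) →L[ℝ] ℝ) →L[ℝ] ℝ := ContinuousLinearMap.apply ℝ ℝ ((1:ℝ), (0:ℝ))
      with hap1
    set ap2 : ((ℝ × ℝ) →L[ℝ] ℝ) →L[ℝ] ℝ := ContinuousLinearMap.apply ℝ ℝ ((0:ℝ), (1:ℝ))
      with hap2
    have hu : HasFDerivAt u (ap1.comp D2) (p.re, p.im) :=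
      ap1.hasFDerivAt.comp _ hD2.hasFDerivAt
    have hv : HasFDerivAt v (ap2.comp D2) (p.re, p.im) :=
      ap2.hasFDerivAt.comp _ hD2.hasFDerivAt
    have hlap : D2 (1, 0) (1, 0) + D2 (0, 1) (0, 1) = 0 := by
      have hharm := hw_harm (p.re, p.im) hqO
      have e1 : pdx2 w = u := rfl
      have e2 : pdy2 w = v := rfl
      rw [e1, e2] at hharm
      simp only [pdx2, pdy2] at hharm
      rw [hu.fderiv, hv.fderiv] at hharm
      simpa [hap1, hap2, ContinuousLinearMap.comp_apply, ContinuousLinearMap.apply_apply]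
        using hharm
    set Ψ : ℂ → ℂ := fun ζ => (u (ζ.re, ζ.im) : ℂ) - I * (v (ζ.re, ζ.im) : ℂ) with hΨdef
    have hFΨ : F =ᶠ[nhds p] Ψ := by
      filter_upwards [hO'.mem_nhds ⟨hp1, hp2⟩] with ξ hξ
      simp only [hFdef, if_pos hξ.1.le]
      rw [hgWdef, fderivWithin_of_mem_nhds (hSnhds _ ⟨hξ.1, hξ.2⟩)]
    set πL : ℂ →L[ℝ] ℝ × ℝ := Complex.reCLM.prod Complex.imCLM with hπL
    have hπ : HasFDerivAt (fun ζ : ℂ => ((ζ.re, ζ.im) : ℝ × ℝ)) πL p :=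
      Complex.reCLM.hasFDerivAt.prodMk Complex.imCLM.hasFDerivAt
    have huPi : HasFDerivAt (fun ζ : ℂ => u (ζ.re, ζ.im)) ((ap1.comp D2).comp πL) p :=
      by have := HasFDerivAt.comp p hu hπ; exact this
    have hvPi : HasFDerivAt (fun ζ : ℂ => v (ζ.re, ζ.im)) ((ap2.comp D2).comp πL) p :=
      by have := HasFDerivAt.comp p hv hπ; exact this
    set L : ℂ →L[ℝ] ℂ := Complex.ofRealCLM.comp ((ap1.comp D2).comp πL) -
      I • (Complex.ofRealCLM.comp ((ap2.comp D2).comp πL)) with hLdef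
    have hΨr : HasFDerivAt Ψ L p := by
      have h1 : HasFDerivAt (fun ζ : ℂ => (u (ζ.re, ζ.im) : ℂ))
          (Complex.ofRealCLM.comp ((ap1.comp D2).comp πL)) p :=
        Complex.ofRealCLM.hasFDerivAt.comp p huPi
      have h2 : HasFDerivAt (fun ζ : ℂ => (v (ζ.re, ζ.im) : ℂ))
          (Complex.ofRealCLM.comp ((ap2.comp D2).comp πL)) p :=
        Complex.ofRealCLM.hasFDerivAt.comp p hvPi
      exact h1.sub (h2.const_mul I)
    set d : ℂ := (D2 (1, 0) (1, 0) : ℂ) - I * (D2 (1, 0) (0, 1) : ℂ) with hd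
    have hLe : ∀ e : ℂ, L e = e * d := by
      intro e
      have hvec : ((e.re : ℝ) • ((1:ℝ), (0:ℝ)) + (e.im : ℝ) • ((0:ℝ), (1:ℝ)) : ℝ × ℝ)
          = (e.re, e.im) := by simp
      have hD2e : D2 (e.re, e.im) = e.re • D2 (1, 0) + e.im • D2 (0, 1) := by
        rw [← hvec, map_add, map_smul, map_smul]
      have hγ : D2 (0, 1) (1, 0) = D2 (1, 0) (0, 1) := hsym _ _
      have hδ : D2 (0, 1) (0, 1) = -D2 (1, 0) (1, 0) := by linarith [hlap]
      have hLe' : L e = (D2 (e.re, e.im) (1, 0) : ℂ) - I * (D2 (e.re, e.im) (0, 1) : ℂ) := by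
        simp [hLdef, hπL, hap1, hap2, ContinuousLinearMap.comp_apply,
          ContinuousLinearMap.apply_apply, smul_eq_mul]
      rw [hLe', hD2e]
      simp only [ContinuousLinearMap.add_apply, ContinuousLinearMap.coe_smul',
        Pi.smul_apply, smul_eq_mul, hγ, hδ]
      rw [hd]
      apply Complex.ext <;>
        simp [Complex.add_re, Complex.add_im, Complex.mul_re, Complex.mul_im,
          Complex.sub_re, Complex.sub_im, Complex.I_re, Complex.I_im,
          Complex.ofReal_re, Complex.ofReal_im] <;>
        ring
    have hΨd : HasDerivAt Ψ d p := by
      rw [hasDerivAt_iff_isLittleO]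
      refine hΨr.isLittleO.congr' ?_ Filter.EventuallyEq.rfl
      exact Filter.Eventually.of_forall fun ζ =>
        show Ψ ζ - Ψ p - L (ζ - p) = Ψ ζ - Ψ p - (ζ - p) • d by
          rw [hLe (ζ - p), smul_eq_mul]
    exact (hFΨ.differentiableAt_iff).mpr hΨd.differentiableAt
  -- F vanishes identically on the half plane
  have hVo : IsOpen {ζ : ℂ | ζ.im < c} := isOpen_lt Complex.continuous_im continuous_const
  have hVpre : IsPreconnected {ζ : ℂ | ζ.im < c} := by
    have hconv : Convex ℝ {ζ : ℂ | ζ.im < c} := by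
      have : {ζ : ℂ | ζ.im < c} = Complex.imLm ⁻¹' (Set.Iio c) := rfl
      rw [this]; exact (convex_Iio c).linear_preimage _
    exact hconv.isPreconnected
  have hrect := CDB.rect_zero hc hFcont hFdiff hFzero
  have hFan := (CDB.differentiableOn_of_rect hFcont hrect).analyticOnNhd hVo
  have hz₀mem : (((-h - 1 : ℝ) : ℂ) * I) ∈ {ζ : ℂ | ζ.im < c} := by
    simp only [Set.mem_setOf_eq, Complex.mul_im, Complex.ofReal_re, Complex.I_im,
      Complex.ofReal_im, Complex.I_re, mul_zero, mul_one, add_zero, zero_add]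
    linarith
  have hFzeroV : Set.EqOn F 0 {ζ : ℂ | ζ.im < c} := by
    apply hFan.eqOn_zero_of_preconnected_of_eventuallyEq_zero hVpre hz₀mem
    have hmem : {ξ : ℂ | ξ.im < -h} ∈ nhds (((-h - 1 : ℝ) : ℂ) * I) := by
      apply (isOpen_lt Complex.continuous_im continuous_const).mem_nhds
      simp only [Set.mem_setOf_eq, Complex.mul_im, Complex.ofReal_re, Complex.I_im,
        Complex.ofReal_im, Complex.I_re, mul_zero, mul_one, add_zero, zero_add]
      linarith
    exact Filter.eventuallyEq_of_mem hmem (fun ξ hξ => hFzero ξ (le_of_lt hξ))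
  -- hence the vertical derivative of w vanishes in the open strip
  have hv0 : ∀ r : ℝ × ℝ, r ∈ O → fderiv ℝ w r (0, 1) = 0 := by
    intro r hr
    have hmemV : ((r.1 : ℂ) + (r.2 : ℝ) * I) ∈ {ζ : ℂ | ζ.im < c} := by
      simp only [Set.mem_setOf_eq, Complex.add_im, Complex.ofReal_im, Complex.mul_im,
        Complex.ofReal_re, Complex.I_im, Complex.I_re, mul_zero, mul_one, add_zero, zero_add]
      exact hr.2
    have hF0 := hFzeroV hmemV
    have him : ((r.1 : ℂ) + (r.2 : ℝ) * I).im = r.2 := by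
      simp [Complex.add_im, Complex.mul_im]
    have hre : ((r.1 : ℂ) + (r.2 : ℝ) * I).re = r.1 := by
      simp [Complex.add_re, Complex.mul_re]
    rw [hFdef] at hF0
    simp only [him, hre, Pi.zero_apply] at hF0
    rw [if_pos hr.1.le] at hF0
    have : gW (r.1, r.2) = fderiv ℝ w (r.1, r.2) := by
      rw [hgWdef, fderivWithin_of_mem_nhds (hSnhds _ (by simpa using hr))]
    rw [this] at hF0
    have := congrArg Complex.im hF0
    simp only [Complex.sub_im, Complex.ofReal_im, Complex.mul_im, Complex.I_re, Complex.I_im,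
      Complex.ofReal_re, zero_mul, one_mul, zero_sub, mul_zero, add_zero, zero_add,
      Complex.zero_im, neg_eq_zero] at this
    simpa using this
  -- conclude by integrating vertically
  intro q hq
  obtain ⟨hq1, hq2⟩ := hq
  have hcont_line : ContinuousOn (fun t : ℝ => w (q.1, t)) (Set.Icc (-h) q.2) := by
    apply hw_C1.continuousOn.comp ((Continuous.prodMk continuous_const continuous_id).continuousOn)
    intro t ht
    exact ⟨ht.1, lt_of_le_of_lt ht.2 hq2⟩
  have hder : ∀ t ∈ Set.Ico (-h) q.2, HasDerivWithinAt (fun t : ℝ => w (q.1, t)) 0 (Set.Ici t) t := by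
    intro t ht
    rcases eq_or_lt_of_le ht.1 with heq | hlt
    · -- t = -h : one-sided derivative at the bed
      have hmem : ((q.1, t) : ℝ × ℝ) ∈ S := ⟨heq.le, lt_trans ht.2 hq2⟩
      have hfd : HasFDerivWithinAt w (gW (q.1, t)) S (q.1, t) :=
        ((hw_C1.differentiableOn one_ne_zero) _ hmem).hasFDerivWithinAt
      have hγ : HasDerivWithinAt (fun s : ℝ => ((q.1, s) : ℝ × ℝ)) (0, 1)
          (Set.Ici t ∩ Set.Iio c) t :=
        ((hasDerivAt_const t q.1).prodMk (hasDerivAt_id t)).hasDerivWithinAt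
      have hmaps : Set.MapsTo (fun s : ℝ => ((q.1, s) : ℝ × ℝ)) (Set.Ici t ∩ Set.Iio c) S :=
        fun s hs => ⟨heq.le.trans hs.1, hs.2⟩
      have hcomp : HasDerivWithinAt (fun s : ℝ => w (q.1, s)) (gW (q.1, t) (0, 1))
          (Set.Ici t ∩ Set.Iio c) t :=
        hfd.comp_hasDerivWithinAt t hγ hmaps
      have hgt : gW (q.1, t) (0, 1) = 0 := by rw [← heq]; exact hbed2 q.1
      rw [hgt] at hcomp
      apply hcomp.mono_of_mem_nhdsWithin
      apply Filter.inter_mem self_mem_nhdsWithin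
      exact mem_nhdsWithin_of_mem_nhds (Iio_mem_nhds (lt_trans ht.2 hq2))
    · -- interior point
      have hrO : ((q.1, t) : ℝ × ℝ) ∈ O := ⟨hlt, lt_trans ht.2 hq2⟩
      have hdA : DifferentiableAt ℝ w (q.1, t) :=
        ((hw_C1.differentiableOn one_ne_zero) _ (hOS hrO)).differentiableAt (hSnhds _ hrO)
      have hγ : HasDerivAt (fun s : ℝ => ((q.1, s) : ℝ × ℝ)) (0, 1) t :=
        (hasDerivAt_const t q.1).prodMk (hasDerivAt_id t)
      have hcomp : HasDerivAt (fun s : ℝ => w (q.1, s)) (fderiv ℝ w (q.1, t) (0, 1)) t :=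
        hdA.hasFDerivAt.comp_hasDerivAt t hγ
      rw [hv0 _ hrO] at hcomp
      exact hcomp.hasDerivWithinAt
  have := constant_of_has_deriv_right_zero hcont_line hder q.2 ⟨hq1, le_rfl⟩
  rw [hw_bed q.1] at this
  simpa using this
end
end

section
/- Let h₁, h₂ > 0 and let w : ℝ × [−h₁, h₂] → ℝ be continuous and bounded on the closed strip (coordinates (x,z)), harmonic in the open strip ℝ × (−h₁, h₂), and satisfy w(x, −h₁) = 0 and w(x, h₂) = 0 for every x ∈ ℝ. Then w ≡ 0. -/
noncomputable section

open Filter Set Topology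

lemma secondDeriv_nonpos_of_isLocalMax (g : ℝ → ℝ) {a c : ℝ}
    (hg : ∀ᶠ t in 𝓝 a, DifferentiableAt ℝ g t)
    (hc : HasDerivAt (deriv g) c a) (hmax : IsLocalMax g a) : c ≤ 0 := by
  by_contra hpos
  push_neg at hpos
  have h0 : deriv g a = 0 := hmax.deriv_eq_zero
  have hs : Tendsto (slope (deriv g) a) (𝓝[≠] a) (𝓝 c) :=
    hasDerivAt_iff_tendsto_slope.1 hc
  have hs' : ∀ᶠ x in 𝓝[≠] a, c / 2 < slope (deriv g) a x :=
    hs.eventually (eventually_gt_nhds (half_lt_self hpos))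
  have E1 : ∀ᶠ x in 𝓝[>] a, c / 2 < slope (deriv g) a x :=
    hs'.filter_mono (nhdsWithin_mono a fun x hx => ne_of_gt hx)
  have E2 : ∀ᶠ x in 𝓝[>] a, DifferentiableAt ℝ g x := hg.filter_mono nhdsWithin_le_nhds
  have E3 : ∀ᶠ x in 𝓝[>] a, g x ≤ g a := hmax.filter_mono nhdsWithin_le_nhds
  obtain ⟨u, hu, hsub⟩ := mem_nhdsGT_iff_exists_Ioo_subset.mp ((E1.and (E2.and E3)))
  rw [mem_Ioi] at hu
  set u' := (a + u) / 2 with hu'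
  have hau' : a < u' := by simp [hu']; linarith
  have hu'u : u' < u := by simp [hu']; linarith
  have hdiff : ∀ x ∈ Icc a u', DifferentiableAt ℝ g x := by
    intro x hx
    rcases eq_or_lt_of_le hx.1 with h | h
    · exact h ▸ hg.self_of_nhds
    · exact (hsub ⟨h, lt_of_le_of_lt hx.2 hu'u⟩).2.1
  have hcont : ContinuousOn g (Icc a u') := fun x hx =>
    (hdiff x hx).continuousAt.continuousWithinAt
  have hderivpos : ∀ x ∈ interior (Icc a u'), 0 < deriv g x := by
    intro x hx
    rw [interior_Icc] at hx
    have hxI : x ∈ Ioo a u := ⟨hx.1, lt_trans hx.2 hu'u⟩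
    have h1 := (hsub hxI).1
    have hxa : 0 < x - a := by linarith [hx.1]
    have : c / 2 < (deriv g x - deriv g a) / (x - a) := by
      simpa [slope_def_field, div_eq_iff] using h1
    rw [h0, sub_zero] at this
    have hc2 : 0 < c / 2 := half_pos hpos
    have := lt_trans hc2 this
    rcases div_pos_iff.mp this with h | h
    · exact h.1
    · linarith [h.2]
  have hmono := strictMonoOn_of_deriv_pos (convex_Icc a u') hcont hderivpos
  have h1 : g a < g u' := hmono (left_mem_Icc.2 hau'.le) (right_mem_Icc.2 hau'.le) hau'
  have h2 : g u' ≤ g a := (hsub ⟨hau', hu'u⟩).2.2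
  linarith


lemma hasFDerivAt_prod {f g : ℝ → ℝ} {f' g' x z : ℝ}
    (hf : HasDerivAt f f' x) (hg : HasDerivAt g g' z) :
    HasFDerivAt (fun q : ℝ × ℝ => f q.1 * g q.2)
      (f x • (g' • ContinuousLinearMap.snd ℝ ℝ ℝ) +
        g z • (f' • ContinuousLinearMap.fst ℝ ℝ ℝ)) (x, z) := by
  have h1 : HasFDerivAt (fun q : ℝ × ℝ => f q.1)
      (f' • ContinuousLinearMap.fst ℝ ℝ ℝ) (x, z) :=
    hf.comp_hasFDerivAt (x, z) hasFDerivAt_fst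
  have h2 : HasFDerivAt (fun q : ℝ × ℝ => g q.2)
      (g' • ContinuousLinearMap.snd ℝ ℝ ℝ) (x, z) :=
    hg.comp_hasFDerivAt (x, z) hasFDerivAt_snd
  exact h1.mul h2

lemma differentiableAt_prod {f g : ℝ → ℝ} {f' g' x z : ℝ}
    (hf : HasDerivAt f f' x) (hg : HasDerivAt g g' z) :
    DifferentiableAt ℝ (fun q : ℝ × ℝ => f q.1 * g q.2) (x, z) :=
  (hasFDerivAt_prod hf hg).differentiableAt

lemma pdx2_prod {f g : ℝ → ℝ} {f' g' x z : ℝ}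
    (hf : HasDerivAt f f' x) (hg : HasDerivAt g g' z) :
    pdx2 (fun q : ℝ × ℝ => f q.1 * g q.2) (x, z) = f' * g z := by
  rw [pdx2, (hasFDerivAt_prod hf hg).fderiv]
  simp [mul_comm]

lemma pdy2_prod {f g : ℝ → ℝ} {f' g' x z : ℝ}
    (hf : HasDerivAt f f' x) (hg : HasDerivAt g g' z) :
    pdy2 (fun q : ℝ × ℝ => f q.1 * g q.2) (x, z) = f x * g' := by
  rw [pdy2, (hasFDerivAt_prod hf hg).fderiv]
  simp

-- derivative of t ↦ cosh (l*t) etc.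
lemma hasDerivAt_cosh_mul (l t : ℝ) :
    HasDerivAt (fun t => Real.cosh (l * t)) (l * Real.sinh (l * t)) t := by
  simpa [mul_comm, Function.comp_def] using (Real.hasDerivAt_cosh (l * t)).comp t ((hasDerivAt_id t).const_mul l)

lemma hasDerivAt_sinh_mul (l t : ℝ) :
    HasDerivAt (fun t => l * Real.sinh (l * t)) (l * (l * Real.cosh (l * t))) t := by
  have := ((Real.hasDerivAt_sinh (l * t)).comp t ((hasDerivAt_id t).const_mul l)).const_mul l
  simpa [mul_comm, mul_assoc, mul_left_comm] using this

lemma hasDerivAt_cos_mul (l t : ℝ) :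
    HasDerivAt (fun t => Real.cos (l * t)) (-(l * Real.sin (l * t))) t := by
  have := (Real.hasDerivAt_cos (l * t)).comp t ((hasDerivAt_id t).const_mul l)
  simpa [mul_comm, Function.comp_def] using this

lemma hasDerivAt_neg_sin_mul (l t : ℝ) :
    HasDerivAt (fun t => -(l * Real.sin (l * t))) (-(l * (l * Real.cos (l * t)))) t := by
  have := (((Real.hasDerivAt_sin (l * t)).comp t ((hasDerivAt_id t).const_mul l)).const_mul l).neg
  simpa [mul_comm, mul_assoc, mul_left_comm, Function.comp_def, Pi.neg_def] using this
lemma pdx2_lin {u g h : ℝ × ℝ → ℝ} {q : ℝ × ℝ} (a c : ℝ)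
    (hu : DifferentiableAt ℝ u q) (hg : DifferentiableAt ℝ g q)
    (hh : DifferentiableAt ℝ h q) :
    pdx2 (fun p => u p + a * g p + c * h p) q
      = pdx2 u q + a * pdx2 g q + c * pdx2 h q := by
  unfold pdx2
  rw [fderiv_fun_add (by exact hu.add (hg.const_mul a)) (by exact hh.const_mul c),
    fderiv_fun_add hu (by exact hg.const_mul a), fderiv_const_mul hg, fderiv_const_mul hh]
  simp

lemma pdy2_lin {u g h : ℝ × ℝ → ℝ} {q : ℝ × ℝ} (a c : ℝ)
    (hu : DifferentiableAt ℝ u q) (hg : DifferentiableAt ℝ g q)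
    (hh : DifferentiableAt ℝ h q) :
    pdy2 (fun p => u p + a * g p + c * h p) q
      = pdy2 u q + a * pdy2 g q + c * pdy2 h q := by
  unfold pdy2
  rw [fderiv_fun_add (by exact hu.add (hg.const_mul a)) (by exact hh.const_mul c),
    fderiv_fun_add hu (by exact hg.const_mul a), fderiv_const_mul hg, fderiv_const_mul hh]
  simp

lemma contDiffOn_pdx2 {U : Set (ℝ × ℝ)} (hU : IsOpen U) {u : ℝ × ℝ → ℝ}
    (hu : ContDiffOn ℝ 2 u U) : ContDiffOn ℝ 1 (pdx2 u) U := by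
  have h : ContDiffOn ℝ 1 (fderiv ℝ u) U := hu.fderiv_of_isOpen hU (by norm_num)
  exact (ContinuousLinearMap.apply ℝ ℝ ((1 : ℝ), (0 : ℝ))).contDiff.comp_contDiffOn h

lemma contDiffOn_pdy2 {U : Set (ℝ × ℝ)} (hU : IsOpen U) {u : ℝ × ℝ → ℝ}
    (hu : ContDiffOn ℝ 2 u U) : ContDiffOn ℝ 1 (pdy2 u) U := by
  have h : ContDiffOn ℝ 1 (fderiv ℝ u) U := hu.fderiv_of_isOpen hU (by norm_num)
  exact (ContinuousLinearMap.apply ℝ ℝ ((0 : ℝ), (1 : ℝ))).contDiff.comp_contDiffOn h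

lemma laplacian_comb {U : Set (ℝ × ℝ)} (hU : IsOpen U) {u : ℝ × ℝ → ℝ}
    (hu : ContDiffOn ℝ 2 u U) (l ε δ : ℝ) {q : ℝ × ℝ} (hq : q ∈ U) :
    pdx2 (pdx2 (fun p : ℝ × ℝ =>
        u p + (-ε) * (Real.cosh (l * p.1) * Real.cos (l * p.2)) + δ * (p.1 ^ 2 * 1))) q
      + pdy2 (pdy2 (fun p : ℝ × ℝ =>
        u p + (-ε) * (Real.cosh (l * p.1) * Real.cos (l * p.2)) + δ * (p.1 ^ 2 * 1))) q
    = (pdx2 (pdx2 u) q + pdy2 (pdy2 u) q) + δ * 2 := by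
  have hsq : ∀ x : ℝ, HasDerivAt (fun t : ℝ => t ^ 2) (2 * x) x := fun x => by
    simpa using hasDerivAt_pow 2 x
  have h2t : ∀ x : ℝ, HasDerivAt (fun t : ℝ => 2 * t) (2 * 1) x := fun x =>
    (hasDerivAt_id x).const_mul 2
  have hBd : ∀ p : ℝ × ℝ, DifferentiableAt ℝ
      (fun p : ℝ × ℝ => Real.cosh (l * p.1) * Real.cos (l * p.2)) p := fun ⟨x, z⟩ =>
    differentiableAt_prod (hasDerivAt_cosh_mul l x) (hasDerivAt_cos_mul l z)
  have hPd : ∀ p : ℝ × ℝ, DifferentiableAt ℝ (fun p : ℝ × ℝ => p.1 ^ 2 * 1) p := fun ⟨x, z⟩ =>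
    differentiableAt_prod (hsq x) (hasDerivAt_const z 1)
  have hud : ∀ p ∈ U, DifferentiableAt ℝ u p := fun p hp =>
    (hu.differentiableOn (by norm_num)).differentiableAt (hU.mem_nhds hp)
  have hux : DifferentiableAt ℝ (pdx2 u) q :=
    ((contDiffOn_pdx2 hU hu).differentiableOn one_ne_zero).differentiableAt (hU.mem_nhds hq)
  have huy : DifferentiableAt ℝ (pdy2 u) q :=
    ((contDiffOn_pdy2 hU hu).differentiableOn one_ne_zero).differentiableAt (hU.mem_nhds hq)
  -- first derivatives of the barrier and the quadratic
  have hBx : pdx2 (fun p : ℝ × ℝ => Real.cosh (l * p.1) * Real.cos (l * p.2))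
      = fun p : ℝ × ℝ => (l * Real.sinh (l * p.1)) * Real.cos (l * p.2) :=
    funext fun ⟨x, z⟩ => pdx2_prod (hasDerivAt_cosh_mul l x) (hasDerivAt_cos_mul l z)
  have hBy : pdy2 (fun p : ℝ × ℝ => Real.cosh (l * p.1) * Real.cos (l * p.2))
      = fun p : ℝ × ℝ => Real.cosh (l * p.1) * (-(l * Real.sin (l * p.2))) :=
    funext fun ⟨x, z⟩ => pdy2_prod (hasDerivAt_cosh_mul l x) (hasDerivAt_cos_mul l z)
  have hPx : pdx2 (fun p : ℝ × ℝ => p.1 ^ 2 * 1) = fun p : ℝ × ℝ => (2 * p.1) * 1 :=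
    funext fun ⟨x, z⟩ => pdx2_prod (hsq x) (hasDerivAt_const z 1)
  have hPy : pdy2 (fun p : ℝ × ℝ => p.1 ^ 2 * 1) = fun p : ℝ × ℝ => p.1 ^ 2 * 0 :=
    funext fun ⟨x, z⟩ => pdy2_prod (hsq x) (hasDerivAt_const z 1)
  -- x-direction
  have hvx : pdx2 (fun p : ℝ × ℝ =>
      u p + (-ε) * (Real.cosh (l * p.1) * Real.cos (l * p.2)) + δ * (p.1 ^ 2 * 1))
      =ᶠ[nhds q] fun p : ℝ × ℝ =>
        pdx2 u p + (-ε) * ((l * Real.sinh (l * p.1)) * Real.cos (l * p.2))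
          + δ * ((2 * p.1) * 1) := by
    filter_upwards [hU.mem_nhds hq] with p hp
    rw [pdx2_lin (-ε) δ (hud p hp) (hBd p) (hPd p), hBx, hPx]
  have hvy : pdy2 (fun p : ℝ × ℝ =>
      u p + (-ε) * (Real.cosh (l * p.1) * Real.cos (l * p.2)) + δ * (p.1 ^ 2 * 1))
      =ᶠ[nhds q] fun p : ℝ × ℝ =>
        pdy2 u p + (-ε) * (Real.cosh (l * p.1) * (-(l * Real.sin (l * p.2))))
          + δ * (p.1 ^ 2 * 0) := by
    filter_upwards [hU.mem_nhds hq] with p hp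
    rw [pdy2_lin (-ε) δ (hud p hp) (hBd p) (hPd p), hBy, hPy]
  have hx2 : pdx2 (pdx2 (fun p : ℝ × ℝ =>
      u p + (-ε) * (Real.cosh (l * p.1) * Real.cos (l * p.2)) + δ * (p.1 ^ 2 * 1))) q
      = pdx2 (fun p : ℝ × ℝ =>
        pdx2 u p + (-ε) * ((l * Real.sinh (l * p.1)) * Real.cos (l * p.2))
          + δ * ((2 * p.1) * 1)) q := by
    exact congrArg (fun L : ℝ × ℝ →L[ℝ] ℝ => L (1, 0)) (hvx.fderiv_eq (𝕜 := ℝ))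
  have hy2 : pdy2 (pdy2 (fun p : ℝ × ℝ =>
      u p + (-ε) * (Real.cosh (l * p.1) * Real.cos (l * p.2)) + δ * (p.1 ^ 2 * 1))) q
      = pdy2 (fun p : ℝ × ℝ =>
        pdy2 u p + (-ε) * (Real.cosh (l * p.1) * (-(l * Real.sin (l * p.2))))
          + δ * (p.1 ^ 2 * 0)) q := by
    exact congrArg (fun L : ℝ × ℝ →L[ℝ] ℝ => L (0, 1)) (hvy.fderiv_eq (𝕜 := ℝ))
  obtain ⟨x, z⟩ := q
  rw [hx2, hy2,
    pdx2_lin (-ε) δ hux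
      (differentiableAt_prod (hasDerivAt_sinh_mul l x) (hasDerivAt_cos_mul l z))
      (differentiableAt_prod (h2t x) (hasDerivAt_const z 1)),
    pdy2_lin (-ε) δ huy
      (differentiableAt_prod (hasDerivAt_cosh_mul l x) (hasDerivAt_neg_sin_mul l z))
      (differentiableAt_prod (hsq x) (hasDerivAt_const z 0)),
    pdx2_prod (hasDerivAt_sinh_mul l x) (hasDerivAt_cos_mul l z),
    pdx2_prod (h2t x) (hasDerivAt_const z 1),
    pdy2_prod (hasDerivAt_cosh_mul l x) (hasDerivAt_neg_sin_mul l z),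
    pdy2_prod (hsq x) (hasDerivAt_const z 0)]
  ring

lemma contDiffOn_fderiv_apply {U : Set (ℝ × ℝ)} (hU : IsOpen U) {u : ℝ × ℝ → ℝ}
    (hu : ContDiffOn ℝ 2 u U) (v : ℝ × ℝ) :
    ContDiffOn ℝ 1 (fun q => fderiv ℝ u q v) U :=
  (ContinuousLinearMap.apply ℝ ℝ v).contDiff.comp_contDiffOn
    (hu.fderiv_of_isOpen hU (by norm_num))

lemma dir_second_nonpos {U : Set (ℝ × ℝ)} (hU : IsOpen U) {u : ℝ × ℝ → ℝ}
    (hu : ContDiffOn ℝ 2 u U) {p : ℝ × ℝ} (hp : p ∈ U) (hmax : IsLocalMax u p)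
    (v : ℝ × ℝ) :
    fderiv ℝ (fun q => fderiv ℝ u q v) p v ≤ 0 := by
  set line : ℝ → ℝ × ℝ := fun t => p + t • v with hline_def
  have hline : ∀ t : ℝ, HasDerivAt line v t := fun t => by
    simpa [hline_def] using ((hasDerivAt_id t).smul_const v).const_add p
  have hline0 : line 0 = p := by simp [hline_def]
  have hlc : Continuous line := by fun_prop
  have htd : Tendsto line (𝓝 0) (𝓝 p) := hline0 ▸ hlc.tendsto 0
  have hUt : ∀ᶠ t in 𝓝 (0 : ℝ), line t ∈ U := htd (hU.mem_nhds hp)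
  have hud : ∀ r ∈ U, DifferentiableAt ℝ u r := fun r hr =>
    (hu.differentiableOn (by norm_num)).differentiableAt (hU.mem_nhds hr)
  set g : ℝ → ℝ := fun t => u (line t) with hg_def
  have hgdiff : ∀ᶠ t in 𝓝 (0 : ℝ), DifferentiableAt ℝ g t := by
    filter_upwards [hUt] with t ht
    exact (hud _ ht).comp t (hline t).differentiableAt
  have hderiv_g : ∀ᶠ t in 𝓝 (0 : ℝ), deriv g t = fderiv ℝ u (line t) v := by
    filter_upwards [hUt] with t ht
    exact (((hud _ ht).hasFDerivAt).comp_hasDerivAt t (hline t)).deriv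
  have hux : DifferentiableAt ℝ (fun q => fderiv ℝ u q v) p :=
    ((contDiffOn_fderiv_apply hU hu v).differentiableOn one_ne_zero).differentiableAt
      (hU.mem_nhds hp)
  have hsecond : HasDerivAt (fun t => fderiv ℝ u (line t) v)
      (fderiv ℝ (fun q => fderiv ℝ u q v) p v) 0 := by
    have h := hux.hasFDerivAt
    rw [← hline0] at h
    have h2 : HasDerivAt (fun t => fderiv ℝ u (line t) v)
        (fderiv ℝ (fun q => fderiv ℝ u q v) (line 0) v) 0 :=
      h.comp_hasDerivAt 0 (hline 0)
    rw [hline0] at h2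
    exact h2
  have hc : HasDerivAt (deriv g) (fderiv ℝ (fun q => fderiv ℝ u q v) p v) 0 :=
    hsecond.congr_of_eventuallyEq hderiv_g
  have hgmax : IsLocalMax g 0 := by
    have := htd.eventually hmax
    simpa [hg_def, IsLocalMax, IsMaxFilter, hline0] using this
  exact secondDeriv_nonpos_of_isLocalMax g hgdiff hc hgmax

lemma laplacian_nonpos_at_localMax {U : Set (ℝ × ℝ)} (hU : IsOpen U) {u : ℝ × ℝ → ℝ}
    (hu : ContDiffOn ℝ 2 u U) {p : ℝ × ℝ} (hp : p ∈ U) (hmax : IsLocalMax u p) :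
    pdx2 (pdx2 u) p + pdy2 (pdy2 u) p ≤ 0 :=
  add_nonpos (dir_second_nonpos hU hu hp hmax (1, 0)) (dir_second_nonpos hU hu hp hmax (0, 1))


lemma rect_bound (h₁ h₂ : ℝ) (w : ℝ × ℝ → ℝ)
    (hw_cont : ContinuousOn w {q : ℝ × ℝ | -h₁ ≤ q.2 ∧ q.2 ≤ h₂})
    (C : ℝ) (hC : ∀ q ∈ {q : ℝ × ℝ | -h₁ ≤ q.2 ∧ q.2 ≤ h₂}, w q ≤ C)
    (hw_C2 : ContDiffOn ℝ 2 w {q : ℝ × ℝ | -h₁ < q.2 ∧ q.2 < h₂})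
    (hw_harm : ∀ q ∈ {q : ℝ × ℝ | -h₁ < q.2 ∧ q.2 < h₂},
      pdx2 (pdx2 w) q + pdy2 (pdy2 w) q = 0)
    (hw_bot : ∀ x : ℝ, w (x, -h₁) = 0)
    (hw_top : ∀ x : ℝ, w (x, h₂) = 0)
    (l m : ℝ) (hl : 0 < l) (hm : 0 < m)
    (hcos_lb : ∀ z : ℝ, -h₁ ≤ z → z ≤ h₂ → m ≤ Real.cos (l * z))
    (ε : ℝ) (hε : 0 < ε) (δ : ℝ) (hδ : 0 < δ) (R : ℝ) (hR : 0 < R)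
    (hside : C ≤ ε * Real.cosh (l * R) * m)
    (q : ℝ × ℝ) (hqS : -h₁ ≤ q.2 ∧ q.2 ≤ h₂) (hq1 : -R ≤ q.1) (hq2 : q.1 ≤ R) :
    w q ≤ ε * (Real.cosh (l * q.1) * Real.cos (l * q.2)) + δ * R ^ 2 := by
  have hUopen : IsOpen {q : ℝ × ℝ | -h₁ < q.2 ∧ q.2 < h₂} :=
    isOpen_Ioo.preimage continuous_snd
  set v : ℝ × ℝ → ℝ := fun p : ℝ × ℝ =>
    w p + (-ε) * (Real.cosh (l * p.1) * Real.cos (l * p.2)) + δ * (p.1 ^ 2 * 1)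
    with hv_def
  have hKmem : ∀ r : ℝ × ℝ, r ∈ Icc ((-R, -h₁) : ℝ × ℝ) ((R, h₂) : ℝ × ℝ) ↔
      (-R ≤ r.1 ∧ r.1 ≤ R ∧ -h₁ ≤ r.2 ∧ r.2 ≤ h₂) := by
    intro r
    simp only [Set.mem_Icc, Prod.le_def]
    tauto
  have hKS : Icc ((-R, -h₁) : ℝ × ℝ) ((R, h₂) : ℝ × ℝ) ⊆
      {q : ℝ × ℝ | -h₁ ≤ q.2 ∧ q.2 ≤ h₂} := by
    intro r hr
    rw [hKmem] at hr
    exact ⟨hr.2.2.1, hr.2.2.2⟩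
  have hqK : q ∈ Icc ((-R, -h₁) : ℝ × ℝ) ((R, h₂) : ℝ × ℝ) :=
    (hKmem q).2 ⟨hq1, hq2, hqS.1, hqS.2⟩
  have hv_cont : ContinuousOn v (Icc ((-R, -h₁) : ℝ × ℝ) ((R, h₂) : ℝ × ℝ)) := by
    apply ContinuousOn.add
    apply ContinuousOn.add
    · exact hw_cont.mono hKS
    · refine Continuous.continuousOn ?_
      have : Continuous (fun p : ℝ × ℝ => Real.cosh (l * p.1) * Real.cos (l * p.2)) :=
        (Real.continuous_cosh.comp (continuous_const.mul continuous_fst)).mul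
          (Real.continuous_cos.comp (continuous_const.mul continuous_snd))
      exact continuous_const.mul this
    · exact Continuous.continuousOn (by fun_prop)
  obtain ⟨p, hpK, hpmax⟩ := isCompact_Icc.exists_isMaxOn ⟨q, hqK⟩ hv_cont
  have hpK' := (hKmem p).1 hpK
  have hvp : v p ≤ δ * R ^ 2 := by
    by_cases hint : -R < p.1 ∧ p.1 < R ∧ -h₁ < p.2 ∧ p.2 < h₂
    · exfalso
      obtain ⟨hi1, hi2, hi3, hi4⟩ := hint
      have hpU : p ∈ {q : ℝ × ℝ | -h₁ < q.2 ∧ q.2 < h₂} := ⟨hi3, hi4⟩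
      have hO : IsOpen (Ioo (-R) R ×ˢ Ioo (-h₁) h₂) := isOpen_Ioo.prod isOpen_Ioo
      have hpO : p ∈ Ioo (-R) R ×ˢ Ioo (-h₁) h₂ := ⟨⟨hi1, hi2⟩, ⟨hi3, hi4⟩⟩
      have hOK : Ioo (-R) R ×ˢ Ioo (-h₁) h₂ ⊆ Icc ((-R, -h₁) : ℝ × ℝ) ((R, h₂) : ℝ × ℝ) := by
        intro r hr
        exact (hKmem r).2 ⟨hr.1.1.le, hr.1.2.le, hr.2.1.le, hr.2.2.le⟩
      have hKnhds : Icc ((-R, -h₁) : ℝ × ℝ) ((R, h₂) : ℝ × ℝ) ∈ 𝓝 p :=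
        mem_of_superset (hO.mem_nhds hpO) hOK
      have hlm : IsLocalMax v p := hpmax.isLocalMax hKnhds
      have hvC2 : ContDiffOn ℝ 2 v {q : ℝ × ℝ | -h₁ < q.2 ∧ q.2 < h₂} := by
        apply ContDiffOn.add
        apply ContDiffOn.add
        · exact hw_C2
        · refine ContDiff.contDiffOn ?_
          have h1 : ContDiff ℝ 2 (fun p : ℝ × ℝ => Real.cosh (l * p.1) * Real.cos (l * p.2)) :=
            (Real.contDiff_cosh.comp (contDiff_const.mul contDiff_fst)).mul
              (Real.contDiff_cos.comp (contDiff_const.mul contDiff_snd))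
          exact contDiff_const.mul h1
        · refine ContDiff.contDiffOn ?_
          exact contDiff_const.mul ((contDiff_fst.pow 2).mul contDiff_const)
      have hΔ := laplacian_comb hUopen hw_C2 l ε δ hpU
      have hle := laplacian_nonpos_at_localMax hUopen hvC2 hpU hlm
      have hw0 := hw_harm p hpU
      rw [hv_def] at hle
      linarith
    · have hcosp : m ≤ Real.cos (l * p.2) := hcos_lb p.2 hpK'.2.2.1 hpK'.2.2.2
      have hp1sq : p.1 ^ 2 ≤ R ^ 2 := by nlinarith [hpK'.1, hpK'.2.1]
      push_neg at hint
      rcases eq_or_lt_of_le hpK'.2.2.1 with hb | hb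
      · have hwp : w p = 0 := by
          have h0 := hw_bot p.1
          rw [hb] at h0
          exact h0
        have hB : 0 ≤ Real.cosh (l * p.1) * Real.cos (l * p.2) := by
          have h1 := Real.cosh_pos (x := l * p.1)
          nlinarith
        show w p + (-ε) * (Real.cosh (l * p.1) * Real.cos (l * p.2)) + δ * (p.1 ^ 2 * 1)
          ≤ δ * R ^ 2
        rw [hwp]
        nlinarith
      rcases eq_or_lt_of_le hpK'.2.2.2 with ht | ht
      · have hwp : w p = 0 := by
          have h0 := hw_top p.1
          rw [← ht] at h0
          exact h0
        have hB : 0 ≤ Real.cosh (l * p.1) * Real.cos (l * p.2) := by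
          have h1 := Real.cosh_pos (x := l * p.1)
          nlinarith
        show w p + (-ε) * (Real.cosh (l * p.1) * Real.cos (l * p.2)) + δ * (p.1 ^ 2 * 1)
          ≤ δ * R ^ 2
        rw [hwp]
        nlinarith
      · have hpS : p ∈ {q : ℝ × ℝ | -h₁ ≤ q.2 ∧ q.2 ≤ h₂} := hKS hpK
        have hwp : w p ≤ C := hC p hpS
        have hcases : p.1 = -R ∨ p.1 = R := by
          by_contra hc
          push_neg at hc
          have h1 : -R < p.1 := lt_of_le_of_ne hpK'.1 (Ne.symm hc.1)
          have h2 : p.1 < R := lt_of_le_of_ne hpK'.2.1 hc.2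
          exact absurd (hint h1 h2 hb) (not_le.2 ht)
        have hcosheq : Real.cosh (l * p.1) = Real.cosh (l * R) := by
          rcases hcases with h | h
          · rw [h, mul_neg, Real.cosh_neg]
          · rw [h]
        have hcpos := Real.cosh_pos (x := l * R)
        have key : ε * (Real.cosh (l * R) * m) ≤
            ε * (Real.cosh (l * R) * Real.cos (l * p.2)) :=
          mul_le_mul_of_nonneg_left
            (mul_le_mul_of_nonneg_left hcosp hcpos.le) hε.le
        have hkey2 : δ * p.1 ^ 2 ≤ δ * R ^ 2 := mul_le_mul_of_nonneg_left hp1sq hδ.le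
        show w p + (-ε) * (Real.cosh (l * p.1) * Real.cos (l * p.2)) + δ * (p.1 ^ 2 * 1)
          ≤ δ * R ^ 2
        rw [hcosheq]
        nlinarith
  have hvq : v q ≤ v p := hpmax hqK
  have hq0 : w q + (-ε) * (Real.cosh (l * q.1) * Real.cos (l * q.2)) + δ * (q.1 ^ 2 * 1)
      ≤ δ * R ^ 2 := le_trans hvq hvp
  have h2 : 0 ≤ δ * q.1 ^ 2 := mul_nonneg hδ.le (sq_nonneg q.1)
  nlinarith

lemma strip_le_zero (h₁ h₂ : ℝ) (hh₁ : 0 < h₁) (hh₂ : 0 < h₂)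
    (w : ℝ × ℝ → ℝ)
    (hw_cont : ContinuousOn w {q : ℝ × ℝ | -h₁ ≤ q.2 ∧ q.2 ≤ h₂})
    (C : ℝ) (hC : ∀ q ∈ {q : ℝ × ℝ | -h₁ ≤ q.2 ∧ q.2 ≤ h₂}, w q ≤ C)
    (hw_C2 : ContDiffOn ℝ 2 w {q : ℝ × ℝ | -h₁ < q.2 ∧ q.2 < h₂})
    (hw_harm : ∀ q ∈ {q : ℝ × ℝ | -h₁ < q.2 ∧ q.2 < h₂},
      pdx2 (pdx2 w) q + pdy2 (pdy2 w) q = 0)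
    (hw_bot : ∀ x : ℝ, w (x, -h₁) = 0)
    (hw_top : ∀ x : ℝ, w (x, h₂) = 0) :
    ∀ q ∈ {q : ℝ × ℝ | -h₁ ≤ q.2 ∧ q.2 ≤ h₂}, w q ≤ 0 := by
  have hH : (0 : ℝ) < max h₁ h₂ := lt_max_of_lt_left hh₁
  set l : ℝ := 1 / (2 * max h₁ h₂) with hl_def
  have hl : 0 < l := by positivity
  set m : ℝ := Real.cos (1 / 2) with hm_def
  have hpi := Real.pi_gt_three
  have hm : 0 < m := Real.cos_pos_of_mem_Ioo ⟨by linarith, by linarith⟩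
  clear_value l m
  have hcos_lb : ∀ z : ℝ, -h₁ ≤ z → z ≤ h₂ → m ≤ Real.cos (l * z) := by
    intro z hz1 hz2
    have habs : |l * z| ≤ 1 / 2 := by
      rw [abs_mul, abs_of_pos hl]
      have hzH : |z| ≤ max h₁ h₂ := by
        rw [abs_le]
        refine ⟨?_, le_trans hz2 (le_max_right _ _)⟩
        have := le_max_left h₁ h₂
        linarith
      calc l * |z| ≤ l * max h₁ h₂ := by nlinarith [abs_nonneg z]
        _ = 1 / 2 := by rw [hl_def]; field_simp
    calc m = Real.cos (1 / 2) := hm_def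
      _ ≤ Real.cos |l * z| :=
          Real.cos_le_cos_of_nonneg_of_le_pi (abs_nonneg _) (by linarith) habs
      _ = Real.cos (l * z) := Real.cos_abs _
  intro q hqS
  set D : ℝ := Real.cosh (l * q.1) * Real.cos (l * q.2) with hD_def
  have hD : 0 ≤ D := by
    have h1 := Real.cosh_pos (x := l * q.1)
    have h2 := hcos_lb q.2 hqS.1 hqS.2
    nlinarith
  clear_value D
  have key : ∀ η > 0, w q ≤ η := by
    intro η hη
    set ε : ℝ := η / (2 * (D + 1)) with hε_def
    have hε : 0 < ε := by positivity
    clear_value ε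
    set R : ℝ := max |q.1| (2 * max C 0 / (ε * m * l)) + 1 with hR_def
    have hR0 : 0 ≤ max |q.1| (2 * max C 0 / (ε * m * l)) :=
      le_max_of_le_left (abs_nonneg _)
    have hR : 0 < R := by rw [hR_def]; linarith
    clear_value R
    have hεml : 0 < ε * m * l := by positivity
    have hcosh_ge : l * R / 2 ≤ Real.cosh (l * R) := by
      have h1 : Real.cosh (l * R) = (Real.exp (l * R) + Real.exp (-(l * R))) / 2 :=
        Real.cosh_eq _
      have h2 := Real.add_one_le_exp (l * R)
      have h3 := Real.exp_pos (-(l * R))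
      linarith
    have hside : C ≤ ε * Real.cosh (l * R) * m := by
      have hR2 : 2 * max C 0 / (ε * m * l) ≤ R := by
        rw [hR_def]
        have := le_max_right |q.1| (2 * max C 0 / (ε * m * l))
        linarith
      have h4 : 2 * max C 0 ≤ ε * m * l * R := by
        rw [div_le_iff₀ hεml] at hR2
        linarith
      have h5 : ε * m * (l * R / 2) ≤ ε * m * Real.cosh (l * R) :=
        mul_le_mul_of_nonneg_left hcosh_ge (by positivity)
      have h6 : C ≤ max C 0 := le_max_left _ _
      nlinarith
    have hq1 : -R ≤ q.1 ∧ q.1 ≤ R := by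
      have h7 : |q.1| ≤ R := by
        rw [hR_def]
        have := le_max_left |q.1| (2 * max C 0 / (ε * m * l))
        linarith
      rw [abs_le] at h7
      exact h7
    set δ : ℝ := η / (2 * R ^ 2) with hδ_def
    have hδ : 0 < δ := by positivity
    clear_value δ
    have h8 := rect_bound h₁ h₂ w hw_cont C hC hw_C2 hw_harm hw_bot hw_top
      l m hl hm hcos_lb ε hε δ hδ R hR hside q hqS hq1.1 hq1.2
    have hRne : R ≠ 0 := ne_of_gt hR
    have h9 : δ * R ^ 2 = η / 2 := by
      rw [hδ_def]
      field_simp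
    have h10 : ε * D ≤ η / 2 := by
      have hD1 : D + 1 ≠ 0 := by positivity
      have h11 : ε * (D + 1) = η / 2 := by
        rw [hε_def]
        field_simp
      nlinarith
    rw [← hD_def] at h8
    linarith
  by_contra hcon
  push_neg at hcon
  have := key (w q / 2) (by linarith)
  linarith

lemma pdx2_neg (f : ℝ × ℝ → ℝ) (q : ℝ × ℝ) :
    pdx2 (fun p => -(f p)) q = -pdx2 f q := by
  unfold pdx2
  rw [fderiv_fun_neg]
  simp

lemma pdy2_neg (f : ℝ × ℝ → ℝ) (q : ℝ × ℝ) :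
    pdy2 (fun p => -(f p)) q = -pdy2 f q := by
  unfold pdy2
  rw [fderiv_fun_neg]
  simp

/-- **Phragmén–Lindelöf / Liouville theorem on a strip.** A bounded continuous function
on the closed strip `ℝ × [-h₁, h₂]` that is harmonic in the open strip and vanishes on
both boundary lines vanishes identically. -/
theorem bounded_harmonic_strip_vanishing
    (h₁ h₂ : ℝ) (hh₁ : 0 < h₁) (hh₂ : 0 < h₂)
    (w : ℝ × ℝ → ℝ)
    (hw_cont : ContinuousOn w {q : ℝ × ℝ | -h₁ ≤ q.2 ∧ q.2 ≤ h₂})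
    (hw_bdd : ∃ C : ℝ, ∀ q ∈ {q : ℝ × ℝ | -h₁ ≤ q.2 ∧ q.2 ≤ h₂}, |w q| ≤ C)
    (hw_C2 : ContDiffOn ℝ 2 w {q : ℝ × ℝ | -h₁ < q.2 ∧ q.2 < h₂})
    (hw_harm : ∀ q ∈ {q : ℝ × ℝ | -h₁ < q.2 ∧ q.2 < h₂},
      pdx2 (pdx2 w) q + pdy2 (pdy2 w) q = 0)
    (hw_bot : ∀ x : ℝ, w (x, -h₁) = 0)
    (hw_top : ∀ x : ℝ, w (x, h₂) = 0) :
    ∀ q ∈ {q : ℝ × ℝ | -h₁ ≤ q.2 ∧ q.2 ≤ h₂}, w q = 0 := by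
  obtain ⟨C, hC⟩ := hw_bdd
  have hnx : pdx2 (fun p => -(w p)) = fun p => -(pdx2 w p) :=
    funext fun p => pdx2_neg w p
  have hny : pdy2 (fun p => -(w p)) = fun p => -(pdy2 w p) :=
    funext fun p => pdy2_neg w p
  have harm' : ∀ r ∈ {q : ℝ × ℝ | -h₁ < q.2 ∧ q.2 < h₂},
      pdx2 (pdx2 (fun p => -(w p))) r + pdy2 (pdy2 (fun p => -(w p))) r = 0 := by
    intro r hr
    rw [hnx, hny, pdx2_neg, pdy2_neg]
    have := hw_harm r hr
    linarith
  intro q hq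
  have h1 := strip_le_zero h₁ h₂ hh₁ hh₂ w hw_cont C
    (fun r hr => (abs_le.1 (hC r hr)).2) hw_C2 hw_harm hw_bot hw_top q hq
  have h2 := strip_le_zero h₁ h₂ hh₁ hh₂ (fun p => -(w p)) hw_cont.neg C
    (fun r hr => by have := (abs_le.1 (hC r hr)).1; simp only [neg_le]; linarith)
    hw_C2.neg harm'
    (fun x => by simp [hw_bot x]) (fun x => by simp [hw_top x]) q hq
  simp only [neg_nonpos] at h2
  linarith
end
end

section
/- Let h > 0, c ∈ (−h, ∞), ρ > 0, g ∈ ℝ, and β ∈ ℝ. Suppose u, w : ℝ × [−h, c) → ℝ are continuously differentiable, twice continuously differentiable in the open strip D = ℝ × (−h, c) (coordinates (x,z)), and P : D → ℝ is continuously differentiable, and that in D: ∂ₓu + ∂_z w = 0 (incompressibility), ∂_z u − ∂ₓw = β (constant vorticity), ρ(u ∂ₓu + w ∂_z u) = −∂ₓP, ρ(u ∂ₓw + w ∂_z w) = −∂_z P − ρg (steady Euler), and the pressure is hydrostatic: ∂ₓP ≡ 0 and ∂_z P ≡ −ρg. Suppose also the kinematic bed condition w(x, −h) = 0 for all x ∈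 ℝ. Then the flow is a shear flow: w ≡ 0 on D and there is a constant k such that u(x,z) = βz + k for all (x,z) ∈ D. -/
noncomputable section

lemma clm_apply_pair (L : ℝ × ℝ →L[ℝ] ℝ) (a b : ℝ) :
    L (a, b) = a * L (1, 0) + b * L (0, 1) := by
  have : ((a, b) : ℝ × ℝ) = a • ((1:ℝ), (0:ℝ)) + b • ((0:ℝ), (1:ℝ)) := by
    simp [Prod.ext_iff]
  rw [this, map_add, map_smul, map_smul, smul_eq_mul, smul_eq_mul]

lemma hasDerivAt_of_mul {f : ℂ → ℂ} {M : ℂ →L[ℝ] ℂ} {κ z : ℂ}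
    (hf : HasFDerivAt f M z) (hM : ∀ v, M v = v * κ) : HasDerivAt f κ z := by
  rw [hasDerivAt_iff_isLittleO]
  have h := hf.isLittleO
  simpa [hM, smul_eq_mul] using h

lemma const_of_hasFDerivAt_zero {s : Set (ℝ × ℝ)} (hs : Convex ℝ s)
    {f : ℝ × ℝ → ℝ} (hf : ∀ x ∈ s, HasFDerivAt f (0 : ℝ × ℝ →L[ℝ] ℝ) x)
    {x y : ℝ × ℝ} (hx : x ∈ s) (hy : y ∈ s) : f x = f y := by
  have := hs.norm_image_sub_le_of_norm_hasFDerivWithin_le (𝕜 := ℝ)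
    (f' := fun _ => (0 : ℝ × ℝ →L[ℝ] ℝ)) (C := 0)
    (fun q hq => (hf q hq).hasFDerivWithinAt) (by simp) hy hx
  have h0 : f x - f y = 0 := by simpa using this
  linarith [h0]

lemma hasDerivAt_F (u w : ℝ × ℝ → ℝ) (β : ℝ) (z : ℂ)
    (hu : DifferentiableAt ℝ u (z.re, z.im)) (hw : DifferentiableAt ℝ w (z.re, z.im))
    (hinc : pdx2 u (z.re, z.im) + pdy2 w (z.re, z.im) = 0)
    (hv : pdy2 u (z.re, z.im) - pdx2 w (z.re, z.im) = β) :
    HasDerivAt (fun ζ : ℂ => (u (ζ.re, ζ.im) : ℂ) - Complex.I * (w (ζ.re, ζ.im) : ℂ)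
        - (Complex.I * (β : ℂ) / 2) * (starRingEnd ℂ ζ))
      ((pdx2 u (z.re, z.im) : ℂ) - Complex.I * ((pdx2 w (z.re, z.im) : ℂ) + (β : ℂ) / 2)) z := by
  set p : ℝ × ℝ := (z.re, z.im) with hp
  set Lu := fderiv ℝ u p with hLu
  set Lw := fderiv ℝ w p with hLw
  set e : ℂ →L[ℝ] ℝ × ℝ := Complex.reCLM.prod Complex.imCLM with he
  have hee : ∀ ζ : ℂ, e ζ = (ζ.re, ζ.im) := fun ζ => rfl
  have heD : HasFDerivAt (fun ζ : ℂ => ((ζ.re, ζ.im) : ℝ × ℝ)) e z := e.hasFDerivAt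
  have hu1 : HasFDerivAt (fun ζ : ℂ => u (ζ.re, ζ.im)) (Lu.comp e) z :=
    (hu.hasFDerivAt).comp z heD
  have hw1 : HasFDerivAt (fun ζ : ℂ => w (ζ.re, ζ.im)) (Lw.comp e) z :=
    (hw.hasFDerivAt).comp z heD
  have hu2 : HasFDerivAt (fun ζ : ℂ => (u (ζ.re, ζ.im) : ℂ))
      (Complex.ofRealCLM.comp (Lu.comp e)) z := Complex.ofRealCLM.hasFDerivAt.comp z hu1
  have hw2 : HasFDerivAt (fun ζ : ℂ => (w (ζ.re, ζ.im) : ℂ))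
      (Complex.ofRealCLM.comp (Lw.comp e)) z := Complex.ofRealCLM.hasFDerivAt.comp z hw1
  have hconj : HasFDerivAt (fun ζ : ℂ => (starRingEnd ℂ) ζ)
      (Complex.conjCLE.toContinuousLinearMap) z :=
    Complex.conjCLE.toContinuousLinearMap.hasFDerivAt
  have hM : HasFDerivAt (fun ζ : ℂ => (u (ζ.re, ζ.im) : ℂ) - Complex.I * (w (ζ.re, ζ.im) : ℂ)
      - (Complex.I * (β : ℂ) / 2) * (starRingEnd ℂ ζ))
      ((Complex.ofRealCLM.comp (Lu.comp e))
        - Complex.I • (Complex.ofRealCLM.comp (Lw.comp e))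
        - (Complex.I * (β : ℂ) / 2) • Complex.conjCLE.toContinuousLinearMap) z :=
    ((hu2.sub (hw2.const_mul Complex.I)).sub (hconj.const_mul (Complex.I * (β : ℂ) / 2)))
  refine hasDerivAt_of_mul hM ?_
  intro v
  have h1 : Lu (v.re, v.im) = v.re * pdx2 u p + v.im * pdy2 u p := clm_apply_pair Lu v.re v.im
  have h2 : Lw (v.re, v.im) = v.re * pdx2 w p + v.im * pdy2 w p := clm_apply_pair Lw v.re v.im
  simp only [ContinuousLinearMap.sub_apply, ContinuousLinearMap.smul_apply,
    ContinuousLinearMap.comp_apply, Complex.ofRealCLM_apply,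
    ContinuousLinearEquiv.coe_coe, Complex.conjCLE_apply, hee, h1, h2]
  rw [show pdy2 u p = pdx2 w p + β by linarith [hv], show pdy2 w p = -pdx2 u p by linarith [hinc]]
  simp [Complex.ext_iff, Complex.mul_re, Complex.mul_im, smul_eq_mul]
  constructor <;> ring


lemma affine_diff_const {s : Set (ℝ × ℝ)} (hsc : Convex ℝ s)
    {f : ℝ × ℝ → ℝ} (hf : ∀ q ∈ s, DifferentiableAt ℝ f q) (A B : ℝ)
    (hfx : ∀ q ∈ s, pdx2 f q = A) (hfy : ∀ q ∈ s, pdy2 f q = B)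
    {x y : ℝ × ℝ} (hx : x ∈ s) (hy : y ∈ s) :
    f x - (A * x.1 + B * x.2) = f y - (A * y.1 + B * y.2) := by
  refine const_of_hasFDerivAt_zero hsc (f := fun q => f q - (A * q.1 + B * q.2)) ?_ hx hy
  intro q hq
  have hld : HasFDerivAt (fun q : ℝ × ℝ => A * q.1 + B * q.2)
      (A • ContinuousLinearMap.fst ℝ ℝ ℝ + B • ContinuousLinearMap.snd ℝ ℝ ℝ) q :=
    ((hasFDerivAt_fst.const_mul A).add (hasFDerivAt_snd.const_mul B))
  have htot := ((hf q hq).hasFDerivAt).sub hld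
  have hzero : fderiv ℝ f q
      - (A • ContinuousLinearMap.fst ℝ ℝ ℝ + B • ContinuousLinearMap.snd ℝ ℝ ℝ) = 0 := by
    apply ContinuousLinearMap.ext
    rintro ⟨s', t'⟩
    have h1 : fderiv ℝ f q (1, 0) = A := hfx q hq
    have h2 : fderiv ℝ f q (0, 1) = B := hfy q hq
    simp [ContinuousLinearMap.sub_apply, ContinuousLinearMap.add_apply,
      ContinuousLinearMap.smul_apply, ContinuousLinearMap.coe_fst', ContinuousLinearMap.coe_snd',
      clm_apply_pair (fderiv ℝ f q) s' t', h1, h2, smul_eq_mul]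
    ring
  rwa [hzero] at htot

/-- **Hydrostatic pressure forces shear flow.** Let `(u, w, P)` be a planar steady Euler
flow with constant vorticity `β` in the strip `D = ℝ × (-h, c)`, `C¹` up to the flat
bed `{z = -h}`, satisfying `w = 0` on the bed. If the pressure is hydrostatic
(`∂ₓP ≡ 0`, `∂_zP ≡ -ρg`), then `w ≡ 0` in `D` and `u(x,z) = βz + k` for some
constant `k`. -/
theorem hydrostatic_implies_shear
    (h c ρ g β : ℝ) (hh : 0 < h) (hc : -h < c) (hρ : 0 < ρ)
    (u w P : ℝ × ℝ → ℝ)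
    (hu_C1 : ContDiffOn ℝ 1 u {q : ℝ × ℝ | -h ≤ q.2 ∧ q.2 < c})
    (hw_C1 : ContDiffOn ℝ 1 w {q : ℝ × ℝ | -h ≤ q.2 ∧ q.2 < c})
    (hu_C2 : ContDiffOn ℝ 2 u {q : ℝ × ℝ | -h < q.2 ∧ q.2 < c})
    (hw_C2 : ContDiffOn ℝ 2 w {q : ℝ × ℝ | -h < q.2 ∧ q.2 < c})
    (hP_C1 : ContDiffOn ℝ 1 P {q : ℝ × ℝ | -h < q.2 ∧ q.2 < c})
    (hincomp : ∀ q ∈ {q : ℝ × ℝ | -h < q.2 ∧ q.2 < c}, pdx2 u q + pdy2 w q = 0)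
    (hvort : ∀ q ∈ {q : ℝ × ℝ | -h < q.2 ∧ q.2 < c}, pdy2 u q - pdx2 w q = β)
    (hmomx : ∀ q ∈ {q : ℝ × ℝ | -h < q.2 ∧ q.2 < c},
      ρ * (u q * pdx2 u q + w q * pdy2 u q) = -(pdx2 P q))
    (hmomz : ∀ q ∈ {q : ℝ × ℝ | -h < q.2 ∧ q.2 < c},
      ρ * (u q * pdx2 w q + w q * pdy2 w q) = -(pdy2 P q) - ρ * g)
    (hPx : ∀ q ∈ {q : ℝ × ℝ | -h < q.2 ∧ q.2 < c}, pdx2 P q = 0)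
    (hPz : ∀ q ∈ {q : ℝ × ℝ | -h < q.2 ∧ q.2 < c}, pdy2 P q = -(ρ * g))
    (hbed : ∀ x : ℝ, w (x, -h) = 0) :
    (∀ q ∈ {q : ℝ × ℝ | -h < q.2 ∧ q.2 < c}, w q = 0) ∧
    (∃ k : ℝ, ∀ q ∈ {q : ℝ × ℝ | -h < q.2 ∧ q.2 < c}, u q = β * q.2 + k) := by
  set D : Set (ℝ × ℝ) := {q : ℝ × ℝ | -h < q.2 ∧ q.2 < c} with hDdef
  have hDopen : IsOpen D := by
    have : D = Prod.snd ⁻¹' (Set.Ioo (-h) c) := rfl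
    rw [this]; exact isOpen_Ioo.preimage continuous_snd
  have hDconv : Convex ℝ D := by
    have : D = (LinearMap.snd ℝ ℝ ℝ) ⁻¹' (Set.Ioo (-h) c) := rfl
    rw [this]; exact (convex_Ioo (-h) c).linear_preimage _
  -- differentiability of u, w at points of D
  have hud : ∀ q ∈ D, DifferentiableAt ℝ u q := fun q hq =>
    ((hu_C2.differentiableOn (by norm_num)).differentiableAt (hDopen.mem_nhds hq))
  have hwd : ∀ q ∈ D, DifferentiableAt ℝ w q := fun q hq =>
    ((hw_C2.differentiableOn (by norm_num)).differentiableAt (hDopen.mem_nhds hq))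
  -- continuity of the partial derivatives on D
  have huxc : ContinuousOn (fun q => pdx2 u q) D :=
    (hu_C2.continuousOn_fderiv_of_isOpen hDopen (by norm_num)).clm_apply continuousOn_const
  have hwxc : ContinuousOn (fun q => pdx2 w q) D :=
    (hw_C2.continuousOn_fderiv_of_isOpen hDopen (by norm_num)).clm_apply continuousOn_const
  -- first-order pointwise identities
  have e1 : ∀ q ∈ D, u q * pdx2 u q + w q * pdx2 w q + β * w q = 0 := by
    intro q hq
    have hm := hmomx q hq
    rw [hPx q hq] at hm
    have hm' : u q * pdx2 u q + w q * pdy2 u q = 0 := by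
      have h0 : ρ * (u q * pdx2 u q + w q * pdy2 u q) = 0 := by linarith [hm]
      rcases mul_eq_zero.mp h0 with h' | h'
      · exact absurd h' hρ.ne'
      · exact h'
    have hv := hvort q hq
    linear_combination hm' - w q * hv
  have e2 : ∀ q ∈ D, u q * pdx2 w q - w q * pdx2 u q = 0 := by
    intro q hq
    have hm := hmomz q hq
    rw [hPz q hq] at hm
    have hm' : u q * pdx2 w q + w q * pdy2 w q = 0 := by
      have hne := hρ.ne'
      have : ρ * (u q * pdx2 w q + w q * pdy2 w q) = 0 := by linarith [hm]
      rcases mul_eq_zero.mp this with h' | h'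
      · exact absurd h' hne
      · exact h'
    have hi := hincomp q hq
    linear_combination hm' - w q * hi
  have eB : ∀ q ∈ D, (u q ^ 2 + w q ^ 2) * pdx2 w q + β * w q ^ 2 = 0 := by
    intro q hq
    linear_combination u q * (e2 q hq) + w q * (e1 q hq)
  have eA : ∀ q ∈ D, (u q ^ 2 + w q ^ 2) * pdx2 u q + β * u q * w q = 0 := by
    intro q hq
    linear_combination u q * (e1 q hq) - w q * (e2 q hq)
  -- key identity: ux^2 + wx^2 + β wx = 0 on D
  set φ : ℝ × ℝ → ℝ := fun q => (pdx2 u q) ^ 2 + (pdx2 w q) ^ 2 + β * pdx2 w q with hφdef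
  have φcont : ContinuousOn φ D := by
    exact ((huxc.pow 2).add (hwxc.pow 2)).add (continuousOn_const.mul hwxc)
  set T : Set (ℝ × ℝ) := {q ∈ D | u q ^ 2 + w q ^ 2 ≠ 0} with hTdef
  have φT : ∀ q ∈ T, φ q = 0 := by
    rintro q ⟨hq, hs⟩
    have hA := eA q hq
    have hB := eB q hq
    set s := u q ^ 2 + w q ^ 2 with hsdef
    have hs2 : s ^ 2 * φ q = 0 := by
      simp only [hφdef]
      linear_combination (s * pdx2 u q - β * u q * w q) * hA
        + (s * pdx2 w q - β * w q ^ 2 + β * s) * hB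
    rcases mul_eq_zero.mp hs2 with h' | h'
    · exact absurd h' (pow_ne_zero 2 hs)
    · exact h'
  have key : ∀ q ∈ D, φ q = 0 := by
    intro q hq
    by_cases hs : u q ^ 2 + w q ^ 2 ≠ 0
    · exact φT q ⟨hq, hs⟩
    push_neg at hs
    by_cases hcl : q ∈ closure T
    · have hne : (nhdsWithin q T).NeBot := mem_closure_iff_nhdsWithin_neBot.mp hcl
      have h1 : Filter.Tendsto φ (nhdsWithin q T) (nhds (φ q)) :=
        ((φcont.continuousAt (hDopen.mem_nhds hq)).tendsto).mono_left nhdsWithin_le_nhds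
      have h2 : Filter.Tendsto φ (nhdsWithin q T) (nhds 0) := by
        refine Filter.Tendsto.congr' ?_ tendsto_const_nhds
        exact (eventually_nhdsWithin_of_forall (fun x hx => (φT x hx).symm))
      exact tendsto_nhds_unique h1 h2
    · -- u and w vanish on a neighborhood of q
      rw [mem_closure_iff] at hcl
      push_neg at hcl
      obtain ⟨O, hOopen, hqO, hOT⟩ := hcl
      have hzero : ∀ x ∈ O ∩ D, u x = 0 ∧ w x = 0 := by
        intro x ⟨hxO, hxD⟩
        by_contra hcon
        have hsx : u x ^ 2 + w x ^ 2 ≠ 0 := by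
          intro h0
          have hu0 : u x = 0 := by nlinarith [sq_nonneg (u x), sq_nonneg (w x)]
          have hw0 : w x = 0 := by nlinarith [sq_nonneg (u x), sq_nonneg (w x)]
          exact hcon ⟨hu0, hw0⟩
        exact Set.eq_empty_iff_forall_notMem.mp hOT x ⟨hxO, hxD, hsx⟩
      have hmemnhds : O ∩ D ∈ nhds q := (hOopen.inter hDopen).mem_nhds ⟨hqO, hq⟩
      have hueq : u =ᶠ[nhds q] (fun _ => 0) :=
        Filter.eventually_of_mem hmemnhds (fun x hx => (hzero x hx).1)
      have hweq : w =ᶠ[nhds q] (fun _ => 0) :=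
        Filter.eventually_of_mem hmemnhds (fun x hx => (hzero x hx).2)
      have hux0 : pdx2 u q = 0 := by
        simp only [pdx2, hueq.fderiv_eq]; simp
      have hwx0 : pdx2 w q = 0 := by
        simp only [pdx2, hweq.fderiv_eq]; simp
      simp [hφdef, hux0, hwx0]
  -- complex-analytic part
  set Ω : Set ℂ := {ζ : ℂ | -h < ζ.im ∧ ζ.im < c} with hΩdef
  have hΩopen : IsOpen Ω := by
    have : Ω = Complex.im ⁻¹' (Set.Ioo (-h) c) := rfl
    rw [this]; exact isOpen_Ioo.preimage Complex.continuous_im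
  have hΩconv : Convex ℝ Ω := by
    have : Ω = Complex.imLm ⁻¹' (Set.Ioo (-h) c) := rfl
    rw [this]; exact (convex_Ioo (-h) c).linear_preimage _
  have hmemD : ∀ ζ : ℂ, ζ ∈ Ω → ((ζ.re, ζ.im) : ℝ × ℝ) ∈ D := fun ζ hζ => hζ
  set F : ℂ → ℂ := fun ζ => (u (ζ.re, ζ.im) : ℂ) - Complex.I * (w (ζ.re, ζ.im) : ℂ)
      - (Complex.I * (β : ℂ) / 2) * (starRingEnd ℂ ζ) with hFdef
  set κf : ℂ → ℂ := fun ζ => (pdx2 u (ζ.re, ζ.im) : ℂ)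
      - Complex.I * ((pdx2 w (ζ.re, ζ.im) : ℂ) + (β : ℂ) / 2) with hκfdef
  have hF : ∀ ζ ∈ Ω, HasDerivAt F (κf ζ) ζ := fun ζ hζ =>
    hasDerivAt_F u w β ζ (hud _ (hmemD ζ hζ)) (hwd _ (hmemD ζ hζ))
      (hincomp _ (hmemD ζ hζ)) (hvort _ (hmemD ζ hζ))
  have hFdiff : DifferentiableOn ℂ F Ω := fun ζ hζ =>
    (hF ζ hζ).differentiableAt.differentiableWithinAt
  have hFderiv : ∀ ζ ∈ Ω, deriv F ζ = κf ζ := fun ζ hζ => (hF ζ hζ).deriv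
  have hnormκ : ∀ ζ ∈ Ω, ‖κf ζ‖ = |β| / 2 := by
    intro ζ hζ
    have hk : (pdx2 u (ζ.re, ζ.im)) ^ 2 + (pdx2 w (ζ.re, ζ.im)) ^ 2
        + β * pdx2 w (ζ.re, ζ.im) = 0 := by
      simpa [hφdef] using key _ (hmemD ζ hζ)
    have hre : (κf ζ).re = pdx2 u (ζ.re, ζ.im) := by simp [hκfdef]
    have him : (κf ζ).im = -(pdx2 w (ζ.re, ζ.im) + β / 2) := by simp [hκfdef]
    have hsq : ‖κf ζ‖ ^ 2 = (|β| / 2) ^ 2 := by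
      rw [Complex.sq_norm, Complex.normSq_apply, hre, him]
      have habs : |β| ^ 2 = β ^ 2 := sq_abs β
      nlinarith [hk, habs]
    calc ‖κf ζ‖ = Real.sqrt (‖κf ζ‖ ^ 2) := (Real.sqrt_sq (norm_nonneg _)).symm
    _ = Real.sqrt ((|β| / 2) ^ 2) := by rw [hsq]
    _ = |β| / 2 := Real.sqrt_sq (by positivity)
  set ζ₀ : ℂ := ⟨0, (-h + c) / 2⟩ with hζ₀def
  have hζ₀ : ζ₀ ∈ Ω := by
    constructor
    · show -h < ((-h + c) / 2 : ℝ); linarith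
    · show ((-h + c) / 2 : ℝ) < c; linarith
  set κ : ℂ := deriv F ζ₀ with hκ0def
  have hmax : IsMaxOn (norm ∘ deriv F) Ω ζ₀ := by
    intro ζ hζ
    simp only [Function.comp_apply, Set.mem_setOf_eq]
    rw [hFderiv ζ hζ, hFderiv ζ₀ hζ₀, hnormκ ζ hζ, hnormκ ζ₀ hζ₀]
  have hDder : DifferentiableOn ℂ (deriv F) Ω :=
    ((hFdiff.analyticOnNhd hΩopen).deriv).differentiableOn
  have hconstEq := Complex.eqOn_of_isPreconnected_of_isMaxOn_norm
    hΩconv.isPreconnected hΩopen hDder hζ₀ hmax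
  have hall : ∀ q ∈ D, pdx2 u q = κ.re ∧ pdx2 w q = -κ.im - β / 2 := by
    intro q hq
    set ζ : ℂ := ⟨q.1, q.2⟩ with hζdef
    have hζΩ : ζ ∈ Ω := hq
    have heq : κf ζ = κ := by
      have := hconstEq hζΩ
      rwa [hFderiv ζ hζΩ] at this
    have hqζ : ((ζ.re, ζ.im) : ℝ × ℝ) = q := rfl
    have hre := congrArg Complex.re heq
    have him := congrArg Complex.im heq
    simp [hκfdef, hqζ] at hre him
    constructor
    · linarith [hre]
    · linarith [him]
  set a : ℝ := κ.re with hadef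
  set b : ℝ := -κ.im - β / 2 with hbdef
  have hux : ∀ q ∈ D, pdx2 u q = a := fun q hq => (hall q hq).1
  have hwx : ∀ q ∈ D, pdx2 w q = b := fun q hq => (hall q hq).2
  have hwy : ∀ q ∈ D, pdy2 w q = -a := by
    intro q hq; have h1 := hincomp q hq; have h2 := hux q hq; linarith
  -- w is affine on D
  set q₀ : ℝ × ℝ := (0, (-h + c) / 2) with hq₀def
  have hq₀ : q₀ ∈ D := by
    constructor
    · show -h < ((-h + c) / 2 : ℝ); linarith
    · show ((-h + c) / 2 : ℝ) < c; linarith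
  have hwaff : ∀ q ∈ D, w q - (b * q.1 + (-a) * q.2)
      = w q₀ - (b * q₀.1 + (-a) * q₀.2) :=
    fun q hq => affine_diff_const hDconv hwd b (-a) hwx hwy hq hq₀
  set κw : ℝ := w q₀ - (b * q₀.1 + (-a) * q₀.2) with hκwdef
  -- boundary limit at the bed
  have hbedlim : ∀ x : ℝ, -(b * x + (-a) * (-h)) = κw := by
    intro x
    set v : ℝ × ℝ → ℝ := fun q => w q - (b * q.1 + (-a) * q.2) with hvdef
    set qb : ℝ × ℝ := (x, -h) with hqbdef
    have hqbE : qb ∈ {q : ℝ × ℝ | -h ≤ q.2 ∧ q.2 < c} := ⟨le_refl _, by show -h < c; linarith⟩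
    have hvcont : ContinuousOn v {q : ℝ × ℝ | -h ≤ q.2 ∧ q.2 < c} :=
      (hw_C1.continuousOn).sub ((continuousOn_const.mul continuousOn_fst).add
        (continuousOn_const.mul continuousOn_snd))
    have hqbcl : qb ∈ closure D := by
      have htend : Filter.Tendsto (fun t : ℝ => ((x, t) : ℝ × ℝ)) (nhdsWithin (-h) (Set.Ioi (-h)))
          (nhds qb) := by
        apply Filter.Tendsto.mono_left _ nhdsWithin_le_nhds
        exact (Continuous.tendsto (continuous_const.prodMk continuous_id) (-h))
      refine mem_closure_of_tendsto htend ?_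
      filter_upwards [Ioo_mem_nhdsGT_of_mem ⟨le_refl (-h), hc⟩] with t ht
      exact ⟨ht.1, ht.2⟩
    have hDsub : D ⊆ {q : ℝ × ℝ | -h ≤ q.2 ∧ q.2 < c} := fun q hq => ⟨le_of_lt hq.1, hq.2⟩
    have hne : (nhdsWithin qb D).NeBot := mem_closure_iff_nhdsWithin_neBot.mp hqbcl
    have h1 : Filter.Tendsto v (nhdsWithin qb D) (nhds (v qb)) :=
      ((hvcont qb hqbE).mono hDsub).tendsto
    have h2 : Filter.Tendsto v (nhdsWithin qb D) (nhds κw) := by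
      refine Filter.Tendsto.congr' ?_ tendsto_const_nhds
      exact eventually_nhdsWithin_of_forall (fun q hq => (hwaff q hq).symm)
    have hvqb : v qb = κw := tendsto_nhds_unique h1 h2
    have : v qb = -(b * x + (-a) * (-h)) := by
      simp [hvdef, hqbdef, hbed x]
    linarith [hvqb, this]
  have hb0 : b = 0 := by
    have h0 := hbedlim 0
    have h1 := hbedlim 1
    linarith [h0, h1]
  -- w vanishes on D
  have hw0 : ∀ q ∈ D, w q = 0 := by
    intro q hq
    by_cases hβ : β = 0
    · -- then κ = 0, so a = 0 and w is constant 0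
      have hκ0 : κ = 0 := by
        have := hnormκ ζ₀ hζ₀
        rw [← hFderiv ζ₀ hζ₀, ← hκ0def] at this
        rw [hβ] at this
        simp at this
        exact norm_eq_zero.mp (by simp [this])
      have ha0 : a = 0 := by rw [hadef, hκ0]; simp
      have h3 := hwaff q hq
      have h4 := hbedlim 0
      rw [hb0, ha0] at h3 h4
      simp at h3 h4
      linarith [h3, h4]
    · -- β ≠ 0 : from (u²+w²)wₓ + βw² = 0 and wₓ = 0
      have hB := eB q hq
      rw [hwx q hq, hb0] at hB
      have : β * w q ^ 2 = 0 := by linarith [hB]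
      have : w q ^ 2 = 0 := by
        rcases mul_eq_zero.mp this with h' | h'
        · exact absurd h' hβ
        · exact h'
      exact pow_eq_zero_iff (by norm_num) |>.mp this
  refine ⟨hw0, ?_⟩
  -- now the u part
  have hwx0 : ∀ q ∈ D, pdx2 w q = 0 ∧ pdy2 w q = 0 := by
    intro q hq
    have hweq : w =ᶠ[nhds q] (fun _ => 0) :=
      Filter.eventually_of_mem (hDopen.mem_nhds hq) (fun x hx => hw0 x hx)
    constructor
    · simp only [pdx2, hweq.fderiv_eq]; simp
    · simp only [pdy2, hweq.fderiv_eq]; simp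
  have hux0 : ∀ q ∈ D, pdx2 u q = 0 := by
    intro q hq; have := hincomp q hq; have := (hwx0 q hq).2; linarith
  have huy0 : ∀ q ∈ D, pdy2 u q = β := by
    intro q hq; have := hvort q hq; have := (hwx0 q hq).1; linarith
  refine ⟨u q₀ - (0 * q₀.1 + β * q₀.2), ?_⟩
  intro q hq
  have := affine_diff_const hDconv hud 0 β hux0 huy0 hq hq₀
  linarith [this]
end
end

section
/- Let ζ ∈ C¹(ℝ²;ℝ) satisfy the inviscid Burgers equation ζ(x,y) ∂ₓζ(x,y) + ∂ᵧζ(x,y) = 0 at every point (x,y) ∈ ℝ². Then ζ is constant. Consequently, if β ≠ 0, V ≠ 0, k ∈ ℝ and η ∈ C¹(ℝ²;ℝ) satisfies (β η + k) ∂ₓη + V ∂ᵧη = 0 on all of ℝ², then η is constant. -/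
noncomputable section

open Set in
lemma burgers_line (ζ : ℝ × ℝ → ℝ) (hζ : ContDiff ℝ 1 ζ)
    (heq : ∀ q : ℝ × ℝ, ζ q * pdx2 ζ q + pdy2 ζ q = 0) (q : ℝ × ℝ) (t : ℝ) :
    ζ (q.1 + ζ q * t, q.2 + t) = ζ q := by
  set c : ℝ := ζ q with hc
  set p : ℝ → ℝ × ℝ := fun s => (q.1 + c * s, q.2 + s) with hp
  set h : ℝ → ℝ := fun s => ζ (p s) with hh
  set a : ℝ → ℝ := fun s => pdx2 ζ (p s) with ha
  have hdiff : Differentiable ℝ ζ := hζ.differentiable one_ne_zero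
  -- derivative of h
  have hp' : ∀ s : ℝ, HasDerivAt p (c, 1) s := by
    intro s
    have h1 : HasDerivAt (fun s : ℝ => q.1 + c * s) c s := by
      simpa using ((hasDerivAt_id s).const_mul c).const_add q.1
    have h2 : HasDerivAt (fun s : ℝ => q.2 + s) 1 s := by
      simpa using (hasDerivAt_id s).const_add q.2
    exact h1.prodMk h2
  have hh' : ∀ s : ℝ, HasDerivAt h (a s * (c - h s)) s := by
    intro s
    have := (hdiff (p s)).hasFDerivAt.comp_hasDerivAt s (hp' s)
    have key : fderiv ℝ ζ (p s) (c, 1) = a s * (c - h s) := by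
      have hsplit : ((c, 1) : ℝ × ℝ) = c • ((1:ℝ), (0:ℝ)) + ((0:ℝ), (1:ℝ)) := by
        simp [Prod.ext_iff]
      rw [hsplit, map_add, map_smul]
      have := heq (p s)
      simp only [pdx2, pdy2] at this ⊢
      have hy : fderiv ℝ ζ (p s) (0, 1) = -(ζ (p s) * fderiv ℝ ζ (p s) (1, 0)) := by
        linarith
      rw [hy]
      simp only [smul_eq_mul, ha, pdx2, hh]
      ring
    rwa [key] at this
  -- continuity of a
  have hacont : Continuous a := by
    have : Continuous p := by fun_prop
    exact ((hζ.continuous_fderiv one_ne_zero).clm_apply continuous_const).comp this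
  -- bound on a compact interval
  set b : ℝ := |t| + 1 with hb
  have hb0 : (0:ℝ) < b := by positivity
  obtain ⟨C, hC0, hC⟩ : ∃ C, 0 ≤ C ∧ ∀ s ∈ Icc (-b) b, |a s| ≤ C := by
    obtain ⟨C, hC⟩ :=
      (isCompact_Icc (a := -b) (b := b)).exists_bound_of_continuousOn hacont.continuousOn
    exact ⟨max C 0, le_max_right _ _, fun s hs => le_trans (hC s hs) (le_max_left _ _)⟩
  -- clamped vector field
  set φ : ℝ → ℝ := fun s => max (-b) (min b s) with hφ
  have hφmem : ∀ s, φ s ∈ Icc (-b) b := by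
    intro s
    constructor
    · exact le_max_left _ _
    · exact max_le (by linarith) (min_le_left _ _)
  have hφeq : ∀ s ∈ Icc (-b) b, φ s = s := by
    intro s hs
    simp only [hφ]
    rw [min_eq_right hs.2, max_eq_right hs.1]
  set v : ℝ → ℝ → ℝ := fun s y => a (φ s) * (c - y) with hv
  have hlip : ∀ s : ℝ, LipschitzOnWith C.toNNReal (v s) univ := by
    intro s
    apply LipschitzOnWith.of_dist_le_mul
    intro y _ z _
    simp only [hv, Real.dist_eq]
    have : a (φ s) * (c - y) - a (φ s) * (c - z) = a (φ s) * (z - y) := by ring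
    rw [this, abs_mul]
    have h1 : |a (φ s)| ≤ C := hC _ (hφmem s)
    have h2 : |z - y| = |y - z| := abs_sub_comm _ _
    rw [h2]
    have := abs_nonneg (y - z)
    calc |a (φ s)| * |y - z| ≤ C * |y - z| := by
          exact mul_le_mul_of_nonneg_right h1 this
      _ = (C.toNNReal : ℝ) * |y - z| := by rw [Real.coe_toNNReal C hC0]
  have ht0 : (0:ℝ) ∈ Ioo (-b) b := by constructor <;> simp [hb0]
  have hmem : t ∈ Icc (-b) b := by
    constructor
    · have := neg_abs_le t; simp [hb]; linarith
    · have := le_abs_self t; simp [hb]; linarith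
  have hEq : EqOn h (fun _ => c) (Icc (-b) b) := by
    apply ODE_solution_unique_of_mem_Icc (s := fun _ => (univ : Set ℝ)) (fun s _ => hlip s) ht0
    · exact fun s _ => (hh' s).continuousAt.continuousWithinAt
    · intro s hs
      have := hh' s
      rwa [show a s = a (φ s) by rw [hφeq s (Ioo_subset_Icc_self hs)]] at this
    · exact fun _ _ => mem_univ _
    · exact continuousOn_const
    · intro s hs
      have : v s c = 0 := by simp [hv]
      rw [this]
      exact hasDerivAt_const s c
    · exact fun _ _ => mem_univ _
    · simp [hh, hp, hc]
  have := hEq hmem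
  simpa [hh, hp] using this

lemma burgers_const (ζ : ℝ × ℝ → ℝ) (hζ : ContDiff ℝ 1 ζ)
    (heq : ∀ q : ℝ × ℝ, ζ q * pdx2 ζ q + pdy2 ζ q = 0) (q q' : ℝ × ℝ) : ζ q = ζ q' := by
  by_contra hne
  set c : ℝ := ζ q
  set c' : ℝ := ζ q'
  have hcc : c - c' ≠ 0 := sub_ne_zero.mpr hne
  set t : ℝ := (q'.1 - q.1 + c' * (q.2 - q'.2)) / (c - c')
  set t' : ℝ := q.2 - q'.2 + t
  have h1 := burgers_line ζ hζ heq q t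
  have h2 := burgers_line ζ hζ heq q' t'
  have hpt : (q.1 + c * t, q.2 + t) = (q'.1 + c' * t', q'.2 + t') := by
    have ht : t * (c - c') = q'.1 - q.1 + c' * (q.2 - q'.2) := by
      exact div_mul_cancel₀ _ hcc
    refine Prod.ext ?_ ?_
    · show q.1 + c * t = q'.1 + c' * t'
      simp only [t']
      nlinarith [ht]
    · show q.2 + t = q'.2 + t'
      simp [t']; ring
  rw [hpt, h2] at h1
  exact hne h1.symm

/-- **Global classical solutions of Burgers' equation are constant.** If
`ζ ∈ C¹(ℝ²)` satisfies `ζ ζ_x + ζ_y = 0` everywhere, then `ζ` is constant.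
Consequently, if `β ≠ 0`, `V ≠ 0` and `η ∈ C¹(ℝ²)` satisfies
`(β η + k) η_x + V η_y = 0` on all of `ℝ²`, then `η` is constant. -/
theorem burgers_global_constant :
    (∀ ζ : ℝ × ℝ → ℝ, ContDiff ℝ 1 ζ →
      (∀ q : ℝ × ℝ, ζ q * pdx2 ζ q + pdy2 ζ q = 0) →
      ∀ q q' : ℝ × ℝ, ζ q = ζ q') ∧
    (∀ β V k : ℝ, β ≠ 0 → V ≠ 0 → ∀ η : ℝ × ℝ → ℝ, ContDiff ℝ 1 η →
      (∀ q : ℝ × ℝ, (β * η q + k) * pdx2 η q + V * pdy2 η q = 0) →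
      ∀ q q' : ℝ × ℝ, η q = η q') := by
  constructor
  · exact fun ζ hζ heq q q' => burgers_const ζ hζ heq q q'
  · intro β V k hβ hV η hη heq q q'
    set L : (ℝ × ℝ) →L[ℝ] (ℝ × ℝ) :=
      (ContinuousLinearMap.fst ℝ ℝ ℝ).prod (V • ContinuousLinearMap.snd ℝ ℝ ℝ) with hL
    have hLapp : ∀ p : ℝ × ℝ, L p = (p.1, V * p.2) := by
      intro p; simp [hL, ContinuousLinearMap.prod_apply, smul_eq_mul]
    set ζ : ℝ × ℝ → ℝ := fun p => β * η (L p) + k with hzdef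
    have hηd : Differentiable ℝ η := hη.differentiable one_ne_zero
    have hζC : ContDiff ℝ 1 ζ := by
      apply ContDiff.add _ contDiff_const
      exact contDiff_const.mul (hη.comp L.contDiff)
    have hfd : ∀ p : ℝ × ℝ, fderiv ℝ ζ p = β • ((fderiv ℝ η (L p)).comp L) := by
      intro p
      have h1 : HasFDerivAt (fun p => η (L p)) ((fderiv ℝ η (L p)).comp L) p :=
        (hηd (L p)).hasFDerivAt.comp p L.hasFDerivAt
      have h2 : HasFDerivAt ζ (β • ((fderiv ℝ η (L p)).comp L)) p := by
        simpa [hzdef] using (h1.const_mul β).add_const k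
      exact h2.fderiv
    have hpx : ∀ p : ℝ × ℝ, pdx2 ζ p = β * pdx2 η (L p) := by
      intro p
      simp only [pdx2, hfd p, ContinuousLinearMap.smul_apply, ContinuousLinearMap.comp_apply,
        smul_eq_mul]
      rw [show L ((1:ℝ), (0:ℝ)) = ((1:ℝ), (0:ℝ)) by simp [hLapp]]
    have hpy : ∀ p : ℝ × ℝ, pdy2 ζ p = β * (V * pdy2 η (L p)) := by
      intro p
      simp only [pdy2, hfd p, ContinuousLinearMap.smul_apply, ContinuousLinearMap.comp_apply,
        smul_eq_mul]
      rw [show L ((0:ℝ), (1:ℝ)) = V • ((0:ℝ), (1:ℝ)) by simp [hLapp, Prod.ext_iff],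
        map_smul, smul_eq_mul]
    have hζeq : ∀ p : ℝ × ℝ, ζ p * pdx2 ζ p + pdy2 ζ p = 0 := by
      intro p
      rw [hpx p, hpy p]
      have h0 := heq (L p)
      have hzp : ζ p = β * η (L p) + k := rfl
      rw [hzp]
      linear_combination β * h0
    have key := burgers_const ζ hζC hζeq (q.1, q.2 / V) (q'.1, q'.2 / V)
    have e1 : L (q.1, q.2 / V) = q := by
      rw [hLapp]; simp [mul_div_cancel₀ _ hV]
    have e2 : L (q'.1, q'.2 / V) = q' := by
      rw [hLapp]; simp [mul_div_cancel₀ _ hV]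
    simp only [hzdef, e1, e2] at key
    have : β * η q = β * η q' := by linarith
    exact mul_left_cancel₀ hβ this
end
end

section
/- Let β ≠ 0, k ∈ ℝ, and let η ∈ C¹(ℝ²;ℝ) satisfy (β η(x,y) + k) ∂ₓη(x,y) = 0 for all (x,y) ∈ ℝ². Then ∂ₓη ≡ 0; that is, for each fixed y the function x ↦ η(x,y) is constant. -/
noncomputable section

/-- If `β ≠ 0` and `η ∈ C¹(ℝ²)` satisfies `(β η + k) ∂ₓη = 0` everywhere, then
`∂ₓη ≡ 0`; that is, for each fixed `y` the function `x ↦ η(x,y)` is constant. -/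
theorem degenerate_transport_x_constant
    (β k : ℝ) (hβ : β ≠ 0)
    (η : ℝ × ℝ → ℝ) (hη : ContDiff ℝ 1 η)
    (heq : ∀ q : ℝ × ℝ, (β * η q + k) * pdx2 η q = 0) :
    (∀ q : ℝ × ℝ, pdx2 η q = 0) ∧ (∀ x₁ x₂ y : ℝ, η (x₁, y) = η (x₂, y)) := by
  have hderiv : ∀ x y : ℝ, HasDerivAt (fun x => η (x, y)) (pdx2 η (x, y)) x := by
    intro x y
    have hline : HasDerivAt (fun x : ℝ => (x, y)) ((1 : ℝ), (0 : ℝ)) x :=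
      (hasDerivAt_id x).prodMk (hasDerivAt_const x y)
    exact ((hη.differentiable one_ne_zero (x, y)).hasFDerivAt.comp_hasDerivAt x hline)
  have hcont : Continuous (fun q : ℝ × ℝ => pdx2 η q) := by
    have := hη.continuous_fderiv one_ne_zero
    exact this.clm_apply continuous_const
  have hzero : ∀ q : ℝ × ℝ, pdx2 η q = 0 := by
    intro q
    by_contra hne
    obtain ⟨x₀, y⟩ := q
    -- near (x₀, y), along the x-direction, pdx2 stays nonzero
    have hcx : Continuous (fun x : ℝ => pdx2 η (x, y)) :=
      hcont.comp (continuous_id.prodMk continuous_const)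
    have hnhds : ∀ᶠ x in nhds x₀, pdx2 η (x, y) ≠ 0 :=
      hcx.continuousAt.eventually_ne hne
    have hconst : ∀ᶠ x in nhds x₀, η (x, y) = -k / β := by
      filter_upwards [hnhds] with x hx
      have h := heq (x, y)
      have := (mul_eq_zero.mp h).resolve_right hx
      field_simp
      linarith
    have hd0 : HasDerivAt (fun x => η (x, y)) 0 x₀ := by
      have := (hasDerivAt_const x₀ (-k / β)).congr_of_eventuallyEq hconst
      exact this
    have := (hderiv x₀ y).unique hd0
    exact hne this
  refine ⟨hzero, fun x₁ x₂ y => ?_⟩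
  have hdiff : Differentiable ℝ (fun x => η (x, y)) := fun x => (hderiv x y).differentiableAt
  have hd0 : ∀ x, deriv (fun x => η (x, y)) x = 0 := by
    intro x
    have := hderiv x y
    rw [hzero (x, y)] at this
    exact this.deriv
  exact is_const_of_deriv_eq_zero hdiff hd0 x₁ x₂
end
end
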